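/- arXiv:2201.03475 — 12 statements merged into one kernel-verified Lean document; each statement's English description precedes it below -/
import Mathlib

section
/- The family {u_i ⊗ g_W^{n−i}(w_j) : 1 ≤ i ≤ m, 1 ≤ j ≤ n} is an F-basis of U ⊗_F W. Moreover, writing v_{i,j} = u_i ⊗ g_W^{n−i}(w_j) and interpreting v_{k,ℓ} = 0 when k < 1 or ℓ < 1, one has (g − id)(v_{i,j}) = v_{i−1,j} + v_{i,j−1} for all 1 ≤ i ≤ m and 1 ≤ j ≤ n. -/
open TensorProduct

/-- The family {u_i ⊗ g_W^{n−i}(w_j)} is an F-basis of U ⊗ W, and with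
v_{i,j} = u_i ⊗ g_W^{n−i}(w_j) (zero out of range), (g − id)(v_{i,j}) = v_{i−1,j} + v_{i,j−1}. -/
theorem stmt_3 (F : Type*) [Field F] (m n : ℕ) (hm : 0 < m) (hmn : m ≤ n)
    (U W : Type*) [AddCommGroup U] [Module F U] [AddCommGroup W] [Module F W]
    (bU : Module.Basis (Fin m) F U) (bW : Module.Basis (Fin n) F W)
    (gU : U →ₗ[F] U) (gW : W →ₗ[F] W)
    (hgU0 : ∀ i : Fin m, (i : ℕ) = 0 → gU (bU i) = bU i)
    (hgU1 : ∀ i : Fin m, 1 ≤ (i : ℕ) →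
      gU (bU i) = bU ⟨(i : ℕ) - 1, lt_of_le_of_lt (Nat.sub_le _ 1) i.isLt⟩ + bU i)
    (hgW0 : ∀ j : Fin n, (j : ℕ) = 0 → gW (bW j) = bW j)
    (hgW1 : ∀ j : Fin n, 1 ≤ (j : ℕ) →
      gW (bW j) = bW ⟨(j : ℕ) - 1, lt_of_le_of_lt (Nat.sub_le _ 1) j.isLt⟩ + bW j)
    (hgU_bij : Function.Bijective gU) (hgW_bij : Function.Bijective gW)
    (g : U ⊗[F] W →ₗ[F] U ⊗[F] W) (hg : g = TensorProduct.map gU gW)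
    (vv : ℤ → ℤ → U ⊗[F] W)
    (hvv : ∀ (i j : ℤ) (h1 : 1 ≤ i) (h2 : i ≤ (m : ℤ)) (h3 : 1 ≤ j) (h4 : j ≤ (n : ℤ)),
      vv i j = bU ⟨(i - 1).toNat, by omega⟩ ⊗ₜ[F]
        ((gW ^ ((n : ℤ) - i).toNat) (bW ⟨(j - 1).toNat, by omega⟩)))
    (hvv0 : ∀ i j : ℤ, (i < 1 ∨ (m : ℤ) < i ∨ j < 1 ∨ (n : ℤ) < j) → vv i j = 0) :
    (LinearIndependent F
        (fun p : Fin m × Fin n => vv (((p.1 : ℕ) + 1 : ℕ) : ℤ) (((p.2 : ℕ) + 1 : ℕ) : ℤ)) ∧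
      Submodule.span F
        (Set.range (fun p : Fin m × Fin n =>
          vv (((p.1 : ℕ) + 1 : ℕ) : ℤ) (((p.2 : ℕ) + 1 : ℕ) : ℤ))) = ⊤) ∧
      (∀ i j : ℤ, 1 ≤ i → i ≤ (m : ℤ) → 1 ≤ j → j ≤ (n : ℤ) →
        (g - (LinearMap.id : U ⊗[F] W →ₗ[F] U ⊗[F] W)) (vv i j) = vv (i - 1) j + vv i (j - 1)) := by
  subst hg
  have hcast : ∀ (a c : ℕ) (ha : a < m) (hc : c < n),
      vv ((a : ℤ) + 1) ((c : ℤ) + 1)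
        = bU ⟨a, ha⟩ ⊗ₜ[F] ((gW ^ (n - 1 - a)) (bW ⟨c, hc⟩)) := by
    intro a c ha hc
    rw [hvv _ _ (by omega) (by omega) (by omega) (by omega)]
    have e1 : ((a : ℤ) + 1 - 1).toNat = a := by omega
    have e2 : ((c : ℤ) + 1 - 1).toNat = c := by omega
    have e3 : ((n : ℤ) - ((a : ℤ) + 1)).toNat = n - 1 - a := by omega
    simp only [e1, e2, e3]
  constructor
  · -- basis part
    set e : W ≃ₗ[F] W := LinearEquiv.ofBijective gW hgW_bij with he
    have hecoe : ∀ (k : ℕ) (w : W), (e ^ k) w = (gW ^ k) w := by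
      intro k w
      rw [LinearEquiv.pow_apply, Module.End.pow_apply]
      rfl
    set b := Module.Basis.tensorProduct bU bW with hb
    set kk : Fin m → ℕ := fun i => n - 1 - (i : ℕ) with hkk
    set f : Fin m × Fin n → U ⊗[F] W :=
      fun p => bU p.1 ⊗ₜ[F] ((gW ^ kk p.1) (bW p.2)) with hf
    set T : U ⊗[F] W →ₗ[F] U ⊗[F] W := b.constr F f with hT
    set S : U ⊗[F] W →ₗ[F] U ⊗[F] W :=
      b.constr F (fun p => bU p.1 ⊗ₜ[F] ((e ^ kk p.1).symm (bW p.2))) with hS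
    have hTw : ∀ (i : Fin m) (w : W), T (bU i ⊗ₜ[F] w) = bU i ⊗ₜ[F] (gW ^ kk i) w := by
      intro i
      have h : T ∘ₗ TensorProduct.mk F U W (bU i)
          = (TensorProduct.mk F U W (bU i)) ∘ₗ (gW ^ kk i) := by
        apply bW.ext
        intro j
        simp only [LinearMap.comp_apply, TensorProduct.mk_apply]
        rw [← Module.Basis.tensorProduct_apply, ← hb, hT, b.constr_basis]
      intro w
      exact LinearMap.congr_fun h w
    have hSw : ∀ (i : Fin m) (w : W), S (bU i ⊗ₜ[F] w) = bU i ⊗ₜ[F] (e ^ kk i).symm w := by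
      intro i
      have h : S ∘ₗ TensorProduct.mk F U W (bU i)
          = (TensorProduct.mk F U W (bU i)) ∘ₗ ((e ^ kk i).symm : W →ₗ[F] W) := by
        apply bW.ext
        intro j
        simp only [LinearMap.comp_apply, TensorProduct.mk_apply, LinearEquiv.coe_coe]
        rw [← Module.Basis.tensorProduct_apply, ← hb, hS, b.constr_basis]
      intro w
      exact LinearMap.congr_fun h w
    have hTS : T ∘ₗ S = LinearMap.id := by
      apply b.ext
      intro p
      simp only [LinearMap.comp_apply, LinearMap.id_apply]
      rw [hb, Module.Basis.tensorProduct_apply', hSw, hTw, ← hecoe, LinearEquiv.apply_symm_apply]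
    have hST : S ∘ₗ T = LinearMap.id := by
      apply b.ext
      intro p
      simp only [LinearMap.comp_apply, LinearMap.id_apply]
      rw [hb, Module.Basis.tensorProduct_apply', hTw, hSw, ← hecoe, LinearEquiv.symm_apply_apply]
    set E : U ⊗[F] W ≃ₗ[F] U ⊗[F] W := LinearEquiv.ofLinear T S hTS hST with hE
    have hbE : ⇑(b.map E) = f := by
      funext p
      rw [Module.Basis.map_apply, hE, LinearEquiv.ofLinear_apply, hT, b.constr_basis]
    have heq : (fun p : Fin m × Fin n =>
        vv (((p.1 : ℕ) + 1 : ℕ) : ℤ) (((p.2 : ℕ) + 1 : ℕ) : ℤ)) = f := by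
      funext p
      push_cast
      rw [hcast (p.1 : ℕ) (p.2 : ℕ) p.1.isLt p.2.isLt]
    rw [heq, ← hbE]
    exact ⟨(b.map E).linearIndependent, (b.map E).span_eq⟩
  · -- recurrence part
    have hc2 : ∀ (i j : ℤ) (h1 : 1 ≤ i) (h2 : i ≤ (m : ℤ)) (h3 : 1 ≤ j) (h4 : j ≤ (n : ℤ))
        (a c K : ℕ) (haa : a = (i - 1).toNat) (hcc : c = (j - 1).toNat)
        (hK : K = ((n : ℤ) - i).toNat) (ha : a < m) (hc : c < n),
        vv i j = bU ⟨a, ha⟩ ⊗ₜ[F] ((gW ^ K) (bW ⟨c, hc⟩)) := by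
      intro i j h1 h2 h3 h4 a c K haa hcc hK ha hc
      subst haa; subst hcc; subst hK
      exact hvv i j h1 h2 h3 h4
    intro i j h1 h2 h3 h4
    obtain ⟨a, rfl⟩ : ∃ a : ℕ, i = (a : ℤ) + 1 := ⟨(i - 1).toNat, by omega⟩
    obtain ⟨c, rfl⟩ : ∃ c : ℕ, j = (c : ℤ) + 1 := ⟨(j - 1).toNat, by omega⟩
    have ha : a < m := by omega
    have hc : c < n := by omega
    have hpow : ∀ (k : ℕ) (w : W), (gW ^ (k + 1)) w = (gW ^ k) (gW w) := by
      intro k w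
      rw [pow_succ, Module.End.mul_apply]
    simp only [LinearMap.sub_apply, LinearMap.id_apply, add_sub_cancel_right]
    rw [hc2 ((a : ℤ) + 1) ((c : ℤ) + 1) (by omega) (by omega) (by omega) (by omega)
        a c (n - 1 - a) (by omega) (by omega) (by omega) ha hc,
      TensorProduct.map_tmul]
    have hgw : gW ((gW ^ (n - 1 - a)) (bW ⟨c, hc⟩)) = (gW ^ (n - 1 - a)) (gW (bW ⟨c, hc⟩)) := by
      rw [← Module.End.mul_apply, ← pow_succ', hpow]
    rw [hgw]
    rcases Nat.eq_zero_or_pos a with ha0 | ha1 <;> rcases Nat.eq_zero_or_pos c with hc0 | hc1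
    · -- a = 0, c = 0
      subst ha0; subst hc0
      have z1 : vv ((0 : ℕ) : ℤ) (((0 : ℕ) : ℤ) + 1) = 0 := hvv0 _ _ (Or.inl (by norm_num))
      have z2 : vv (((0 : ℕ) : ℤ) + 1) ((0 : ℕ) : ℤ) = 0 :=
        hvv0 _ _ (Or.inr (Or.inr (Or.inl (by norm_num))))
      rw [hgU0 ⟨0, ha⟩ rfl, hgW0 ⟨0, hc⟩ rfl, sub_self, z1, z2, add_zero]
    · -- a = 0, c ≥ 1
      subst ha0
      have hW : gW (bW ⟨c, hc⟩) = bW ⟨c - 1, by omega⟩ + bW ⟨c, hc⟩ := hgW1 ⟨c, hc⟩ hc1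
      have z1 : vv ((0 : ℕ) : ℤ) ((c : ℤ) + 1) = 0 := hvv0 _ _ (Or.inl (by norm_num))
      have r2 : vv (((0 : ℕ) : ℤ) + 1) ((c : ℕ) : ℤ)
          = bU ⟨0, ha⟩ ⊗ₜ[F] ((gW ^ (n - 1 - 0)) (bW ⟨c - 1, by omega⟩)) :=
        hc2 _ _ (by omega) (by omega) (by omega) (by omega) 0 (c - 1) (n - 1 - 0)
          (by omega) (by omega) (by omega) ha (by omega)
      rw [hgU0 ⟨0, ha⟩ rfl, hW, map_add, TensorProduct.tmul_add, z1, r2, zero_add]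
      abel
    · -- a ≥ 1, c = 0
      subst hc0
      have hU : gU (bU ⟨a, ha⟩) = bU ⟨a - 1, by omega⟩ + bU ⟨a, ha⟩ := hgU1 ⟨a, ha⟩ ha1
      have z2 : vv ((a : ℤ) + 1) ((0 : ℕ) : ℤ) = 0 :=
        hvv0 _ _ (Or.inr (Or.inr (Or.inl (by norm_num))))
      have r1 : vv ((a : ℕ) : ℤ) (((0 : ℕ) : ℤ) + 1)
          = bU ⟨a - 1, by omega⟩ ⊗ₜ[F] ((gW ^ (n - a)) (bW ⟨0, hc⟩)) :=
        hc2 _ _ (by omega) (by omega) (by omega) (by omega) (a - 1) 0 (n - a)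
          (by omega) (by omega) (by omega) (by omega) hc
      have hsp : (gW ^ (n - a)) (bW ⟨0, hc⟩) = (gW ^ (n - 1 - a)) (bW ⟨0, hc⟩) := by
        rw [show n - a = (n - 1 - a) + 1 from by omega, hpow, hgW0 ⟨0, hc⟩ rfl]
      rw [hU, hgW0 ⟨0, hc⟩ rfl, TensorProduct.add_tmul, z2, r1, hsp, add_zero]
      abel
    · -- a ≥ 1, c ≥ 1
      have hU : gU (bU ⟨a, ha⟩) = bU ⟨a - 1, by omega⟩ + bU ⟨a, ha⟩ := hgU1 ⟨a, ha⟩ ha1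
      have hW : gW (bW ⟨c, hc⟩) = bW ⟨c - 1, by omega⟩ + bW ⟨c, hc⟩ := hgW1 ⟨c, hc⟩ hc1
      have r1 : vv ((a : ℕ) : ℤ) ((c : ℤ) + 1)
          = bU ⟨a - 1, by omega⟩ ⊗ₜ[F] ((gW ^ (n - a)) (bW ⟨c, hc⟩)) :=
        hc2 _ _ (by omega) (by omega) (by omega) (by omega) (a - 1) c (n - a)
          (by omega) (by omega) (by omega) (by omega) hc
      have r2 : vv ((a : ℤ) + 1) ((c : ℕ) : ℤ)
          = bU ⟨a, ha⟩ ⊗ₜ[F] ((gW ^ (n - 1 - a)) (bW ⟨c - 1, by omega⟩)) :=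
        hc2 _ _ (by omega) (by omega) (by omega) (by omega) a (c - 1) (n - 1 - a)
          (by omega) (by omega) (by omega) ha (by omega)
      have hsp : (gW ^ (n - a)) (bW ⟨c, hc⟩)
          = (gW ^ (n - 1 - a)) (bW ⟨c - 1, by omega⟩) + (gW ^ (n - 1 - a)) (bW ⟨c, hc⟩) := by
        rw [show n - a = (n - 1 - a) + 1 from by omega, hpow, hW, map_add]
      rw [hU, hW, map_add, TensorProduct.add_tmul, TensorProduct.tmul_add,
        TensorProduct.tmul_add, r1, r2, hsp, TensorProduct.tmul_add]
      abel
end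

section
/- The set {x_1, x_2, …, x_m} is linearly independent over F, and N(x_i) = 0 for every i ∈ {1,…,m}. -/
/-- The set `{x_1, …, x_m}` is linearly independent over `F`, and
`N(x_i) = 0` for every `i ∈ {1,…,m}`. -/
theorem stmt_5 (F : Type*) [Field F] (m n : ℕ) (hm : 0 < m) (hmn : m ≤ n)
    (V : Type*) [AddCommGroup V] [Module F V]
    (v : ℤ → ℤ → V)
    (hv_indep : LinearIndependent F
      (fun p : Fin m × Fin n => v (((p.1 : ℕ) + 1 : ℕ) : ℤ) (((p.2 : ℕ) + 1 : ℕ) : ℤ)))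
    (hv_span : Submodule.span F
      (Set.range (fun p : Fin m × Fin n =>
        v (((p.1 : ℕ) + 1 : ℕ) : ℤ) (((p.2 : ℕ) + 1 : ℕ) : ℤ))) = ⊤)
    (hv0 : ∀ i j : ℤ, (i < 1 ∨ (m : ℤ) < i ∨ j < 1 ∨ (n : ℤ) < j) → v i j = 0)
    (N : V →ₗ[F] V)
    (hN : ∀ i j : ℤ, 1 ≤ i → i ≤ (m : ℤ) → 1 ≤ j → j ≤ (n : ℤ) →
      N (v i j) = v (i - 1) j + v i (j - 1))
    (x : ℤ → V)
    (hx : ∀ i : ℤ, x i =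
      ∑ j ∈ Finset.Icc (1 : ℤ) i, ((-1 : F) ^ (j - 1).toNat) • v j (i + 1 - j)) :
    LinearIndependent F (fun i : Fin m => x (((i : ℕ) + 1 : ℕ) : ℤ)) ∧
      ∀ i : ℤ, 1 ≤ i → i ≤ (m : ℤ) → N (x i) = 0 := by
  have hb : ⊤ ≤ Submodule.span F (Set.range
      (fun p : Fin m × Fin n => v (((p.1 : ℕ) + 1 : ℕ) : ℤ) (((p.2 : ℕ) + 1 : ℕ) : ℤ))) :=
    hv_span.ge
  set b : Module.Basis (Fin m × Fin n) F V := Module.Basis.mk hv_indep hb with hbdef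
  have hbv : ∀ k l : ℤ, 1 ≤ k → k ≤ (m:ℤ) → 1 ≤ l → l ≤ (n:ℤ) →
      ∀ (hk : (k-1).toNat < m) (hl : (l-1).toNat < n),
      v k l = b (⟨(k-1).toNat, hk⟩, ⟨(l-1).toNat, hl⟩) := by
    intro k l hk1 hkm hl1 hln hk hl
    rw [hbdef, Module.Basis.mk_apply]
    dsimp only
    congr 1 <;> omega
  constructor
  · rw [Fintype.linearIndependent_iff]
    intro g hg i
    have him : (i:ℕ) < n := lt_of_lt_of_le i.2 hmn
    have key : ∀ j : Fin m, b.coord (⟨0, hm⟩, ⟨i, him⟩) (x (((j:ℕ)+1 : ℕ) : ℤ))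
        = if j = i then 1 else 0 := by
      intro j
      rw [hx, map_sum]
      rw [Finset.sum_eq_single_of_mem 1 (by rw [Finset.mem_Icc]; omega)]
      · have h1 : (((j:ℕ)+1 : ℕ) : ℤ) + 1 - 1 = (((j:ℕ)+1 : ℕ) : ℤ) := by ring
        rw [h1]
        have hk : ((1:ℤ)-1).toNat < m := by omega
        have hl : ((((j:ℕ)+1 : ℕ) : ℤ)-1).toNat < n := by
          have := j.2; omega
        rw [hbv 1 (((j:ℕ)+1 : ℕ) : ℤ) (by omega) (by omega) (by omega)
          (by have := j.2; omega) hk hl]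
        rw [map_smul, Module.Basis.coord_apply, Module.Basis.repr_self]
        rw [Finsupp.single_apply]
        have : ((⟨((1:ℤ)-1).toNat, hk⟩, ⟨((((j:ℕ)+1 : ℕ) : ℤ)-1).toNat, hl⟩)
            = ((⟨0, hm⟩, ⟨i, him⟩) : Fin m × Fin n)) ↔ j = i := by
          simp only [Prod.ext_iff, Fin.ext_iff, Fin.val_mk]
          omega
        rw [if_congr this rfl rfl]
        simp
      · intro k hk hk1
        rw [Finset.mem_Icc] at hk
        have hkm : ((k-1).toNat) < m := by have := j.2; omega
        have hlm : (((((j:ℕ)+1 : ℕ) : ℤ) + 1 - k - 1).toNat) < n := by have := j.2; omega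
        rw [hbv k ((((j:ℕ)+1 : ℕ) : ℤ) + 1 - k) (by omega) (by have := j.2; omega)
          (by omega) (by have := j.2; omega) hkm hlm]
        rw [map_smul, Module.Basis.coord_apply, Module.Basis.repr_self, Finsupp.single_apply]
        rw [if_neg, smul_zero]
        simp only [Prod.ext_iff, Fin.ext_iff]
        push_neg
        intro h
        exfalso; omega
    have := congrArg (b.coord (⟨0, hm⟩, ⟨i, him⟩)) hg
    simp only [map_sum, map_smul, map_zero, key, smul_ite, smul_zero,
      smul_eq_mul, mul_ite, mul_one, mul_zero] at this
    simpa using this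
  · intro i hi1 him
    rw [hx, map_sum]
    have step : ∀ j ∈ Finset.Icc (1:ℤ) i, N (((-1:F) ^ (j-1).toNat) • v j (i+1-j))
        = ((-1:F) ^ (j-1).toNat) • v (j-1) (i+1-j)
          + ((-1:F) ^ (j-1).toNat) • v j (i-j) := by
      intro j hj
      rw [Finset.mem_Icc] at hj
      rw [map_smul, hN j (i+1-j) (by omega) (by omega) (by omega) (by omega), smul_add]
      congr 2
      ring
    rw [Finset.sum_congr rfl step, Finset.sum_add_distrib]
    have h1 : ∑ j ∈ Finset.Icc (1:ℤ) i, ((-1:F) ^ (j-1).toNat) • v (j-1) (i+1-j)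
        = ∑ j ∈ Finset.Icc (1:ℤ) (i-1), (-((-1:F) ^ (j-1).toNat)) • v j (i-j) := by
      have hmap : Finset.Icc (1:ℤ) i
          = (Finset.Icc (0:ℤ) (i-1)).map (addRightEmbedding 1) := by
        rw [Finset.map_add_right_Icc]; norm_num
      rw [hmap, Finset.sum_map]
      simp only [addRightEmbedding_apply]
      have hins : Finset.Icc (0:ℤ) (i-1) = insert 0 (Finset.Icc 1 (i-1)) := by
        ext a; simp [Finset.mem_Icc, Finset.mem_insert]; omega
      rw [hins, Finset.sum_insert (by simp)]
      have hz : v (0 + 1 - 1) (i + 1 - (0 + 1)) = 0 := by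
        apply hv0; left; norm_num
      rw [hz, smul_zero, zero_add]
      apply Finset.sum_congr rfl
      intro j hj
      rw [Finset.mem_Icc] at hj
      have e1 : j + 1 - 1 = j := by ring
      have e2 : i + 1 - (j + 1) = i - j := by ring
      rw [e1, e2]
      congr 1
      have : j.toNat = (j-1).toNat + 1 := by omega
      rw [this, pow_succ]
      ring
    have h2 : ∑ j ∈ Finset.Icc (1:ℤ) i, ((-1:F) ^ (j-1).toNat) • v j (i-j)
        = ∑ j ∈ Finset.Icc (1:ℤ) (i-1), ((-1:F) ^ (j-1).toNat) • v j (i-j) := by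
      have hins : Finset.Icc (1:ℤ) i = insert i (Finset.Icc 1 (i-1)) := by
        ext a; simp [Finset.mem_Icc, Finset.mem_insert]; omega
      rw [hins, Finset.sum_insert (by simp)]
      have hz : v i (i - i) = 0 := by apply hv0; right; right; left; omega
      rw [hz, smul_zero, zero_add]
    rw [h1, h2, ← Finset.sum_add_distrib]
    apply Finset.sum_eq_zero
    intro j hj
    rw [neg_smul, neg_add_cancel]
end

section
/- For 2 ≤ k ≤ m+n−1, N maps D_k into D_{k−1}; let T_k : D_k → D_{k−1} denote this restriction. Then T_k is injective when n+1 ≤ k ≤ m+n−1, T_k is bijective when m+1 ≤ k ≤ n, and T_k is surjective with kernel equal to span{x_k} when 2 ≤ k ≤ m. -/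
open Finset

section aux

variable {F : Type*} [Field F] {V : Type*} [AddCommGroup V] [Module F V]
variable {m n : ℕ} {v : ℤ → ℤ → V}

lemma sum_Icc_int {M : Type*} [AddCommMonoid M] (m : ℕ) (f : ℤ → M) :
    ∑ i ∈ Icc (1:ℤ) m, f i = ∑ t ∈ range m, f ((t:ℤ)+1) := by
  have h : Icc (1:ℤ) m = (range m).map ⟨fun t : ℕ => (t:ℤ)+1, by intro a b h; simpa using h⟩ := by
    ext x
    simp only [mem_Icc, mem_map, mem_range, Function.Embedding.coeFn_mk]
    constructor
    · intro hx
      exact ⟨(x-1).toNat, by omega, by show (((x-1).toNat : ℕ):ℤ)+1 = x; omega⟩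
    · rintro ⟨t, ht, rfl⟩; show 1 ≤ (t:ℤ)+1 ∧ (t:ℤ)+1 ≤ m; omega
  rw [h, sum_map]
  rfl

lemma aux_intro (hv0 : ∀ i j : ℤ, (i < 1 ∨ (m:ℤ) < i ∨ j < 1 ∨ (n:ℤ) < j) → v i j = 0)
    (k : ℤ) (c : ℤ → F) :
    (∑ i ∈ Icc (1:ℤ) m, c i • v i (k+1-i)) ∈
      Submodule.span F {z | ∃ i j : ℤ, 1 ≤ i ∧ i ≤ (m:ℤ) ∧ 1 ≤ j ∧ j ≤ (n:ℤ) ∧ i + j = k + 1 ∧ z = v i j} := by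
  refine Submodule.sum_mem _ fun i hi => Submodule.smul_mem _ _ ?_
  simp only [mem_Icc] at hi
  by_cases h : 1 ≤ k+1-i ∧ k+1-i ≤ (n:ℤ)
  · exact Submodule.subset_span ⟨i, k+1-i, hi.1, hi.2, h.1, h.2, by ring, rfl⟩
  · have h0 : v i (k+1-i) = 0 := hv0 _ _ (by omega)
    rw [h0]; exact Submodule.zero_mem _

lemma aux_elim (hv0 : ∀ i j : ℤ, (i < 1 ∨ (m:ℤ) < i ∨ j < 1 ∨ (n:ℤ) < j) → v i j = 0)
    (k : ℤ) (z : V)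
    (hz : z ∈ Submodule.span F {z | ∃ i j : ℤ, 1 ≤ i ∧ i ≤ (m:ℤ) ∧ 1 ≤ j ∧ j ≤ (n:ℤ) ∧ i + j = k + 1 ∧ z = v i j}) :
    ∃ c : ℤ → F, (∀ i, (i < 1 ∨ (m:ℤ) < i ∨ k+1-i < 1 ∨ (n:ℤ) < k+1-i) → c i = 0) ∧
      z = ∑ i ∈ Icc (1:ℤ) m, c i • v i (k+1-i) := by
  induction hz using Submodule.span_induction with
  | mem w hw =>
    obtain ⟨i, j, hi1, him, hj1, hjn, hij, rfl⟩ := hw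
    refine ⟨fun i' => if i' = i then 1 else 0, ?_, ?_⟩
    · intro i' hi'
      have hne : i' ≠ i := by omega
      simp [hne]
    · have : ∀ i' ∈ Icc (1:ℤ) m, (if i' = i then (1:F) else 0) • v i' (k+1-i')
          = if i' = i then v i' (k+1-i') else 0 := by
        intro i' _; split <;> simp
      rw [Finset.sum_congr rfl this, Finset.sum_ite_eq' (Icc (1:ℤ) m) i]
      rw [if_pos (by simp [mem_Icc]; omega)]
      congr 1
      omega
  | zero => exact ⟨0, fun _ _ => rfl, by simp⟩
  | add a b _ _ iha ihb =>
    obtain ⟨c1, hs1, rfl⟩ := iha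
    obtain ⟨c2, hs2, rfl⟩ := ihb
    refine ⟨c1 + c2, fun i hi => by simp [hs1 i hi, hs2 i hi], ?_⟩
    rw [← Finset.sum_add_distrib]
    exact Finset.sum_congr rfl fun i _ => by rw [Pi.add_apply, add_smul]
  | smul a w _ ih =>
    obtain ⟨c, hs, rfl⟩ := ih
    refine ⟨fun i => a * c i, fun i hi => by show a * c i = 0; rw [hs i hi, mul_zero], ?_⟩
    rw [Finset.smul_sum]
    exact Finset.sum_congr rfl fun i _ => by rw [mul_smul]

lemma aux_U (hv0 : ∀ i j : ℤ, (i < 1 ∨ (m:ℤ) < i ∨ j < 1 ∨ (n:ℤ) < j) → v i j = 0)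
    (hv_indep : LinearIndependent F
      (fun p : Fin m × Fin n => v (((p.1 : ℕ) + 1 : ℕ) : ℤ) (((p.2 : ℕ) + 1 : ℕ) : ℤ)))
    (k : ℤ) (c : ℤ → F)
    (h0 : ∑ i ∈ Icc (1:ℤ) m, c i • v i (k+1-i) = 0) :
    ∀ i : ℤ, 1 ≤ i → i ≤ (m:ℤ) → 1 ≤ k+1-i → k+1-i ≤ (n:ℤ) → c i = 0 := by
  intro i hi1 him hj1 hjn
  classical
  set d : Fin m × Fin n → F := fun p => if ((p.2:ℤ)+1 = k - (p.1:ℤ)) then c ((p.1:ℤ)+1) else 0 with hd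
  have hsum : ∑ p : Fin m × Fin n, d p • v (((p.1 : ℕ) + 1 : ℕ) : ℤ) (((p.2 : ℕ) + 1 : ℕ) : ℤ)
      = ∑ i ∈ Icc (1:ℤ) m, c i • v i (k+1-i) := by
    rw [Fintype.sum_prod_type]
    rw [sum_Icc_int m (fun i => c i • v i (k+1-i)), ← Fin.sum_univ_eq_sum_range
      (fun t => c ((t:ℤ)+1) • v ((t:ℤ)+1) (k+1-((t:ℤ)+1)))]
    refine Finset.sum_congr rfl fun a _ => ?_
    have key : ∑ j : Fin n, d (a, j) • v (((a:ℕ)+1 : ℕ) : ℤ) (((j:ℕ)+1 : ℕ) : ℤ)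
        = c ((a:ℤ)+1) • v ((a:ℤ)+1) (k - (a:ℤ)) := by
      by_cases hval : 1 ≤ k - (a:ℤ) ∧ k - (a:ℤ) ≤ (n:ℤ)
      · have hb : (k - (a:ℤ) - 1).toNat < n := by omega
        rw [Finset.sum_eq_single (⟨(k - (a:ℤ) - 1).toNat, hb⟩ : Fin n)]
        · simp only [hd]
          rw [if_pos (by push_cast; omega)]
          congr 2 <;> push_cast <;> omega
        · intro j _ hj
          simp only [hd]
          rw [if_neg, zero_smul]
          intro hcon
          apply hj
          apply Fin.ext
          simp only []
          omega
        · intro h; exact absurd (Finset.mem_univ _) h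
      · have hz : v ((a:ℤ)+1) (k - (a:ℤ)) = 0 := hv0 _ _ (by omega)
        rw [hz, smul_zero]
        apply Finset.sum_eq_zero
        intro j _
        simp only [hd]
        rw [if_neg (by push_cast; omega), zero_smul]
    rw [key]
    congr 1
    ring
  have hall := Fintype.linearIndependent_iff.mp hv_indep d (by rw [hsum, h0])
  have hp := hall (⟨(i-1).toNat, by omega⟩, ⟨(k-i).toNat, by omega⟩)
  simp only [hd] at hp
  rw [if_pos (by push_cast; omega)] at hp
  rw [← hp]
  congr 1
  push_cast
  omega

lemma aux_NS
    (hv0 : ∀ i j : ℤ, (i < 1 ∨ (m:ℤ) < i ∨ j < 1 ∨ (n:ℤ) < j) → v i j = 0)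
    (N : V →ₗ[F] V)
    (hN : ∀ i j : ℤ, 1 ≤ i → i ≤ (m : ℤ) → 1 ≤ j → j ≤ (n : ℤ) →
      N (v i j) = v (i - 1) j + v i (j - 1))
    (hm : 0 < m) (hn : 0 < n)
    (k : ℤ) (c : ℤ → F)
    (hsupp : ∀ i : ℤ, 1 ≤ i → i ≤ (m:ℤ) → (n:ℤ) < k+1-i → c i = 0)
    (hedge : c ((m:ℤ)+1) • v (m:ℤ) (k-m) = 0) :
    N (∑ i ∈ Icc (1:ℤ) m, c i • v i (k+1-i)) = ∑ a ∈ Icc (1:ℤ) m, (c a + c (a+1)) • v a (k-a) := by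
  rw [map_sum]
  have step1 : ∀ i ∈ Icc (1:ℤ) m, N (c i • v i (k+1-i))
      = c i • v (i-1) (k+1-i) + c i • v i (k-i) := by
    intro i hi
    simp only [mem_Icc] at hi
    rcases lt_trichotomy (k+1-i) 1 with h | h | h
    · rw [hv0 i (k+1-i) (by omega), hv0 (i-1) (k+1-i) (by omega), hv0 i (k-i) (by omega)]
      simp
    · rw [map_smul, hN i (k+1-i) hi.1 hi.2 (by omega) (by omega), smul_add]
      have e : k+1-i-1 = k-i := by omega
      rw [e]
    · by_cases hn' : k+1-i ≤ (n:ℤ)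
      · rw [map_smul, hN i (k+1-i) hi.1 hi.2 (by omega) hn', smul_add]
        have e : k+1-i-1 = k-i := by omega
        rw [e]
      · rw [hsupp i hi.1 hi.2 (by omega)]
        simp
  rw [Finset.sum_congr rfl step1, Finset.sum_add_distrib]
  have reindex : ∑ i ∈ Icc (1:ℤ) m, c i • v (i-1) (k+1-i)
      = ∑ a ∈ Icc (0:ℤ) ((m:ℤ)-1), c (a+1) • v a (k-a) := by
    rw [sum_Icc_int m (fun i => c i • v (i-1) (k+1-i))]
    have h : Icc (0:ℤ) ((m:ℤ)-1) = (range m).map ⟨fun t : ℕ => (t:ℤ), by intro a b h; simpa using h⟩ := by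
      ext x
      simp only [mem_Icc, mem_map, mem_range, Function.Embedding.coeFn_mk]
      constructor
      · intro hx; exact ⟨x.toNat, by omega, by show ((x.toNat : ℕ):ℤ) = x; omega⟩
      · rintro ⟨t, ht, rfl⟩; show 0 ≤ (t:ℤ) ∧ (t:ℤ) ≤ (m:ℤ)-1; omega
    rw [h, sum_map]
    refine Finset.sum_congr rfl fun t _ => ?_
    show c ((t:ℤ)+1) • v ((t:ℤ)+1-1) (k+1-((t:ℤ)+1)) = c ((t:ℤ)+1) • v (t:ℤ) (k-(t:ℤ))
    congr 2 <;> ring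
  rw [reindex]
  have insert0 : Icc (0:ℤ) ((m:ℤ)-1) = insert 0 (Icc (1:ℤ) ((m:ℤ)-1)) := by
    ext x; simp only [mem_insert, mem_Icc]; omega
  have insertm : Icc (1:ℤ) (m:ℤ) = insert (m:ℤ) (Icc (1:ℤ) ((m:ℤ)-1)) := by
    ext x; simp only [mem_insert, mem_Icc]; omega
  rw [insert0, Finset.sum_insert (by simp only [mem_Icc]; omega), hv0 0 (k-0) (by omega), smul_zero, zero_add]
  have key : ∑ a ∈ Icc (1:ℤ) ((m:ℤ)-1), c (a+1) • v a (k-a)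
      = ∑ a ∈ Icc (1:ℤ) (m:ℤ), c (a+1) • v a (k-a) := by
    rw [insertm, Finset.sum_insert (by simp only [mem_Icc]; omega), hedge, zero_add]
  rw [key, ← Finset.sum_add_distrib]
  refine Finset.sum_congr rfl fun a _ => ?_
  rw [add_smul, add_comm]

end aux

/-- For 2 ≤ k ≤ m+n−1, N maps D_k into D_{k−1}; the restriction T_k is
injective when n+1 ≤ k ≤ m+n−1, bijective when m+1 ≤ k ≤ n, and surjective with kernel
span{x_k} when 2 ≤ k ≤ m. -/
theorem stmt_6 (F : Type*) [Field F] (m n : ℕ) (hm : 0 < m) (hmn : m ≤ n)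
    (V : Type*) [AddCommGroup V] [Module F V]
    (v : ℤ → ℤ → V)
    (hv_indep : LinearIndependent F
      (fun p : Fin m × Fin n => v (((p.1 : ℕ) + 1 : ℕ) : ℤ) (((p.2 : ℕ) + 1 : ℕ) : ℤ)))
    (hv_span : Submodule.span F
      (Set.range (fun p : Fin m × Fin n =>
        v (((p.1 : ℕ) + 1 : ℕ) : ℤ) (((p.2 : ℕ) + 1 : ℕ) : ℤ))) = ⊤)
    (hv0 : ∀ i j : ℤ, (i < 1 ∨ (m : ℤ) < i ∨ j < 1 ∨ (n : ℤ) < j) → v i j = 0)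
    (N : V →ₗ[F] V)
    (hN : ∀ i j : ℤ, 1 ≤ i → i ≤ (m : ℤ) → 1 ≤ j → j ≤ (n : ℤ) →
      N (v i j) = v (i - 1) j + v i (j - 1))
    (D : ℤ → Submodule F V)
    (hD : ∀ k : ℤ, D k = Submodule.span F
      {z | ∃ i j : ℤ, 1 ≤ i ∧ i ≤ (m : ℤ) ∧ 1 ≤ j ∧ j ≤ (n : ℤ) ∧ i + j = k + 1 ∧ z = v i j})
    (x : ℤ → V)
    (hx : ∀ i : ℤ, x i =
      ∑ j ∈ Finset.Icc (1 : ℤ) i, ((-1 : F) ^ (j - 1).toNat) • v j (i + 1 - j)) :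
    ∀ k : ℤ, 2 ≤ k → k ≤ (m : ℤ) + n - 1 →
      (∀ z ∈ D k, N z ∈ D (k - 1)) ∧
      ((n : ℤ) + 1 ≤ k → ∀ z ∈ D k, N z = 0 → z = 0) ∧
      ((m : ℤ) + 1 ≤ k → k ≤ (n : ℤ) →
        (∀ z ∈ D k, N z = 0 → z = 0) ∧ (∀ u ∈ D (k - 1), ∃ z ∈ D k, N z = u)) ∧
      (k ≤ (m : ℤ) →
        (∀ u ∈ D (k - 1), ∃ z ∈ D k, N z = u) ∧
        (∀ z ∈ D k, (N z = 0 ↔ ∃ c : F, z = c • x k))) := by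
  classical
  have hn : 0 < n := lt_of_lt_of_le hm hmn
  have hmem : ∀ (k : ℤ) (c : ℤ → F), (∑ i ∈ Icc (1:ℤ) m, c i • v i (k+1-i)) ∈ D k := by
    intro k c; rw [hD k]; exact aux_intro hv0 k c
  have helim : ∀ (k : ℤ), ∀ z ∈ D k, ∃ c : ℤ → F,
      (∀ i, (i < 1 ∨ (m:ℤ) < i ∨ k+1-i < 1 ∨ (n:ℤ) < k+1-i) → c i = 0) ∧
      z = ∑ i ∈ Icc (1:ℤ) m, c i • v i (k+1-i) := by
    intro k z hz; rw [hD k] at hz; exact aux_elim hv0 k z hz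
  have hU := aux_U (v := v) hv0 hv_indep
  have hNS := aux_NS (v := v) hv0 N hN hm hn
  intro k hk2 hkmn
  -- relations from N z = 0
  have hrel : ∀ (c : ℤ → F),
      (∀ i, (i < 1 ∨ (m:ℤ) < i ∨ k+1-i < 1 ∨ (n:ℤ) < k+1-i) → c i = 0) →
      N (∑ i ∈ Icc (1:ℤ) m, c i • v i (k+1-i)) = 0 →
      ∀ a : ℤ, 1 ≤ a → a ≤ (m:ℤ) → 1 ≤ k-a → k-a ≤ (n:ℤ) → c a + c (a+1) = 0 := by
    intro c hs h0 a h1 h2 h3 h4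
    rw [hNS k c (fun i hi1 hi2 hi3 => hs i (by omega))
      (by rw [hs ((m:ℤ)+1) (by omega), zero_smul])] at h0
    refine hU (k-1) (fun a => c a + c (a+1)) ?_ a h1 h2 (by omega) (by omega)
    rw [← h0]
    refine Finset.sum_congr rfl fun b _ => ?_
    have e : (k-1)+1-b = k-b := by ring
    rw [e]
  refine ⟨?_, ?_, ?_, ?_⟩
  · -- part 1 : N maps D k into D (k-1)
    intro z hz
    obtain ⟨c, hs, rfl⟩ := helim k z hz
    rw [hNS k c (fun i hi1 hi2 hi3 => hs i (by omega))
      (by rw [hs ((m:ℤ)+1) (by omega), zero_smul])]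
    have := hmem (k-1) (fun a => c a + c (a+1))
    have e : ∀ b : ℤ, (k-1)+1-b = k-b := fun b => by ring
    simpa only [e] using this
  · -- part 2 : injectivity for n+1 ≤ k
    intro hk z hz h0
    obtain ⟨c, hs, rfl⟩ := helim k z hz
    have hrel' := hrel c hs h0
    have hind : ∀ t : ℕ, k - n + (t:ℤ) ≤ (m:ℤ) → c (k - n + (t:ℤ)) = 0 := by
      intro t
      induction t with
      | zero => intro _; exact hs _ (by push_cast; omega)
      | succ t ih =>
        intro hle
        push_cast at hle ⊢
        have h1 := hrel' (k - n + (t:ℤ)) (by omega) (by omega) (by omega) (by omega)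
        rw [ih (by push_cast; omega), zero_add] at h1
        rw [show k - (n:ℤ) + ((t:ℤ)+1) = (k - n + (t:ℤ)) + 1 from by ring]
        exact h1
    apply Finset.sum_eq_zero
    intro i hi
    simp only [mem_Icc] at hi
    by_cases hc : k+1-i ≤ (n:ℤ)
    · have ht := hind (i - (k - n)).toNat (by omega)
      rw [show k - (n:ℤ) + (((i - (k - (n:ℤ))).toNat : ℤ)) = i from by omega] at ht
      rw [ht, zero_smul]
    · rw [hs i (by omega), zero_smul]
  · -- part 3 : m+1 ≤ k ≤ n
    intro hk1 hk2'
    constructor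
    · -- injectivity
      intro z hz h0
      obtain ⟨c, hs, rfl⟩ := helim k z hz
      have hrel' := hrel c hs h0
      have hind : ∀ t : ℕ, ∀ a : ℤ, a = (m:ℤ) - (t:ℤ) → 1 ≤ a → c a = 0 := by
        intro t
        induction t with
        | zero =>
          intro a ha h1
          push_cast at ha
          have hr := hrel' a (by omega) (by omega) (by omega) (by omega)
          rw [hs (a+1) (by omega), add_zero] at hr
          exact hr
        | succ t ih =>
          intro a ha h1
          push_cast at ha
          have hr := hrel' a (by omega) (by omega) (by omega) (by omega)
          rw [ih (a+1) (by omega) (by omega), add_zero] at hr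
          exact hr
      apply Finset.sum_eq_zero
      intro i hi
      simp only [mem_Icc] at hi
      rw [hind (( (m:ℤ) - i).toNat) i (by omega) hi.1, zero_smul]
    · -- surjectivity
      intro u hu
      obtain ⟨d, hds, rfl⟩ := helim (k-1) u hu
      let f : ℕ → F := fun t => Nat.rec 0 (fun t' prev => d ((m:ℤ) - (t':ℤ)) - prev) t
      let c : ℤ → F := fun i => if i ≤ (m:ℤ)+1 then f ((m+1-i).toNat) else 0
      have hca : ∀ a : ℤ, 1 ≤ a → a ≤ (m:ℤ) → c a + c (a+1) = d a := by
        intro a h1 h2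
        have e1 : c (a+1) = f (((m:ℤ)-a).toNat) := by
          simp only [c]
          rw [if_pos (by omega), show ((m:ℤ)+1-(a+1)).toNat = ((m:ℤ)-a).toNat from by omega]
        have e2 : c a = f (((m:ℤ)-a).toNat + 1) := by
          simp only [c]
          rw [if_pos (by omega), show ((m:ℤ)+1-a).toNat = ((m:ℤ)-a).toNat + 1 from by omega]
        rw [e1, e2]
        show (d ((m:ℤ) - ((((m:ℤ)-a).toNat : ℕ):ℤ)) - f (((m:ℤ)-a).toNat)) + f (((m:ℤ)-a).toNat) = d a
        rw [show (m:ℤ) - ((((m:ℤ)-a).toNat : ℕ):ℤ) = a from by omega]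
        ring
      refine ⟨∑ i ∈ Icc (1:ℤ) m, c i • v i (k+1-i), hmem k c, ?_⟩
      rw [hNS k c (fun i hi1 hi2 hi3 => absurd hi3 (by omega))
        (by rw [show c ((m:ℤ)+1) = 0 from by simp only [c]; rw [if_pos le_rfl, show ((m:ℤ)+1-((m:ℤ)+1)).toNat = 0 from by omega]; rfl,
          zero_smul])]
      refine Finset.sum_congr rfl fun a ha => ?_
      simp only [mem_Icc] at ha
      rw [hca a ha.1 ha.2, show (k-1)+1-a = k-a from by ring]
  · -- part 4 : k ≤ m
    intro hkm
    set cx : ℤ → F := fun i => if i ≤ k then (-1:F)^((i-1).toNat) else 0 with hcx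
    have hxrep : x k = ∑ i ∈ Icc (1:ℤ) m, cx i • v i (k+1-i) := by
      rw [hx k]
      have h1 : ∑ i ∈ Icc (1:ℤ) k, ((-1:F)^((i-1).toNat)) • v i (k+1-i)
          = ∑ i ∈ Icc (1:ℤ) k, cx i • v i (k+1-i) := by
        refine Finset.sum_congr rfl fun i hi => ?_
        simp only [mem_Icc] at hi
        simp only [cx]
        rw [if_pos hi.2]
      rw [h1]
      refine Finset.sum_subset (Finset.Icc_subset_Icc_right hkm) fun i hi hni => ?_
      simp only [mem_Icc] at hi hni
      simp only [cx]
      rw [if_neg (by omega), zero_smul]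
    have hNx : N (x k) = 0 := by
      rw [hxrep, hNS k cx (fun i hi1 hi2 hi3 => absurd hi3 (by omega))
        (by simp only [cx]; rw [if_neg (by omega), zero_smul])]
      apply Finset.sum_eq_zero
      intro a ha
      simp only [mem_Icc] at ha
      by_cases hak : a ≤ k-1
      · have hcoe : cx a + cx (a+1) = 0 := by
          simp only [cx]
          rw [if_pos (by omega), if_pos (by omega),
            show (a+1-1).toNat = (a-1).toNat + 1 from by omega, pow_succ]
          ring
        rw [hcoe, zero_smul]
      · rw [hv0 a (k-a) (by omega), smul_zero]
    constructor
    · -- surjectivity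
      intro u hu
      obtain ⟨d, hds, rfl⟩ := helim (k-1) u hu
      let f : ℕ → F := fun t => Nat.rec 0 (fun t' prev => d ((t':ℕ):ℤ) - prev) t
      let c : ℤ → F := fun i => f i.toNat
      have hca : ∀ a : ℤ, 1 ≤ a → c a + c (a+1) = d a := by
        intro a h1
        have e1 : c (a+1) = f (a.toNat + 1) := by
          simp only [c]
          rw [show (a+1).toNat = a.toNat + 1 from by omega]
        rw [e1]
        show c a + (d ((a.toNat : ℕ):ℤ) - f a.toNat) = d a
        rw [show ((a.toNat : ℕ):ℤ) = a from by omega]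
        show c a + (d a - c a) = d a
        ring
      refine ⟨∑ i ∈ Icc (1:ℤ) m, c i • v i (k+1-i), hmem k c, ?_⟩
      rw [hNS k c (fun i hi1 hi2 hi3 => absurd hi3 (by omega))
        (by rw [hv0 (m:ℤ) (k-m) (by omega), smul_zero])]
      refine Finset.sum_congr rfl fun a ha => ?_
      simp only [mem_Icc] at ha
      rw [hca a ha.1, show (k-1)+1-a = k-a from by ring]
    · -- kernel
      intro z hz
      constructor
      · intro h0
        obtain ⟨c, hs, hzeq⟩ := helim k z hz
        subst hzeq
        have hrel' := hrel c hs h0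
        have hcoef : ∀ t : ℕ, 1 + (t:ℤ) ≤ k → c (1 + (t:ℤ)) = (-1:F)^t * c 1 := by
          intro t
          induction t with
          | zero => intro _; push_cast; simp
          | succ t ih =>
            intro hle
            push_cast at hle ⊢
            have hr := hrel' (1 + (t:ℤ)) (by omega) (by omega) (by omega) (by omega)
            have h2 : c (1 + (t:ℤ) + 1) = - c (1 + (t:ℤ)) := eq_neg_of_add_eq_zero_right hr
            rw [show (1:ℤ) + ((t:ℤ)+1) = 1 + (t:ℤ) + 1 from by ring, h2, ih (by omega), pow_succ]
            ring
        refine ⟨c 1, ?_⟩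
        rw [hxrep, Finset.smul_sum]
        refine Finset.sum_congr rfl fun i hi => ?_
        simp only [mem_Icc] at hi
        by_cases hik : i ≤ k
        · have hc : c i = (-1:F)^((i-1).toNat) * c 1 := by
            have ht := hcoef (i-1).toNat (by omega)
            rw [show (1:ℤ) + (((i-1).toNat : ℕ):ℤ) = i from by omega] at ht
            exact ht
          simp only [cx]
          rw [if_pos hik, hc, smul_smul]
          congr 1
          ring
        · simp only [cx]
          rw [hs i (by omega), if_neg (by omega)]
          simp
      · rintro ⟨c0, rfl⟩
        rw [map_smul, hNx, smul_zero]
end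

section
/- The kernel of N equals the span of {x_1, x_2, …, x_m}; in particular, the kernel of N has dimension m over F. -/
/-- The kernel of N equals the span of {x_1, …, x_m}; in particular,
the kernel of N has dimension m over F. -/
theorem stmt_7 (F : Type*) [Field F] (m n : ℕ) (hm : 0 < m) (hmn : m ≤ n)
    (V : Type*) [AddCommGroup V] [Module F V]
    (v : ℤ → ℤ → V)
    (hv_indep : LinearIndependent F
      (fun p : Fin m × Fin n => v (((p.1 : ℕ) + 1 : ℕ) : ℤ) (((p.2 : ℕ) + 1 : ℕ) : ℤ)))
    (hv_span : Submodule.span F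
      (Set.range (fun p : Fin m × Fin n =>
        v (((p.1 : ℕ) + 1 : ℕ) : ℤ) (((p.2 : ℕ) + 1 : ℕ) : ℤ))) = ⊤)
    (hv0 : ∀ i j : ℤ, (i < 1 ∨ (m : ℤ) < i ∨ j < 1 ∨ (n : ℤ) < j) → v i j = 0)
    (N : V →ₗ[F] V)
    (hN : ∀ i j : ℤ, 1 ≤ i → i ≤ (m : ℤ) → 1 ≤ j → j ≤ (n : ℤ) →
      N (v i j) = v (i - 1) j + v i (j - 1))
    (x : ℤ → V)
    (hx : ∀ i : ℤ, x i =
      ∑ j ∈ Finset.Icc (1 : ℤ) i, ((-1 : F) ^ (j - 1).toNat) • v j (i + 1 - j)) :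
    LinearMap.ker N = Submodule.span F {z | ∃ i : ℤ, 1 ≤ i ∧ i ≤ (m : ℤ) ∧ z = x i} ∧
      Module.finrank F (LinearMap.ker N) = m := by
  -- the basis
  set b : Module.Basis (Fin m × Fin n) F V := Module.Basis.mk hv_indep (le_of_eq hv_span.symm) with hb
  have hbapp : ∀ p : Fin m × Fin n,
      b p = v (((p.1 : ℕ) + 1 : ℕ) : ℤ) (((p.2 : ℕ) + 1 : ℕ) : ℤ) := fun p => by
    rw [hb, Module.Basis.mk_apply]
  -- coordinates of v i j
  have coordv : ∀ (q : Fin m × Fin n) (i j : ℤ),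
      b.repr (v i j) q =
        if i = ((q.1 : ℕ) : ℤ) + 1 ∧ j = ((q.2 : ℕ) : ℤ) + 1 then 1 else 0 := by
    intro q i j
    by_cases h1 : 1 ≤ i ∧ i ≤ (m : ℤ) ∧ 1 ≤ j ∧ j ≤ (n : ℤ)
    · obtain ⟨hi1, him, hj1, hjn⟩ := h1
      have ha : (i - 1).toNat < m := by omega
      have hc : (j - 1).toNat < n := by omega
      have hv : v i j = b ((⟨(i - 1).toNat, ha⟩ : Fin m), (⟨(j - 1).toNat, hc⟩ : Fin n)) := by
        rw [hbapp]
        congr 1 <;> push_cast <;> omega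
      rw [hv, Module.Basis.repr_self, Finsupp.single_apply]
      have hiff : (((⟨(i - 1).toNat, ha⟩ : Fin m), (⟨(j - 1).toNat, hc⟩ : Fin n))
            = q) ↔ (i = ((q.1 : ℕ) : ℤ) + 1 ∧ j = ((q.2 : ℕ) : ℤ) + 1) := by
        simp only [Prod.ext_iff, Fin.ext_iff, Fin.val_mk]
        omega
      rw [if_congr hiff rfl rfl]
    · have hv : v i j = 0 := hv0 i j (by omega)
      rw [hv, map_zero, Finsupp.coe_zero, Pi.zero_apply, if_neg]
      rintro ⟨rfl, rfl⟩
      have := q.1.isLt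
      have := q.2.isLt
      omega
  -- coordinates of x i
  have reprx : ∀ (q : Fin m × Fin n) (i : ℤ),
      b.repr (x i) q =
        if i = ((q.1 : ℕ) : ℤ) + ((q.2 : ℕ) : ℤ) + 1 then (-1 : F) ^ (q.1 : ℕ) else 0 := by
    intro q i
    rw [hx i, map_sum, Finsupp.coe_finset_sum, Finset.sum_apply]
    simp only [map_smul, Finsupp.coe_smul, Pi.smul_apply, coordv, smul_eq_mul]
    by_cases hcase : i = ((q.1 : ℕ) : ℤ) + ((q.2 : ℕ) : ℤ) + 1
    · rw [if_pos hcase]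
      have hterm : ∀ j ∈ Finset.Icc (1 : ℤ) i,
          ((-1 : F) ^ (j - 1).toNat *
            if j = ((q.1 : ℕ) : ℤ) + 1 ∧ i + 1 - j = ((q.2 : ℕ) : ℤ) + 1 then 1 else 0) =
          if j = ((q.1 : ℕ) : ℤ) + 1 then (-1 : F) ^ (q.1 : ℕ) else 0 := by
        intro j hj
        by_cases hj' : j = ((q.1 : ℕ) : ℤ) + 1
        · rw [if_pos ⟨hj', by omega⟩, mul_one, if_pos hj']
          congr 1
          omega
        · rw [if_neg (by rintro ⟨h, -⟩; exact hj' h), mul_zero, if_neg hj']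
      rw [Finset.sum_congr rfl hterm, Finset.sum_ite_eq' (Finset.Icc (1 : ℤ) i)]
      rw [if_pos (by rw [Finset.mem_Icc]; omega)]
    · rw [if_neg hcase]
      apply Finset.sum_eq_zero
      intro j hj
      rw [if_neg (by rintro ⟨rfl, h2⟩; omega), mul_zero]
  -- N kills each x i
  have hNx : ∀ i : ℤ, 1 ≤ i → i ≤ (m : ℤ) → N (x i) = 0 := by
    intro i hi1 him
    have h0 : b.repr (N (x i)) = 0 := by
      ext q
      rw [hx i, map_sum, map_sum, Finsupp.coe_finset_sum, Finset.sum_apply,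
        Finsupp.coe_zero, Pi.zero_apply]
      by_cases hcase : i = ((q.1 : ℕ) : ℤ) + ((q.2 : ℕ) : ℤ) + 2
      · have hterm : ∀ j ∈ Finset.Icc (1 : ℤ) i,
            (b.repr (N ((-1 : F) ^ (j - 1).toNat • v j (i + 1 - j)))) q =
            (if j = ((q.1 : ℕ) : ℤ) + 2 then (-1 : F) ^ ((q.1 : ℕ) + 1) else 0)
              + (if j = ((q.1 : ℕ) : ℤ) + 1 then (-1 : F) ^ ((q.1 : ℕ)) else 0) := by
          intro j hj
          rw [Finset.mem_Icc] at hj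
          rw [map_smul, hN j (i + 1 - j) (by omega) (by omega) (by omega) (by omega)]
          simp only [map_smul, map_add, Finsupp.coe_smul, Finsupp.coe_add, Pi.smul_apply,
            Pi.add_apply, coordv, smul_eq_mul, mul_add]
          congr 1
          · by_cases h : j = ((q.1 : ℕ) : ℤ) + 2
            · rw [if_pos ⟨by omega, by omega⟩, mul_one, if_pos h]
              congr 1
              omega
            · rw [if_neg (by rintro ⟨h1, h2⟩; omega), mul_zero, if_neg h]
          · by_cases h : j = ((q.1 : ℕ) : ℤ) + 1
            · rw [if_pos ⟨by omega, by omega⟩, mul_one, if_pos h]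
              congr 1
              omega
            · rw [if_neg (by rintro ⟨h1, h2⟩; omega), mul_zero, if_neg h]
        rw [Finset.sum_congr rfl hterm, Finset.sum_add_distrib,
          Finset.sum_ite_eq' (Finset.Icc (1 : ℤ) i),
          Finset.sum_ite_eq' (Finset.Icc (1 : ℤ) i),
          if_pos (by rw [Finset.mem_Icc]; omega), if_pos (by rw [Finset.mem_Icc]; omega)]
        rw [pow_succ]
        ring
      · apply Finset.sum_eq_zero
        intro j hj
        rw [Finset.mem_Icc] at hj
        rw [map_smul, hN j (i + 1 - j) (by omega) (by omega) (by omega) (by omega)]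
        simp only [map_smul, map_add, Finsupp.coe_smul, Finsupp.coe_add, Pi.smul_apply,
          Pi.add_apply, coordv, smul_eq_mul, mul_add]
        rw [if_neg (by rintro ⟨h1, h2⟩; omega), if_neg (by rintro ⟨h1, h2⟩; omega)]
        simp
    exact (LinearEquiv.map_eq_zero_iff b.repr).mp h0
  have hspan_le : Submodule.span F {z | ∃ i : ℤ, 1 ≤ i ∧ i ≤ (m : ℤ) ∧ z = x i} ≤
      LinearMap.ker N := by
    rw [Submodule.span_le]
    rintro z ⟨i, hi1, him, rfl⟩
    exact LinearMap.mem_ker.mpr (hNx i hi1 him)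
  have hker_le : LinearMap.ker N ≤
      Submodule.span F {z | ∃ i : ℤ, 1 ≤ i ∧ i ≤ (m : ℤ) ∧ z = x i} := by
    intro w hw
    rw [LinearMap.mem_ker] at hw
    set cw : ℕ → ℕ → F := fun a c =>
      if h : a < m ∧ c < n then b.repr w ((⟨a, h.1⟩ : Fin m), (⟨c, h.2⟩ : Fin n)) else 0
      with hcw
    -- the recurrence
    have hrec : ∀ a c : ℕ, a < m → c < n → cw (a + 1) c + cw a (c + 1) = 0 := by
      intro a c ham hcn
      set q : Fin m × Fin n := ((⟨a, ham⟩ : Fin m), (⟨c, hcn⟩ : Fin n)) with hq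
      have hw2 : N w = ∑ p : Fin m × Fin n, b.repr w p • N (b p) := by
        conv_lhs => rw [← Module.Basis.sum_repr b w]
        rw [map_sum]
        simp only [map_smul]
      have h0 : (b.repr (N w)) q = 0 := by rw [hw]; simp
      rw [hw2, map_sum, Finsupp.coe_finset_sum, Finset.sum_apply] at h0
      have hterm : ∀ p : Fin m × Fin n,
          (b.repr (b.repr w p • N (b p))) q =
            (if (p.1 : ℕ) = a + 1 ∧ (p.2 : ℕ) = c then b.repr w p else 0)
            + (if (p.1 : ℕ) = a ∧ (p.2 : ℕ) = c + 1 then b.repr w p else 0) := by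
        intro p
        rw [map_smul, hbapp p,
          hN _ _ (by push_cast; omega) (by push_cast; omega) (by push_cast; omega)
            (by push_cast; omega)]
        simp only [map_smul, map_add, Finsupp.coe_smul, Finsupp.coe_add, Pi.smul_apply,
          Pi.add_apply, coordv, smul_eq_mul, mul_add, hq]
        congr 1
        · by_cases h : (p.1 : ℕ) = a + 1 ∧ (p.2 : ℕ) = c
          · rw [if_pos (by push_cast; omega), mul_one, if_pos h]
          · rw [if_neg (by push_cast; intro h1; exact h (by omega)), mul_zero, if_neg h]
        · by_cases h : (p.1 : ℕ) = a ∧ (p.2 : ℕ) = c + 1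
          · rw [if_pos (by push_cast; omega), mul_one, if_pos h]
          · rw [if_neg (by push_cast; intro h1; exact h (by omega)), mul_zero, if_neg h]
      rw [Finset.sum_congr rfl (fun p _ => hterm p), Finset.sum_add_distrib] at h0
      have hsum : ∀ a' c' : ℕ,
          (∑ p : Fin m × Fin n,
            if (p.1 : ℕ) = a' ∧ (p.2 : ℕ) = c' then b.repr w p else 0) = cw a' c' := by
        intro a' c'
        by_cases h : a' < m ∧ c' < n
        · have hiff : ∀ p : Fin m × Fin n,
              ((p.1 : ℕ) = a' ∧ (p.2 : ℕ) = c') ↔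
                p = ((⟨a', h.1⟩ : Fin m), (⟨c', h.2⟩ : Fin n)) := by
            intro p
            simp only [Prod.ext_iff, Fin.ext_iff, Fin.val_mk]
          rw [Finset.sum_congr rfl (fun p _ => by rw [if_congr (hiff p) rfl rfl]),
            Finset.sum_ite_eq' Finset.univ, if_pos (Finset.mem_univ _)]
          simp only [hcw]
          rw [dif_pos h]
        · simp only [hcw]
          rw [dif_neg h]
          apply Finset.sum_eq_zero
          intro p _
          rw [if_neg]
          rintro ⟨h1, h2⟩
          exact h ⟨h1 ▸ p.1.isLt, h2 ▸ p.2.isLt⟩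
      rw [hsum, hsum] at h0
      exact h0
    -- last row vanishes
    have hzrow : ∀ t : ℕ, 1 ≤ t → cw (m - 1) t = 0 := by
      intro t ht
      by_cases htn : t ≤ n
      · have h := hrec (m - 1) (t - 1) (by omega) (by omega)
        have h1 : cw (m - 1 + 1) (t - 1) = 0 := by simp only [hcw]; exact dif_neg (by omega)
        rw [h1, zero_add] at h
        have ht1 : t - 1 + 1 = t := by omega
        rwa [ht1] at h
      · simp only [hcw]; exact dif_neg (by omega)
    -- diagonals past m vanish
    have hdiag0 : ∀ a c : ℕ, m ≤ a + c → cw a c = 0 := by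
      have key : ∀ d a c : ℕ, m - a ≤ d → m ≤ a + c → cw a c = 0 := by
        intro d
        induction d with
        | zero =>
          intro a c hd h
          simp only [hcw]; exact dif_neg (by omega)
        | succ d ih =>
          intro a c hd h
          by_cases ham : a < m
          · by_cases hcn : c < n
            · by_cases hlast : a = m - 1
              · subst hlast
                exact hzrow c (by omega)
              · have hr := hrec a (c - 1) ham (by omega)
                have hc1 : c - 1 + 1 = c := by omega
                rw [hc1] at hr
                rw [ih (a + 1) (c - 1) (by omega) (by omega), zero_add] at hr
                exact hr
            · simp only [hcw]; exact dif_neg (by omega)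
          · simp only [hcw]; exact dif_neg (by omega)
      intro a c h
      exact key m a c (by omega) h
    -- values on short diagonals
    have hdiagv : ∀ a c : ℕ, a + c < m → cw a c = (-1 : F) ^ a * cw 0 (a + c) := by
      intro a
      induction a with
      | zero => intro c h; simp
      | succ a ih =>
        intro c h
        have hr := hrec a c (by omega) (by omega)
        rw [ih (c + 1) (by omega)] at hr
        have : cw (a + 1) c = -((-1 : F) ^ a * cw 0 (a + (c + 1))) :=
          eq_neg_of_add_eq_zero_left hr
        rw [this]
        have harg : a + (c + 1) = a + 1 + c := by omega
        rw [harg, pow_succ]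
        ring
    -- decomposition of w
    have hdecomp : w = ∑ s ∈ Finset.range m, cw 0 s • x ((s : ℤ) + 1) := by
      apply b.repr.injective
      ext q
      rw [map_sum, Finsupp.coe_finset_sum, Finset.sum_apply]
      simp only [map_smul, Finsupp.coe_smul, Pi.smul_apply, reprx, smul_eq_mul]
      have hwq : b.repr w q = cw (q.1 : ℕ) (q.2 : ℕ) := by
        simp only [hcw]
        rw [dif_pos ⟨q.1.isLt, q.2.isLt⟩]
      by_cases hq : (q.1 : ℕ) + (q.2 : ℕ) < m
      · have hterm : ∀ s ∈ Finset.range m,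
            (cw 0 s * if ((s : ℕ) : ℤ) + 1 = ((q.1 : ℕ) : ℤ) + ((q.2 : ℕ) : ℤ) + 1
              then (-1 : F) ^ (q.1 : ℕ) else 0) =
            if s = (q.1 : ℕ) + (q.2 : ℕ) then cw 0 s * (-1 : F) ^ (q.1 : ℕ) else 0 := by
          intro s _
          by_cases hs : s = (q.1 : ℕ) + (q.2 : ℕ)
          · rw [if_pos (by omega), if_pos hs]
          · rw [if_neg (by omega), mul_zero, if_neg hs]
        rw [Finset.sum_congr rfl hterm, Finset.sum_ite_eq' (Finset.range m),
          if_pos (Finset.mem_range.mpr hq), hwq, hdiagv _ _ hq]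
        ring
      · rw [hwq, hdiag0 _ _ (by omega)]
        apply (Finset.sum_eq_zero fun s hs => ?_).symm
        rw [Finset.mem_range] at hs
        rw [if_neg (by omega), mul_zero]
    rw [hdecomp]
    refine Submodule.sum_mem _ fun s hs => Submodule.smul_mem _ _ (Submodule.subset_span ?_)
    rw [Finset.mem_range] at hs
    exact ⟨(s : ℤ) + 1, by omega, by omega, rfl⟩
  have heq := le_antisymm hker_le hspan_le
  refine ⟨heq, ?_⟩
  have hsets : {z | ∃ i : ℤ, 1 ≤ i ∧ i ≤ (m : ℤ) ∧ z = x i} =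
      Set.range (fun i : Fin m => x (((i : ℕ) : ℤ) + 1)) := by
    ext z
    constructor
    · rintro ⟨i, hi1, him, rfl⟩
      refine ⟨⟨(i - 1).toNat, by omega⟩, ?_⟩
      show x _ = x i
      congr 1
      show (((i - 1).toNat : ℕ) : ℤ) + 1 = i
      omega
    · rintro ⟨i', rfl⟩
      exact ⟨((i' : ℕ) : ℤ) + 1, by omega, by have := i'.isLt; omega, rfl⟩
  have hli : LinearIndependent F (fun i : Fin m => x (((i : ℕ) : ℤ) + 1)) := by
    rw [Fintype.linearIndependent_iff]
    intro g hg i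
    set q0 : Fin m × Fin n := ((⟨0, hm⟩ : Fin m), (⟨(i : ℕ), lt_of_lt_of_le i.isLt hmn⟩ : Fin n))
      with hq0
    have h0 : (b.repr (∑ i' : Fin m, g i' • x (((i' : ℕ) : ℤ) + 1))) q0 = 0 := by
      rw [hg]; simp
    rw [map_sum, Finsupp.coe_finset_sum, Finset.sum_apply] at h0
    simp only [map_smul, Finsupp.coe_smul, Pi.smul_apply, reprx, smul_eq_mul, hq0] at h0
    rw [Finset.sum_eq_single i
      (fun i' _ hne => by
        rw [if_neg (by intro hc; exact hne (by apply Fin.ext; omega)), mul_zero])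
      (fun habs => absurd (Finset.mem_univ i) habs)] at h0
    rw [if_pos (by omega)] at h0
    simpa using h0
  rw [heq, hsets, finrank_span_eq_card hli, Fintype.card_fin]
end

section
/- Let r and s be integers with 1 ≤ r < s ≤ m+n−1. Then N^{s−r}(D_s) ⊆ D_r, and the matrix of the restriction N^{s−r} : D_s → D_r with respect to the ordered bases B_s (of the domain) and B_r (of the codomain) is the (M_r−m_r+1) × (M_s−m_s+1) matrix whose (i,j)-entry is the image in F of the binomial coefficient C(s−r, m_s−m_r+j−i), interpreted as 0 when m_s−m_r+j−i < 0 or m_s−m_r+j−i > s−r. -/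
/-- Integer binomial coefficient `C(x,y)`, interpreted as `0` when `y < 0` or `y > x`. -/
def icho (x y : ℤ) : ℤ :=
  if 0 ≤ y ∧ y ≤ x then (x.toNat.choose y.toNat : ℤ) else 0

lemma sum_pascal {F V : Type*} [Field F] [AddCommGroup V] [Module F V]
    (g : ℕ → V) (k : ℕ) :
    ∑ t ∈ Finset.range (k+2), (((k+1).choose t : ℤ) : F) • g t
      = ∑ t ∈ Finset.range (k+1), ((k.choose t : ℤ) : F) • g (t+1)
        + ∑ t ∈ Finset.range (k+1), ((k.choose t : ℤ) : F) • g t := by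
  have h2 : ∑ t ∈ Finset.range (k+1), ((k.choose (t+1) : ℤ) : F) • g (t+1)
      + ((k.choose 0 : ℤ) : F) • g 0
      = ∑ t ∈ Finset.range (k+2), ((k.choose t : ℤ) : F) • g t :=
    (Finset.sum_range_succ' (fun t => ((k.choose t : ℤ) : F) • g t) (k+1)).symm
  rw [Finset.sum_range_succ' (fun t => (((k+1).choose t : ℤ) : F) • g t) (k+1)]
  simp only [Nat.choose_succ_succ, Nat.choose_zero_right]
  push_cast
  simp only [add_smul, Finset.sum_add_distrib]
  rw [Finset.sum_range_succ (fun t => ((k.choose t : ℤ) : F) • g t) (k+1)] at h2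
  simp only [Nat.choose_succ_self, Nat.cast_zero, Int.cast_zero, zero_smul, add_zero] at h2
  rw [add_assoc]
  congr 1
  simpa [Nat.succ_eq_add_one] using h2

lemma aux_pow {F V : Type*} [Field F] [AddCommGroup V] [Module F V]
    (m n : ℕ) (v : ℤ → ℤ → V)
    (hv0 : ∀ i j : ℤ, (i < 1 ∨ (m : ℤ) < i ∨ j < 1 ∨ (n : ℤ) < j) → v i j = 0)
    (N : V →ₗ[F] V)
    (hN : ∀ i j : ℤ, 1 ≤ i → i ≤ (m : ℤ) → 1 ≤ j → j ≤ (n : ℤ) →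
      N (v i j) = v (i - 1) j + v i (j - 1)) :
    ∀ (k : ℕ) (i j : ℤ), i ≤ (m : ℤ) → j ≤ (n : ℤ) →
      (N ^ k) (v i j)
        = ∑ t ∈ Finset.range (k+1), ((k.choose t : ℤ) : F) • v (i - t) (j - k + t) := by
  have hstep : ∀ a b : ℤ, a ≤ (m : ℤ) → b ≤ (n : ℤ) →
      N (v a b) = v (a-1) b + v a (b-1) := by
    intro a b ha hb
    rcases lt_or_ge a 1 with h1 | h1
    · rw [hv0 a b (Or.inl h1), hv0 (a-1) b (Or.inl (by omega)), hv0 a (b-1) (Or.inl h1)]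
      simp
    rcases lt_or_ge b 1 with h2 | h2
    · rw [hv0 a b (Or.inr (Or.inr (Or.inl h2))),
        hv0 (a-1) b (Or.inr (Or.inr (Or.inl h2))),
        hv0 a (b-1) (Or.inr (Or.inr (Or.inl (by omega))))]
      simp
    exact hN a b h1 ha h2 hb
  intro k
  induction k with
  | zero => intro i j hi hj; simp
  | succ k ih =>
    intro i j hi hj
    rw [pow_succ, Module.End.mul_apply, hstep i j hi hj, map_add,
      ih (i-1) j (by omega) hj, ih i (j-1) hi (by omega)]
    rw [show k + 1 + 1 = k + 2 from rfl,
      sum_pascal (fun t => v (i - t) (j - (k+1 : ℕ) + t)) k]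
    congr 1
    · apply Finset.sum_congr rfl
      intro t ht
      congr 1 <;> push_cast <;> ring
    · apply Finset.sum_congr rfl
      intro t ht
      congr 1 <;> push_cast <;> ring


/-- For 1 ≤ r < s ≤ m+n−1, N^{s−r}(D_s) ⊆ D_r, and the matrix of
N^{s−r} : D_s → D_r with respect to the ordered bases B_s and B_r has (i,j)-entry
the image in F of C(s−r, m_s−m_r+j−i), where m_r = max(1, r+1−n), M_r = min(r, m)
and B_r = (v_{m_r+i-1, r+1-(m_r+i-1)})_{i=1,…,M_r−m_r+1}. -/
theorem stmt_8 (F : Type*) [Field F] (m n : ℕ) (hm : 0 < m) (hmn : m ≤ n)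
    (V : Type*) [AddCommGroup V] [Module F V]
    (v : ℤ → ℤ → V)
    (hv_indep : LinearIndependent F
      (fun p : Fin m × Fin n => v (((p.1 : ℕ) + 1 : ℕ) : ℤ) (((p.2 : ℕ) + 1 : ℕ) : ℤ)))
    (hv_span : Submodule.span F
      (Set.range (fun p : Fin m × Fin n =>
        v (((p.1 : ℕ) + 1 : ℕ) : ℤ) (((p.2 : ℕ) + 1 : ℕ) : ℤ))) = ⊤)
    (hv0 : ∀ i j : ℤ, (i < 1 ∨ (m : ℤ) < i ∨ j < 1 ∨ (n : ℤ) < j) → v i j = 0)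
    (N : V →ₗ[F] V)
    (hN : ∀ i j : ℤ, 1 ≤ i → i ≤ (m : ℤ) → 1 ≤ j → j ≤ (n : ℤ) →
      N (v i j) = v (i - 1) j + v i (j - 1))
    (D : ℤ → Submodule F V)
    (hD : ∀ k : ℤ, D k = Submodule.span F
      {z | ∃ i j : ℤ, 1 ≤ i ∧ i ≤ (m : ℤ) ∧ 1 ≤ j ∧ j ≤ (n : ℤ) ∧ i + j = k + 1 ∧ z = v i j})
    (r s : ℤ) (hr : 1 ≤ r) (hrs : r < s) (hs : s ≤ (m : ℤ) + n - 1) :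
    (∀ z ∈ D s, (N ^ (s - r).toNat) z ∈ D r) ∧
      (∀ j : ℤ, 1 ≤ j → j ≤ min s (m : ℤ) - max 1 (s + 1 - (n : ℤ)) + 1 →
        (N ^ (s - r).toNat)
            (v (max 1 (s + 1 - (n : ℤ)) + j - 1) (s + 1 - (max 1 (s + 1 - (n : ℤ)) + j - 1))) =
          ∑ i ∈ Finset.Icc (1 : ℤ) (min r (m : ℤ) - max 1 (r + 1 - (n : ℤ)) + 1),
            (icho (s - r) (max 1 (s + 1 - (n : ℤ)) - max 1 (r + 1 - (n : ℤ)) + j - i) : F) •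
              v (max 1 (r + 1 - (n : ℤ)) + i - 1)
                (r + 1 - (max 1 (r + 1 - (n : ℤ)) + i - 1))) := by
  have hk : (((s - r).toNat : ℕ) : ℤ) = s - r := Int.toNat_of_nonneg (by omega)
  set k := (s - r).toNat with hkdef
  constructor
  · intro z hz
    rw [hD] at hz ⊢
    induction hz using Submodule.span_induction with
    | mem x hx =>
      obtain ⟨i, j, hi1, him, hj1, hjn, hsum, rfl⟩ := hx
      rw [aux_pow m n v hv0 N hN k i j him hjn]
      apply Submodule.sum_mem
      intro t ht
      apply Submodule.smul_mem
      by_cases hb : 1 ≤ i - (t : ℤ) ∧ i - (t : ℤ) ≤ (m : ℤ) ∧ 1 ≤ j - (k : ℤ) + t ∧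
          j - (k : ℤ) + t ≤ (n : ℤ)
      · exact Submodule.subset_span
          ⟨i - t, j - k + t, hb.1, hb.2.1, hb.2.2.1, hb.2.2.2, by omega, rfl⟩
      · rw [hv0 (i - t) (j - k + t) (by omega)]
        exact Submodule.zero_mem _
    | zero => simpa using Submodule.zero_mem _
    | add x y hx hy ihx ihy => rw [map_add]; exact Submodule.add_mem _ ihx ihy
    | smul a x hx ihx => rw [map_smul]; exact Submodule.smul_mem _ a ihx
  · intro j hj1 hj2
    set ms := max 1 (s + 1 - (n : ℤ)) with hms
    set mr := max 1 (r + 1 - (n : ℤ)) with hmr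
    set Mr := min r (m : ℤ) with hMrd
    set i0 := ms + j - 1 with hi0
    have him : i0 ≤ (m : ℤ) := by omega
    have hjn : s + 1 - i0 ≤ (n : ℤ) := by omega
    rw [aux_pow m n v hv0 N hN k i0 (s + 1 - i0) him hjn]
    have key1 : ∑ t ∈ Finset.range (k+1), ((k.choose t : ℤ) : F) • v (i0 - t) (s + 1 - i0 - k + t)
        = ∑ a ∈ Finset.Icc (i0 - k) i0, (icho (s - r) (i0 - a) : F) • v a (r + 1 - a) := by
      apply Finset.sum_nbij' (fun t : ℕ => i0 - (t : ℤ)) (fun a : ℤ => (i0 - a).toNat)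
      · intro t ht; simp only [Finset.mem_range] at ht; simp only [Finset.mem_Icc]; omega
      · intro a ha; simp only [Finset.mem_Icc] at ha; simp only [Finset.mem_range]; omega
      · intro t ht; simp
      · intro a ha; simp only [Finset.mem_Icc] at ha; omega
      · intro t ht
        simp only [Finset.mem_range] at ht
        have h1 : icho (s - r) (i0 - (i0 - (t : ℤ))) = (k.choose t : ℤ) := by
          rw [show i0 - (i0 - (t : ℤ)) = (t : ℤ) by ring, icho, if_pos (by omega),
            Int.toNat_natCast, ← hkdef]
        rw [h1]
        have h2 : s + 1 - i0 - (k : ℤ) + t = r + 1 - (i0 - t) := by omega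
        rw [h2]
    have key2 : ∑ i ∈ Finset.Icc (1 : ℤ) (Mr - mr + 1),
          (icho (s - r) (ms - mr + j - i) : F) • v (mr + i - 1) (r + 1 - (mr + i - 1))
        = ∑ a ∈ Finset.Icc mr Mr, (icho (s - r) (i0 - a) : F) • v a (r + 1 - a) := by
      apply Finset.sum_nbij' (fun i : ℤ => mr + i - 1) (fun a : ℤ => a - mr + 1)
      · intro t ht; simp only [Finset.mem_Icc] at ht ⊢; omega
      · intro a ha; simp only [Finset.mem_Icc] at ha ⊢; omega
      · intro t ht; ring
      · intro a ha; ring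
      · intro t ht
        have h1 : ms - mr + j - t = i0 - (mr + t - 1) := by omega
        rw [h1]
    rw [key1, key2]
    have e2 : ∑ a ∈ Finset.Icc (i0 - (k:ℤ)) i0, (icho (s - r) (i0 - a) : F) • v a (r + 1 - a)
        = ∑ a ∈ Finset.Icc (min (i0 - (k:ℤ)) mr) (max i0 Mr),
            (icho (s - r) (i0 - a) : F) • v a (r + 1 - a) := by
      apply Finset.sum_subset (Finset.Icc_subset_Icc (by omega) (by omega))
      intro a ha hna
      simp only [Finset.mem_Icc] at ha hna
      have h0 : icho (s - r) (i0 - a) = 0 := by rw [icho, if_neg (by omega)]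
      rw [h0]
      simp
    have e3 : ∑ a ∈ Finset.Icc mr Mr, (icho (s - r) (i0 - a) : F) • v a (r + 1 - a)
        = ∑ a ∈ Finset.Icc (min (i0 - (k:ℤ)) mr) (max i0 Mr),
            (icho (s - r) (i0 - a) : F) • v a (r + 1 - a) := by
      apply Finset.sum_subset (Finset.Icc_subset_Icc (by omega) (by omega))
      intro a ha hna
      simp only [Finset.mem_Icc] at ha hna
      rw [hv0 a (r + 1 - a) (by omega)]
      simp
    rw [e2, e3]
end

section
/- Let k ≥ 1 and let a, b be integers with 0 ≤ b ≤ a. Let M_ℚ be the k×k matrix over ℚ whose (i,j)-entry is the binomial coefficient C(a, b+j−i) for 1 ≤ i,j ≤ k (interpreted as 0 when b+j−i < 0 or b+j−i > a). Then det M_ℚ = ∏_{i=0}^{k−1} C(a+i, b) / C(b+i, b). -/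
section Aux
open Finset Matrix

/-- Vandermonde-type sum lemma. -/
lemma vdm (k i A t : ℕ) (hik : i < k) :
    ∑ s ∈ range k, i.choose s * (if s ≤ t then A.choose (t - s) else 0)
      = (A + i).choose t := by
  set f : ℕ → ℕ := fun s => i.choose s * (if s ≤ t then A.choose (t - s) else 0) with hf
  have hvanish : ∀ s, t < s → f s = 0 := by
    intro s hs; simp [hf, Nat.not_le.mpr hs]
  have hvanish2 : ∀ s, i < s → f s = 0 := by
    intro s hs; simp [hf, Nat.choose_eq_zero_of_lt hs]
  have e1 : ∑ s ∈ range k, f s = ∑ s ∈ range (max k (t+1)), f s := by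
    refine Finset.sum_subset (Finset.range_subset_range.mpr (le_max_left _ _)) ?_
    intro s hs hsk
    simp only [Finset.mem_range] at hs hsk
    exact hvanish2 s (by omega)
  have e2 : ∑ s ∈ range (t+1), f s = ∑ s ∈ range (max k (t+1)), f s := by
    refine Finset.sum_subset (Finset.range_subset_range.mpr (le_max_right _ _)) ?_
    intro s hs hsk
    simp only [Finset.mem_range] at hs hsk
    exact hvanish s (by omega)
  rw [e1, ← e2]
  have e3 : ∑ s ∈ range (t+1), f s = ∑ s ∈ range (t+1), i.choose s * A.choose (t - s) := by
    refine Finset.sum_congr rfl fun s hs => ?_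
    have : s ≤ t := by simpa [Nat.lt_succ_iff] using hs
    simp [hf, this]
  rw [e3, Nat.add_comm A i, Nat.add_choose_eq,
    Finset.Nat.sum_antidiagonal_eq_sum_range_succ_mk]

/-- subset-of-subset identity. -/
lemma key (A B i j : ℕ) (h : B ≤ A) :
    (A+i).choose (B+j) * (B+j).choose j = (A+i).choose B * (A-B+i).choose j := by
  rcases le_or_gt (B+j) (A+i) with hle | hlt
  · have h0 := Nat.choose_mul (n := A+i) (k := B+j) (s := B) (Nat.le_add_right _ _)
    have hsymm : (B+j).choose B = (B+j).choose j := Nat.choose_symm_add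
    rw [← hsymm, h0]
    congr 2 <;> omega
  · have h1 : (A+i).choose (B+j) = 0 := Nat.choose_eq_zero_of_lt hlt
    have h2 : (A-B+i).choose j = 0 := Nat.choose_eq_zero_of_lt (by omega)
    simp [h1, h2]

/-- Multiplying by the Pascal lower-triangular matrix. -/
lemma mulL (k A' : ℕ) (t : Fin k → ℕ)
    (W : Matrix (Fin k) (Fin k) ℚ)
    (hW : ∀ i j, W i j = if (i:ℕ) ≤ t j then ((A'.choose (t j - i) : ℚ)) else 0) :
    ∀ i j : Fin k,
      ((Matrix.of fun i s : Fin k => (((i:ℕ).choose s : ℕ) : ℚ)) * W) i j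
        = (((A' + i).choose (t j) : ℕ) : ℚ) := by
  intro i j
  rw [Matrix.mul_apply]
  have e : ∀ s : Fin k,
      (Matrix.of fun i s : Fin k => (((i:ℕ).choose s : ℕ) : ℚ)) i s * W s j
      = (((i:ℕ).choose s * (if (s:ℕ) ≤ t j then A'.choose (t j - s) else 0) : ℕ) : ℚ) := by
    intro s
    rw [hW]
    split <;> push_cast <;> simp
  rw [Finset.sum_congr rfl (fun s _ => e s)]
  rw [← Nat.cast_sum]
  norm_cast
  rw [Fin.sum_univ_eq_sum_range (fun s => (i:ℕ).choose s * (if s ≤ t j then A'.choose (t j - s) else 0)) k]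
  exact vdm k i A' (t j) i.isLt

lemma Ldet (k : ℕ) :
    (Matrix.of fun i s : Fin k => (((i:ℕ).choose s : ℕ) : ℚ)).det = 1 := by
  rw [Matrix.det_of_lowerTriangular]
  · simp
  · intro i j hij
    simp only [Matrix.of_apply]
    rw [Nat.choose_eq_zero_of_lt (by exact_mod_cast hij)]
    simp

end Aux

/-- For k ≥ 1 and integers 0 ≤ b ≤ a, the k×k rational matrix with
(i,j)-entry C(a, b+j−i) has determinant ∏_{i=0}^{k−1} C(a+i, b)/C(b+i, b). -/
theorem stmt_9 (k : ℕ) (hk : 1 ≤ k) (a b : ℤ) (hb : 0 ≤ b) (hba : b ≤ a)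
    (M : Matrix (Fin k) (Fin k) ℚ)
    (hM : ∀ i j : Fin k, M i j = (icho a (b + ((j : ℕ) : ℤ) - ((i : ℕ) : ℤ)) : ℚ)) :
    M.det = ∏ i ∈ Finset.range k, (icho (a + i) b : ℚ) / (icho (b + i) b : ℚ) := by
  set A := a.toNat with hA
  set B := b.toNat with hB
  have haA : (A : ℤ) = a := Int.toNat_of_nonneg (hb.trans hba)
  have hbB : (B : ℤ) = b := Int.toNat_of_nonneg hb
  have hBA : B ≤ A := by omega
  set L : Matrix (Fin k) (Fin k) ℚ :=
    Matrix.of fun i s : Fin k => (((i:ℕ).choose s : ℕ) : ℚ) with hL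
  -- rewrite M
  have hM' : ∀ i j : Fin k, M i j
      = if (i:ℕ) ≤ B + (j:ℕ) then ((A.choose (B + j - i) : ℕ) : ℚ) else 0 := by
    intro i j
    rw [hM]
    unfold icho
    by_cases hij : (i:ℕ) ≤ B + (j:ℕ)
    · by_cases hya : b + (j:ℕ) - (i:ℕ) ≤ a
      · rw [if_pos ⟨by omega, hya⟩, if_pos hij]
        norm_cast
        congr 2 <;> omega
      · rw [if_neg (by tauto), if_pos hij]
        rw [Nat.choose_eq_zero_of_lt (by omega)]
        simp
    · rw [if_neg (by push_neg; intro h; omega), if_neg hij]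
      simp
  -- N = L * M
  have hN : ∀ i j : Fin k, (L * M) i j = (((A + i).choose (B + j) : ℕ) : ℚ) :=
    mulL k A (fun j => B + j) M hM'
  -- P' and P
  set P' : Matrix (Fin k) (Fin k) ℚ :=
    Matrix.of (fun i j : Fin k =>
      if (i:ℕ) ≤ (j:ℕ) then (((A-B).choose ((j:ℕ) - i) : ℕ) : ℚ) else 0) with hP'
  have hP : ∀ i j : Fin k, (L * P') i j = (((A - B + i).choose (j:ℕ) : ℕ) : ℚ) :=
    mulL k (A - B) (fun j => (j:ℕ)) P' (fun i j => rfl)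
  have hP'det : P'.det = 1 := by
    rw [Matrix.det_of_upperTriangular]
    · refine Finset.prod_eq_one fun i _ => by simp [hP']
    · intro i j hij
      simp only [hP', Matrix.of_apply]
      have hji : ¬((i:ℕ) ≤ (j:ℕ)) := Nat.not_le.mpr hij
      rw [if_neg hji]
  have hPdet : (L * P').det = 1 := by
    rw [Matrix.det_mul, Ldet, hP'det, one_mul]
  -- diagonal factorization
  set d1 : Fin k → ℚ := fun i => (((A + i).choose B : ℕ) : ℚ) with hd1
  set d2 : Fin k → ℚ := fun j => ((((B + j).choose (j:ℕ) : ℕ) : ℚ))⁻¹ with hd2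
  have hfac : L * M = Matrix.diagonal d1 * (L * P') * Matrix.diagonal d2 := by
    ext i j
    rw [Matrix.mul_diagonal, Matrix.diagonal_mul, hN, hP]
    have hne : (((B + j).choose (j:ℕ) : ℕ) : ℚ) ≠ 0 := by
      have := Nat.choose_pos (Nat.le_add_left (j:ℕ) B)
      exact_mod_cast this.ne'
    simp only [hd1, hd2]
    rw [inv_eq_one_div, mul_one_div, eq_div_iff hne]
    exact_mod_cast key A B i j hBA
  have hdetM : M.det = (∏ i, d1 i) * (∏ j, d2 j) := by
    have h1 : (L * M).det = M.det := by
      rw [Matrix.det_mul, hL, Ldet k, one_mul]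
    rw [← h1, hfac, Matrix.det_mul, Matrix.det_mul, hPdet, Matrix.det_diagonal,
      Matrix.det_diagonal]
    ring
  rw [hdetM, ← Finset.prod_mul_distrib]
  simp only [hd1, hd2]
  rw [Fin.prod_univ_eq_prod_range
    (fun n => (((A+n).choose B : ℕ) : ℚ) * ((((B+n).choose n : ℕ) : ℚ))⁻¹) k]
  refine Finset.prod_congr rfl fun n hn => ?_
  have h1 : icho (a + n) b = (((A+n).choose B : ℕ) : ℤ) := by
    unfold icho
    rw [if_pos ⟨hb, by omega⟩]
    have e1 : (a + (n:ℤ)).toNat = A + n := by omega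
    have e2 : b.toNat = B := rfl
    rw [e1, e2]
  have h2 : icho (b + n) b = (((B+n).choose B : ℕ) : ℤ) := by
    unfold icho
    rw [if_pos ⟨hb, by omega⟩]
    have e1 : (b + (n:ℤ)).toNat = B + n := by omega
    have e2 : b.toNat = B := rfl
    rw [e1, e2]
  rw [h1, h2, div_eq_mul_inv]
  have e3 : (B+n).choose n = (B+n).choose B := Nat.choose_symm_add.symm
  rw [e3]
  norm_cast
end

section
/- Let k ≥ 1 and let a, b be integers with 0 ≤ b ≤ a. Then ∏_{i=0}^{k−1} C(b+i, b) divides ∏_{i=0}^{k−1} C(a+i, b) in ℤ; equivalently, the rational number d_k = ∏_{i=0}^{k−1} C(a+i, b)/C(b+i, b) is an integer. -/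
open Finset

lemma shift_mod_injOn {m c : ℕ} {i j : ℕ} (hi : i < m) (hj : j < m)
    (h : (c + i) % m = (c + j) % m) : i = j :=
  (Nat.ModEq.add_left_cancel' c h).eq_of_lt_of_lt hi hj

/-- In a full window of length `m`, exactly `m - s` elements have residue `≥ s`. -/
lemma win_full {m : ℕ} (hm : 0 < m) (s c : ℕ) :
    ((range m).filter fun i => s ≤ (c + i) % m).card = m - s := by
  classical
  set f : ℕ → ℕ := fun i => (c + i) % m with hf
  have hinj : Set.InjOn f (range m) := by
    intro i hi j hj h
    exact shift_mod_injOn (mem_range.1 hi) (mem_range.1 hj) h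
  have himg : (range m).image f = range m := by
    apply Finset.eq_of_subset_of_card_le
    · intro x hx
      simp only [mem_image] at hx
      obtain ⟨i, _, rfl⟩ := hx
      exact mem_range.2 (Nat.mod_lt _ hm)
    · rw [Finset.card_image_of_injOn hinj]
  have h1 : ((range m).filter fun i => s ≤ f i).image f
      = (range m).filter fun r => s ≤ r := by
    conv_rhs => rw [← himg]
    rw [Finset.filter_image]
  have h2 : (((range m).filter fun i => s ≤ f i).image f).card
      = ((range m).filter fun i => s ≤ f i).card :=
    Finset.card_image_of_injOn (hinj.mono (by intro x hx; exact mem_coe.2 (mem_filter.1 hx).1))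
  have h3 : ((range m).filter fun r => s ≤ r) = Finset.Ico s m := by
    ext r; simp [and_comm]
  rw [← h2, h1, h3, Nat.card_Ico]

/-- In any window of length `k ≤ m`, at least `k - s` elements have residue `≥ s`. -/
lemma win_short {m : ℕ} (hm : 0 < m) (s c : ℕ) {k : ℕ} (hk : k ≤ m) :
    k - s ≤ ((range k).filter fun i => s ≤ (c + i) % m).card := by
  have hsplit := Finset.card_filter_add_card_filter_not
    (s := range k) (p := fun i => s ≤ (c + i) % m)
  have hbad : ((range k).filter fun i => ¬ s ≤ (c + i) % m).card ≤ s := by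
    have hsub : (((range k).filter fun i => ¬ s ≤ (c + i) % m).image fun i => (c + i) % m)
        ⊆ range s := by
      intro x hx
      simp only [mem_image, mem_filter, not_le] at hx
      obtain ⟨i, ⟨_, hi2⟩, rfl⟩ := hx
      exact mem_range.2 hi2
    have hcard := Finset.card_le_card hsub
    rwa [Finset.card_image_of_injOn (fun i hi j hj h =>
      shift_mod_injOn (lt_of_lt_of_le (mem_range.1 (mem_filter.1 hi).1) hk)
        (lt_of_lt_of_le (mem_range.1 (mem_filter.1 hj).1) hk) h),
      Finset.card_range] at hcard
  rw [Finset.card_range] at hsplit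
  omega

/-- The initial window minimizes the count of large residues. -/
lemma win_main {m : ℕ} (hm : 0 < m) (s : ℕ) (hs : s ≤ m) (c : ℕ) : ∀ k : ℕ,
    ((range k).filter fun i => s ≤ i % m).card
      ≤ ((range k).filter fun i => s ≤ (c + i) % m).card := by
  intro k
  induction k using Nat.strong_induction_on with
  | _ k ih =>
    rcases le_or_gt k m with hk | hk
    · -- short window
      have hL : ((range k).filter fun i => s ≤ i % m).card = k - s := by
        have : ((range k).filter fun i => s ≤ i % m)
            = (range k).filter fun i => s ≤ i := by
          apply Finset.filter_congr
          intro i hi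
          rw [Nat.mod_eq_of_lt (lt_of_lt_of_le (mem_range.1 hi) hk)]
        rw [this]
        have h3 : ((range k).filter fun i => s ≤ i) = Finset.Ico s k := by
          ext r; simp [and_comm]
        rw [h3, Nat.card_Ico]
      rw [hL]
      exact win_short hm s c hk
    · -- split off a full period
      obtain ⟨t, rfl⟩ : ∃ t, k = m + t := ⟨k - m, by omega⟩
      have key : ∀ c' : ℕ,
          ((range (m + t)).filter fun i => s ≤ (c' + i) % m).card
            = (m - s) + ((range t).filter fun i => s ≤ (c' + i) % m).card := by
        intro c'
        rw [Finset.range_add, Finset.filter_union, Finset.card_union_of_disjoint]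
        · congr 1
          · exact win_full hm s c'
          · rw [Finset.filter_map, Finset.card_map]
            congr 1
            apply Finset.filter_congr
            intro i _
            have : c' + (m + i) = m + (c' + i) := by ring
            simp [Function.comp, addLeftEmbedding, this, Nat.add_mod_left]
        · exact Finset.disjoint_filter_filter (Finset.disjoint_left.2 (by
            intro x hx hx2
            obtain ⟨i, -, rfl⟩ := Finset.mem_map.1 hx2
            simp only [addLeftEmbedding_apply, mem_range] at hx
            omega))
      have h0 := key 0
      have hc := key c
      simp only [Nat.zero_add] at h0
      rw [h0, hc]
      have := ih t (by omega)
      omega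

/-- Kummer's carry formula at the `factorization` level. -/
lemma fact_choose {p n k B : ℕ} (hp : p.Prime) (hkn : k ≤ n) (hnB : Nat.log p n < B) :
    (n.choose k).factorization p
      = ((Finset.Ico 1 B).filter fun t => p ^ t ≤ k % p ^ t + (n - k) % p ^ t).card := by
  have hpos := Nat.choose_pos hkn
  have hfin : FiniteMultiplicity p (n.choose k) :=
    Nat.finiteMultiplicity_iff.2 ⟨hp.ne_one, hpos⟩
  have h := hp.emultiplicity_choose hkn hnB
  rw [hfin.emultiplicity_eq_multiplicity,
    Nat.multiplicity_eq_factorization hp hpos.ne'] at h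
  exact_mod_cast h

/-- Per-prime comparison of valuations of the two products. -/
lemma key_ineq (p : ℕ) (hp : p.Prime) (k a b : ℕ) (hba : b ≤ a) :
    ∑ i ∈ Finset.range k, ((b + i).choose b).factorization p
      ≤ ∑ i ∈ Finset.range k, ((a + i).choose b).factorization p := by
  set B := Nat.log p (a + k) + 1 with hB
  have hlog : ∀ i ∈ range k, Nat.log p (a + i) < B := fun i hi => by
    have : a + i ≤ a + k := by have := mem_range.1 hi; omega
    exact Nat.lt_succ_of_le (Nat.log_mono_right this)
  have hlog' : ∀ i ∈ range k, Nat.log p (b + i) < B := fun i hi => by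
    have : b + i ≤ a + k := by have := mem_range.1 hi; omega
    exact Nat.lt_succ_of_le (Nat.log_mono_right this)
  have e1 : ∀ i ∈ range k, ((a + i).choose b).factorization p
      = ((Finset.Ico 1 B).filter fun t => p ^ t ≤ b % p ^ t + ((a - b) + i) % p ^ t).card :=
    fun i hi => by
      have h := fact_choose hp (le_trans hba (Nat.le_add_right a i)) (hlog i hi)
      rwa [show a + i - b = (a - b) + i by omega] at h
  have e2 : ∀ i ∈ range k, ((b + i).choose b).factorization p
      = ((Finset.Ico 1 B).filter fun t => p ^ t ≤ b % p ^ t + i % p ^ t).card :=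
    fun i hi => by
      have h := fact_choose hp (Nat.le_add_right b i) (hlog' i hi)
      rwa [show b + i - b = i by omega] at h
  rw [Finset.sum_congr rfl e1, Finset.sum_congr rfl e2]
  simp only [Finset.card_filter]
  rw [Finset.sum_comm, Finset.sum_comm (s := range k)]
  apply Finset.sum_le_sum
  intro t ht
  have hm : 0 < p ^ t := pow_pos hp.pos t
  set m := p ^ t with hmdef
  set s := m - b % m with hs
  have hbm : b % m < m := Nat.mod_lt _ hm
  have hcond : ∀ x : ℕ, (m ≤ b % m + x % m) ↔ (s ≤ x % m) := fun x => by omega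
  have main := win_main hm s (by omega) (a - b) k
  simp only [Finset.card_filter] at main
  calc (∑ i ∈ range k, if m ≤ b % m + i % m then (1 : ℕ) else 0)
      = ∑ i ∈ range k, if s ≤ i % m then (1 : ℕ) else 0 := by
        apply Finset.sum_congr rfl; intro i _; simp only [hcond]
    _ ≤ ∑ i ∈ range k, if s ≤ ((a - b) + i) % m then (1 : ℕ) else 0 := main
    _ = ∑ i ∈ range k, if m ≤ b % m + ((a - b) + i) % m then (1 : ℕ) else 0 := by
        apply Finset.sum_congr rfl; intro i _; simp only [hcond]

lemma nat_dvd_prod (k a b : ℕ) (hba : b ≤ a) :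
    (∏ i ∈ Finset.range k, (b + i).choose b) ∣ (∏ i ∈ Finset.range k, (a + i).choose b) := by
  have hne1 : ∀ i ∈ range k, (b + i).choose b ≠ 0 :=
    fun i _ => (Nat.choose_pos (Nat.le_add_right b i)).ne'
  have hne2 : ∀ i ∈ range k, (a + i).choose b ≠ 0 :=
    fun i _ => (Nat.choose_pos (le_trans hba (Nat.le_add_right a i))).ne'
  have h1 : (∏ i ∈ range k, (b + i).choose b) ≠ 0 := Finset.prod_ne_zero_iff.2 hne1
  have h2 : (∏ i ∈ range k, (a + i).choose b) ≠ 0 := Finset.prod_ne_zero_iff.2 hne2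
  rw [← Nat.factorization_le_iff_dvd h1 h2,
    Nat.factorization_prod hne1, Nat.factorization_prod hne2]
  intro p
  rw [Finset.sum_apply', Finset.sum_apply']
  by_cases hp : p.Prime
  · exact key_ineq p hp k a b hba
  · simp [Nat.factorization_eq_zero_of_not_prime _ hp]

/-- For k ≥ 1 and 0 ≤ b ≤ a, ∏_{i=0}^{k−1} C(b+i, b) divides
∏_{i=0}^{k−1} C(a+i, b) in ℤ; equivalently, d_k = ∏_{i=0}^{k−1} C(a+i,b)/C(b+i,b) ∈ ℤ. -/
theorem stmt_10 (k : ℕ) (hk : 1 ≤ k) (a b : ℕ) (hba : b ≤ a) :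
    (∏ i ∈ Finset.range k, ((b + i).choose b : ℤ)) ∣
        (∏ i ∈ Finset.range k, ((a + i).choose b : ℤ)) ∧
      ∃ d : ℤ, (d : ℚ) =
        ∏ i ∈ Finset.range k, ((a + i).choose b : ℚ) / ((b + i).choose b : ℚ) := by
  have hdvd := nat_dvd_prod k a b hba
  have h1 : (∏ i ∈ range k, (b + i).choose b) ≠ 0 :=
    Finset.prod_ne_zero_iff.2 fun i _ => (Nat.choose_pos (Nat.le_add_right b i)).ne'
  constructor
  · rw [← Nat.cast_prod, ← Nat.cast_prod]
    exact_mod_cast hdvd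
  · refine ⟨(((∏ i ∈ range k, (a + i).choose b) / (∏ i ∈ range k, (b + i).choose b) : ℕ) : ℤ), ?_⟩
    rw [Finset.prod_div_distrib, ← Nat.cast_prod, ← Nat.cast_prod,
      ← Nat.cast_div hdvd (by exact_mod_cast h1 : ((∏ i ∈ range k, (b + i).choose b : ℕ) : ℚ) ≠ 0)]
    norm_cast
end

section
/- There exist a permutation π of {1,…,m} and elements z_i ∈ D_{m+n−i} for 1 ≤ i ≤ m such that, for each i, the span of N^{m+n−i−π(i)}(z_i) equals the span of x_{π(i)}; in particular N^{m+n−i−π(i)}(z_i) is a nonzero scalar multiple of x_{π(i)}. -/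
open Submodule Module

open Submodule Module

lemma two_flags {F V : Type*} [Field F] [AddCommGroup V] [Module F V] [FiniteDimensional F V]
    {m : ℕ} (W G : ℕ → Submodule F V)
    (hW : ∀ i, i < m → W i ≤ W (i+1)) (hG : ∀ j, j < m → G j ≤ G (j+1))
    (hWG : W m = G m)
    (hWd : ∀ i, i ≤ m → finrank F (W i) = i) (hGd : ∀ j, j ≤ m → finrank F (G j) = j) :
    ∃ π : Equiv.Perm (Fin m), ∀ i : Fin m, ∃ w : V,
      w ∈ W ((i : ℕ)+1) ∧ w ∈ G ((π i : ℕ) + 1) ∧ w ∉ G (π i) := by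
  have chainW : ∀ b : ℕ, b ≤ m → ∀ a : ℕ, a ≤ b → W a ≤ W b := by
    intro b
    induction b with
    | zero => intro _ a ha; exact le_of_eq (congrArg W (Nat.le_zero.mp ha))
    | succ b ih =>
      intro hbm a ha
      rcases Nat.eq_or_lt_of_le ha with h | h
      · exact le_of_eq (congrArg W h)
      · exact le_trans (ih (by omega) a (by omega)) (hW b (by omega))
  have chainG : ∀ b : ℕ, b ≤ m → ∀ a : ℕ, a ≤ b → G a ≤ G b := by
    intro b
    induction b with
    | zero => intro _ a ha; exact le_of_eq (congrArg G (Nat.le_zero.mp ha))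
    | succ b ih =>
      intro hbm a ha
      rcases Nat.eq_or_lt_of_le ha with h | h
      · exact le_of_eq (congrArg G h)
      · exact le_trans (ih (by omega) a (by omega)) (hG b (by omega))
  set r : ℕ → ℕ → ℕ := fun i j => finrank F ↥(W i ⊓ G j) with hr
  have hG0 : G 0 = ⊥ := Submodule.finrank_eq_zero.mp (hGd 0 (by omega))
  have hrj0 : ∀ i, r i 0 = 0 := by
    intro i; simp [hr, hG0]
  have hrm : ∀ i, i ≤ m → r i m = i := by
    intro i hi
    have h1 : W i ≤ G m := hWG ▸ chainW m le_rfl i hi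
    show finrank F ↥(W i ⊓ G m) = i
    rw [inf_eq_left.mpr h1]
    exact hWd i hi
  have hrmono : ∀ i j j', j ≤ j' → j' ≤ m → r i j ≤ r i j' := by
    intro i j j' h h'
    exact Submodule.finrank_mono (inf_le_inf le_rfl (chainG j' h' j h))
  have hstep : ∀ i j, j < m → r i (j+1) ≤ r i j + 1 := by
    intro i j hj
    have key := Submodule.finrank_sup_add_finrank_inf_eq (W i ⊓ G (j+1)) (G j)
    have h1 : (W i ⊓ G (j+1)) ⊓ G j = W i ⊓ G j := by
      rw [inf_assoc, inf_eq_right.mpr (hG j hj)]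
    have h2 : (W i ⊓ G (j+1)) ⊔ G j ≤ G (j+1) := sup_le inf_le_right (hG j hj)
    have h3 : finrank F ↥((W i ⊓ G (j+1)) ⊔ G j) ≤ j + 1 := by
      have := Submodule.finrank_mono h2
      rw [hGd (j+1) (by omega)] at this; exact this
    rw [h1] at key
    have h4 : finrank F ↥(G j) = j := hGd j (by omega)
    rw [h4] at key
    simp only [hr] at key ⊢
    omega
  have F6 : ∀ i j, i < m → j < m → r i j < r i (j+1) → r (i+1) j < r (i+1) (j+1) := by
    intro i j hi hjm hlt
    have hle : W i ⊓ G j ≤ W i ⊓ G (j+1) := inf_le_inf le_rfl (hG j hjm)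
    have hne : W i ⊓ G j ≠ W i ⊓ G (j+1) := by
      intro h
      simp only [hr] at hlt
      rw [h] at hlt
      exact lt_irrefl _ hlt
    obtain ⟨-, w, hw1, hw2⟩ := SetLike.lt_iff_le_and_exists.mp (lt_of_le_of_ne hle hne)
    have hwW : w ∈ W i := hw1.1
    have hwG : w ∈ G (j+1) := hw1.2
    have hwnG : w ∉ G j := fun h => hw2 ⟨hwW, h⟩
    have hlt2 : W (i+1) ⊓ G j < W (i+1) ⊓ G (j+1) := by
      rw [SetLike.lt_iff_le_and_exists]
      exact ⟨inf_le_inf le_rfl (hG j hjm), w, ⟨hW i hi hwW, hwG⟩, fun h => hwnG h.2⟩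
    exact Submodule.finrank_lt_finrank_of_lt hlt2
  classical
  set S : ℕ → Finset ℕ := fun i => (Finset.range m).filter (fun j => r i j < r i (j+1)) with hS
  have hcard : ∀ i, i ≤ m → (S i).card = i := by
    intro i hi
    have count : ∀ M, M ≤ m →
        (∑ j ∈ Finset.range M, if r i j < r i (j+1) then 1 else 0) = r i M := by
      intro M
      induction M with
      | zero => intro _; simp [hrj0 i]
      | succ M ih =>
        intro hM
        rw [Finset.sum_range_succ, ih (by omega)]
        have h1 := hstep i M (by omega)
        have h2 := hrmono i M (M+1) (by omega) (by omega)
        split_ifs with h <;> omega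
    rw [hS, Finset.card_filter, count m le_rfl, hrm i hi]
  have hSmono : ∀ b : ℕ, b ≤ m → ∀ a : ℕ, a ≤ b → S a ⊆ S b := by
    intro b
    induction b with
    | zero => intro _ a ha; rw [Nat.le_zero.mp ha]
    | succ b ih =>
      intro hbm a ha
      rcases Nat.eq_or_lt_of_le ha with h | h
      · rw [h]
      · refine subset_trans (ih (by omega) a (by omega)) ?_
        intro j hj
        rw [hS, Finset.mem_filter] at hj ⊢
        exact ⟨hj.1, F6 b j (by omega) (Finset.mem_range.mp hj.1) hj.2⟩
  have hTne : ∀ i : Fin m, (S ((i:ℕ)+1) \ S i).Nonempty := by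
    intro i
    rw [← Finset.card_pos, Finset.card_sdiff_of_subset (hSmono ((i:ℕ)+1) i.2 i (by omega))]
    rw [hcard _ i.2.le, hcard _ (by omega)]
    omega
  set jf : Fin m → ℕ := fun i => (S ((i:ℕ)+1) \ S i).min' (hTne i) with hjf
  have hjmem : ∀ i : Fin m, jf i ∈ S ((i:ℕ)+1) ∧ jf i ∉ S i := by
    intro i
    have := Finset.min'_mem _ (hTne i)
    rw [Finset.mem_sdiff] at this
    exact this
  have hjlt : ∀ i : Fin m, jf i < m := by
    intro i
    have := (hjmem i).1
    rw [hS, Finset.mem_filter, Finset.mem_range] at this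
    exact this.1
  set π0 : Fin m → Fin m := fun i => ⟨jf i, hjlt i⟩ with hπ0
  have hinj : Function.Injective π0 := by
    intro a b hab
    by_contra hne
    have h1 : jf a = jf b := congrArg Fin.val hab
    rcases Nat.lt_or_ge (a:ℕ) (b:ℕ) with h | h
    · have : jf a ∈ S (b:ℕ) := hSmono (b:ℕ) b.2.le ((a:ℕ)+1) (by omega) (hjmem a).1
      rw [h1] at this
      exact (hjmem b).2 this
    · have hba : (b:ℕ) < (a:ℕ) := by
        rcases Nat.eq_or_lt_of_le h with h' | h'
        · exact absurd (Fin.ext h'.symm) hne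
        · exact h'
      have : jf b ∈ S (a:ℕ) := hSmono (a:ℕ) a.2.le ((b:ℕ)+1) (by omega) (hjmem b).1
      rw [← h1] at this
      exact (hjmem a).2 this
  refine ⟨Equiv.ofBijective π0 (Finite.injective_iff_bijective.mp hinj), ?_⟩
  intro i
  have hji : jf i ∈ S ((i:ℕ)+1) := (hjmem i).1
  rw [hS, Finset.mem_filter] at hji
  obtain ⟨hjr, hjump⟩ := hji
  set j := jf i
  have hle : W ((i:ℕ)+1) ⊓ G j ≤ W ((i:ℕ)+1) ⊓ G (j+1) :=
    inf_le_inf le_rfl (hG j (Finset.mem_range.mp hjr))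
  have hne : W ((i:ℕ)+1) ⊓ G j ≠ W ((i:ℕ)+1) ⊓ G (j+1) := by
    intro h
    simp only [hr] at hjump
    rw [h] at hjump
    exact lt_irrefl _ hjump
  obtain ⟨-, w, hw1, hw2⟩ := SetLike.lt_iff_le_and_exists.mp (lt_of_le_of_ne hle hne)
  refine ⟨w, hw1.1, ?_, fun h => hw2 ⟨hw1.1, h⟩⟩
  show w ∈ G ((π0 i : ℕ) + 1)
  exact hw1.2


/-- There exist a permutation π of {1,…,m} and z_i ∈ D_{m+n−i} such that
span(N^{m+n−i−π(i)}(z_i)) = span(x_{π(i)}); in particular N^{m+n−i−π(i)}(z_i) is a nonzero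
scalar multiple of x_{π(i)}. -/
theorem stmt_12 (F : Type*) [Field F] (m n : ℕ) (hm : 0 < m) (hmn : m ≤ n)
    (V : Type*) [AddCommGroup V] [Module F V]
    (v : ℤ → ℤ → V)
    (hv_indep : LinearIndependent F
      (fun p : Fin m × Fin n => v (((p.1 : ℕ) + 1 : ℕ) : ℤ) (((p.2 : ℕ) + 1 : ℕ) : ℤ)))
    (hv_span : Submodule.span F
      (Set.range (fun p : Fin m × Fin n =>
        v (((p.1 : ℕ) + 1 : ℕ) : ℤ) (((p.2 : ℕ) + 1 : ℕ) : ℤ))) = ⊤)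
    (hv0 : ∀ i j : ℤ, (i < 1 ∨ (m : ℤ) < i ∨ j < 1 ∨ (n : ℤ) < j) → v i j = 0)
    (N : V →ₗ[F] V)
    (hN : ∀ i j : ℤ, 1 ≤ i → i ≤ (m : ℤ) → 1 ≤ j → j ≤ (n : ℤ) →
      N (v i j) = v (i - 1) j + v i (j - 1))
    (D : ℤ → Submodule F V)
    (hD : ∀ k : ℤ, D k = Submodule.span F
      {z | ∃ i j : ℤ, 1 ≤ i ∧ i ≤ (m : ℤ) ∧ 1 ≤ j ∧ j ≤ (n : ℤ) ∧ i + j = k + 1 ∧ z = v i j})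
    (x : ℤ → V)
    (hx : ∀ i : ℤ, x i =
      ∑ j ∈ Finset.Icc (1 : ℤ) i, ((-1 : F) ^ (j - 1).toNat) • v j (i + 1 - j)) :
    ∃ (π : Equiv.Perm (Fin m)) (z : Fin m → V),
      ∀ i : Fin m,
        z i ∈ D ((m : ℤ) + n - ((i : ℕ) + 1)) ∧
        Submodule.span F {(N ^ (m + n - ((i : ℕ) + 1) - ((π i : ℕ) + 1))) (z i)} =
          Submodule.span F {x (((π i : ℕ) + 1 : ℕ) : ℤ)} ∧
        ∃ c : F, c ≠ 0 ∧
          (N ^ (m + n - ((i : ℕ) + 1) - ((π i : ℕ) + 1))) (z i) =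
            c • x (((π i : ℕ) + 1 : ℕ) : ℤ) := by
  classical
  have hB0 : ⊤ ≤ Submodule.span F (Set.range fun p : Fin m × Fin n =>
      v (((p.1 : ℕ) + 1 : ℕ) : ℤ) (((p.2 : ℕ) + 1 : ℕ) : ℤ)) := hv_span.ge
  set B : Basis (Fin m × Fin n) F V := Basis.mk hv_indep hB0 with hBdef
  haveI : FiniteDimensional F V := Module.Finite.of_basis B
  set E : ℕ → ℕ → V := fun a b => v ((a : ℤ) + 1) ((b : ℤ) + 1) with hE
  have hEB : ∀ (a b : ℕ) (ha : a < m) (hb : b < n), E a b = B (⟨a, ha⟩, ⟨b, hb⟩) := by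
    intro a b ha hb
    rw [hBdef, Basis.mk_apply]
    simp only [hE]
    norm_cast
  have hE0 : ∀ a b : ℕ, m ≤ a ∨ n ≤ b → E a b = 0 := by
    intro a b h
    apply hv0
    rcases h with h | h
    · right; left; push_cast; omega
    · right; right; right; push_cast; omega
  have hEN : ∀ a b : ℕ, a < m → b < n →
      N (E a b) = (if a = 0 then 0 else E (a - 1) b) + (if b = 0 then 0 else E a (b - 1)) := by
    intro a b ha hb
    rw [hE]
    simp only
    rw [hN ((a : ℤ) + 1) ((b : ℤ) + 1) (by omega) (by push_cast; omega) (by omega)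
      (by push_cast; omega)]
    congr 1
    · rcases Nat.eq_zero_or_pos a with h | h
      · subst h
        rw [if_pos rfl]
        apply hv0; left; omega
      · rw [if_neg (by omega)]
        have : ((a : ℤ) + 1 - 1) = ((a - 1 : ℕ) : ℤ) + 1 := by push_cast [Nat.cast_sub h]; ring
        rw [this]
    · rcases Nat.eq_zero_or_pos b with h | h
      · subst h
        rw [if_pos rfl]
        apply hv0; right; right; left; omega
      · rw [if_neg (by omega)]
        have : ((b : ℤ) + 1 - 1) = ((b - 1 : ℕ) : ℤ) + 1 := by push_cast [Nat.cast_sub h]; ring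
        rw [this]
  have reprE : ∀ (a b : ℕ) (ha : a < m) (hb : b < n) (q : Fin m × Fin n),
      B.repr (E a b) q = if ((q.1 : ℕ) = a ∧ (q.2 : ℕ) = b) then 1 else 0 := by
    intro a b ha hb q
    rw [hEB a b ha hb, B.repr_self, Finsupp.single_apply]
    have hiff : ((⟨⟨a, ha⟩, ⟨b, hb⟩⟩ : Fin m × Fin n) = q) ↔ ((q.1 : ℕ) = a ∧ (q.2 : ℕ) = b) := by
      constructor
      · rintro rfl; exact ⟨rfl, rfl⟩
      · rintro ⟨h1, h2⟩
        rcases q with ⟨q1, q2⟩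
        simp only [Prod.mk.injEq]
        constructor
        · exact Fin.ext (by simpa using h1.symm)
        · exact Fin.ext (by simpa using h2.symm)
    rw [if_congr hiff rfl rfl]
  -- finite generating sets for the antidiagonals
  set R : ℕ → Finset ℕ := fun k => Finset.Icc (k - n) (min (m - 1) (k - 1)) with hR
  have memR : ∀ k a : ℕ, a ∈ R k ↔ (k - n ≤ a ∧ a ≤ min (m - 1) (k - 1)) := by
    intro k a
    rw [hR]
    exact Finset.mem_Icc
  have hDk : ∀ k : ℕ, 1 ≤ k →
      D (k : ℤ) = Submodule.span F (((R k).image (fun a => E a (k - 1 - a)) : Finset V) : Set V) := by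
    intro k hk
    rw [hD]
    congr 1
    ext z
    simp only [Finset.coe_image, Set.mem_image, Finset.mem_coe, Finset.mem_Icc, Set.mem_setOf_eq,
      hR]
    constructor
    · rintro ⟨i, j, h1, h2, h3, h4, h5, rfl⟩
      refine ⟨(i - 1).toNat, ⟨by omega, by omega⟩, ?_⟩
      simp only [hE]
      have e1 : (((i - 1).toNat : ℕ) : ℤ) + 1 = i := by omega
      have e2 : ((k - 1 - (i - 1).toNat : ℕ) : ℤ) + 1 = j := by omega
      rw [e1, e2]
    · rintro ⟨a, ⟨ha1, ha2⟩, rfl⟩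
      refine ⟨(a : ℤ) + 1, (k : ℤ) - a, by omega, by omega, by omega, by omega, by omega, ?_⟩
      simp only [hE]
      have e2 : ((k - 1 - a : ℕ) : ℤ) + 1 = (k : ℤ) - a := by omega
      rw [e2]
  have hDbot : ∀ k : ℤ, k ≤ 0 ∨ (m : ℤ) + n ≤ k → D k = ⊥ := by
    intro k hk
    rw [hD k]
    convert Submodule.span_empty
    rw [Set.eq_empty_iff_forall_notMem]
    rintro z ⟨i, j, h1, h2, h3, h4, h5, rfl⟩
    omega
  have hgeninj : ∀ k : ℕ, ∀ a ∈ R k, ∀ a' ∈ R k,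
      E a (k - 1 - a) = E a' (k - 1 - a') → a = a' := by
    intro k a ha a' ha' hc
    rw [hR, Finset.mem_Icc] at ha ha'
    have h1 : a < m := by omega
    have h2 : k - 1 - a < n := by omega
    have h1' : a' < m := by omega
    have h2' : k - 1 - a' < n := by omega
    rw [hEB _ _ h1 h2, hEB _ _ h1' h2'] at hc
    have := B.injective hc
    simpa using congrArg (fun p => ((p.1 : Fin m) : ℕ)) this
  have hDdim : ∀ k : ℕ, 1 ≤ k → k ≤ m + n - 1 →
      finrank F (D (k : ℤ)) = min (m - 1) (k - 1) + 1 - (k - n) := by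
    intro k hk1 hk2
    rw [hDk k hk1]
    have hind : LinearIndependent F
        ((↑) : ↥(((R k).image (fun a => E a (k - 1 - a)) : Finset V) : Set V) → V) := by
      apply LinearIndepOn.mono ((linearIndepOn_id_range_iff B.injective).mpr B.linearIndependent)
      intro z hz
      simp only [Finset.coe_image, Set.mem_image, Finset.mem_coe] at hz
      obtain ⟨a, ha, rfl⟩ := hz
      rw [hR, Finset.mem_Icc] at ha
      have h1 : a < m := by omega
      have h2 : k - 1 - a < n := by omega
      exact ⟨(⟨a, h1⟩, ⟨k - 1 - a, h2⟩), (hEB a (k - 1 - a) h1 h2).symm⟩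
    rw [finrank_span_finset_eq_card hind,
      Finset.card_image_of_injOn (fun a ha a' ha' => hgeninj k a ha a' ha'), hR, Nat.card_Icc]
  have hmap : ∀ k : ℤ, Submodule.map N (D k) ≤ D (k - 1) := by
    intro k
    rw [hD k, hD (k - 1), Submodule.map_span_le]
    rintro z ⟨i, j, h1, h2, h3, h4, h5, rfl⟩
    rw [hN i j h1 h2 h3 h4]
    apply add_mem
    · rcases eq_or_lt_of_le h1 with h | h
      · rw [hv0 (i - 1) j (by omega)]; exact zero_mem _
      · exact Submodule.subset_span ⟨i - 1, j, by omega, by omega, by omega, by omega, by omega,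
          rfl⟩
    · rcases eq_or_lt_of_le h3 with h | h
      · rw [hv0 i (j - 1) (by omega)]; exact zero_mem _
      · exact Submodule.subset_span ⟨i, j - 1, by omega, by omega, by omega, by omega, by omega,
          rfl⟩
  have hinj1 : ∀ k : ℕ, m + 1 ≤ k → k ≤ m + n - 1 → ∀ z ∈ D (k : ℤ), N z = 0 → z = 0 := by
    intro k hk1 hk2 z hz hNz
    rw [hDk k (by omega), mem_span_finset] at hz
    obtain ⟨f, -, hf⟩ := hz
    rw [Finset.sum_image (fun a ha a' ha' => hgeninj k a ha a' ha')] at hf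
    set c : ℕ → F := fun a => f (E a (k - 1 - a)) with hc
    by_contra hz0
    have hex : ((R k).filter (fun a => c a ≠ 0)).Nonempty := by
      by_contra hemp
      apply hz0
      rw [← hf]
      apply Finset.sum_eq_zero
      intro a ha
      have hca : c a = 0 := by
        by_contra hca
        exact hemp ⟨a, Finset.mem_filter.mpr ⟨ha, hca⟩⟩
      rw [show f (E a (k - 1 - a)) = c a from rfl, hca, zero_smul]
    set a0 := ((R k).filter (fun a => c a ≠ 0)).max' hex with ha0
    have ha0mem := Finset.max'_mem _ hex
    rw [Finset.mem_filter] at ha0mem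
    obtain ⟨ha0R, hca0⟩ := ha0mem
    have ha0b : k - n ≤ a0 ∧ a0 ≤ min (m - 1) (k - 1) := (memR k a0).mp ha0R
    have hq1 : a0 < m := by omega
    have hq2' : k - 2 - a0 < n := by omega
    set q : Fin m × Fin n := (⟨a0, hq1⟩, ⟨k - 2 - a0, hq2'⟩) with hq
    have hqq1 : ((q.1 : ℕ)) = a0 := rfl
    have hqq2 : ((q.2 : ℕ)) = k - 2 - a0 := rfl
    have term : ∀ a ∈ R k, (B.repr (f (E a (k - 1 - a)) • N (E a (k - 1 - a)))) q
        = if a = a0 then c a0 else 0 := by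
      intro a haR
      have hab : k - n ≤ a ∧ a ≤ min (m - 1) (k - 1) := (memR k a).mp haR
      have h1 : a < m := by omega
      have h2 : k - 1 - a < n := by omega
      rw [map_smul, Finsupp.smul_apply, smul_eq_mul]
      rw [hEN a (k - 1 - a) h1 h2, if_neg (show ¬ (k - 1 - a = 0) by omega)]
      have e1 : k - 1 - a - 1 = k - 2 - a := by omega
      rw [e1, map_add, Finsupp.add_apply]
      have hr2 : (B.repr (E a (k - 2 - a))) q = if a = a0 then 1 else 0 := by
        rw [reprE a (k - 2 - a) h1 (by omega) q]
        apply if_congr _ rfl rfl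
        rw [hqq1, hqq2]
        omega
      have hr1 : (B.repr (if a = 0 then (0 : V) else E (a - 1) (k - 1 - a))) q
          = if a = a0 + 1 then 1 else 0 := by
        rcases eq_or_ne a 0 with rfl | haz
        · rw [if_pos rfl, map_zero, if_neg (by omega)]
          rfl
        · rw [if_neg haz, reprE (a - 1) (k - 1 - a) (by omega) h2 q]
          apply if_congr _ rfl rfl
          rw [hqq1, hqq2]
          omega
      rw [hr1, hr2]
      rcases eq_or_ne a a0 with rfl | hne
      · rw [if_neg (by omega), if_pos rfl, if_pos rfl]
        show c a0 * (0 + 1) = c a0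
        ring
      · rw [if_neg hne, if_neg hne]
        rcases eq_or_ne a (a0 + 1) with rfl | hne2
        · rw [if_pos rfl]
          have hca : c (a0 + 1) = 0 := by
            by_contra hcc
            have hle2 : a0 + 1 ≤ a0 := by
              rw [ha0]
              exact Finset.le_max' _ _ (Finset.mem_filter.mpr ⟨haR, hcc⟩)
            omega
          show c (a0 + 1) * (1 + 0) = 0
          rw [hca]; ring
        · rw [if_neg hne2]
          show c a * (0 + 0) = 0
          ring
    have key : (B.repr (N z)) q = c a0 := by
      rw [← hf, map_sum]
      simp_rw [map_smul]
      rw [map_sum, Finset.sum_apply']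
      rw [Finset.sum_congr rfl term]
      rw [Finset.sum_ite_eq' (R k) a0 (fun _ => c a0)]
      rw [if_pos ha0R]
    rw [hNz, map_zero] at key
    exact hca0 (by simpa using key.symm)
  have hsurj1 : ∀ k : ℕ, 1 ≤ k → k ≤ m → D ((k : ℤ) - 1) ≤ Submodule.map N (D (k : ℤ)) := by
    intro k hk1 hk2
    rcases Nat.eq_or_lt_of_le hk1 with h1 | h1
    · rw [hDbot ((k : ℤ) - 1) (by omega)]; exact bot_le
    · have claim : ∀ b : ℕ, b ≤ k - 2 → ∃ u ∈ D (k : ℤ), N u = E b (k - 1 - 1 - b) := by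
        intro b
        induction b with
        | zero =>
          intro _
          refine ⟨E 0 (k - 1), ?_, ?_⟩
          · rw [hDk k (by omega)]
            apply Submodule.subset_span
            refine Finset.mem_coe.mpr (Finset.mem_image.mpr ⟨0, ?_, rfl⟩)
            rw [hR, Finset.mem_Icc]; omega
          · rw [hEN 0 (k - 1) (by omega) (by omega), if_pos rfl, if_neg (by omega), zero_add,
              Nat.sub_zero]
        | succ b ih =>
          intro hb
          obtain ⟨u, hu, hNu⟩ := ih (by omega)
          refine ⟨E (b + 1) (k - 2 - b) - u, sub_mem ?_ hu, ?_⟩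
          · rw [hDk k (by omega)]
            apply Submodule.subset_span
            refine Finset.mem_coe.mpr (Finset.mem_image.mpr ⟨b + 1, ?_, ?_⟩)
            · rw [hR, Finset.mem_Icc]; omega
            · have e : k - 1 - (b + 1) = k - 2 - b := by omega
              rw [e]
          · rw [map_sub, hNu, hEN (b + 1) (k - 2 - b) (by omega) (by omega),
              if_neg (by omega), if_neg (by omega)]
            have e1 : b + 1 - 1 = b := by omega
            have e2 : k - 1 - 1 - b = k - 2 - b := by omega
            have e3 : k - 2 - b - 1 = k - 1 - 1 - (b + 1) := by omega
            rw [e1, e2, e3]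
            abel
      have hcast : (k : ℤ) - 1 = ((k - 1 : ℕ) : ℤ) := by omega
      rw [hcast, hDk (k - 1) (by omega), Submodule.span_le]
      rintro z hz
      simp only [Finset.coe_image, Set.mem_image, Finset.mem_coe] at hz
      obtain ⟨b, hbR, rfl⟩ := hz
      rw [hR, Finset.mem_Icc] at hbR
      obtain ⟨u, hu, hNu⟩ := claim b (by omega)
      exact Submodule.mem_map.mpr ⟨u, hu, hNu⟩
  have rank_nullity : ∀ (f : V →ₗ[F] V) (p : Submodule F V),
      finrank F (Submodule.map f p) + finrank F (LinearMap.ker f ⊓ p : Submodule F V)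
        = finrank F p := by
    intro f p
    have h1 := LinearMap.finrank_range_add_finrank_ker (f.domRestrict p)
    rw [LinearMap.range_domRestrict, LinearMap.ker_domRestrict] at h1
    have h2 : Submodule.comap p.subtype (LinearMap.ker f)
        = Submodule.comap p.subtype (LinearMap.ker f ⊓ p) := by
      ext z; simp [z.2]
    rw [h2] at h1
    have h3 : finrank F ↥(Submodule.comap p.subtype (LinearMap.ker f ⊓ p))
        = finrank F ↥(LinearMap.ker f ⊓ p) :=
      LinearEquiv.finrank_eq (Submodule.comapSubtypeEquivOfLe inf_le_right)
    rw [h3] at h1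
    exact h1
  have hxmem : ∀ j : ℕ, 1 ≤ j → j ≤ m → x (j : ℤ) ∈ D (j : ℤ) := by
    intro j hj1 hj2
    rw [hx, hD]
    apply Submodule.sum_mem
    intro a ha
    rw [Finset.mem_Icc] at ha
    apply Submodule.smul_mem
    apply Submodule.subset_span
    exact ⟨a, (j : ℤ) + 1 - a, by omega, by omega, by omega, by omega, by omega, rfl⟩
  have hxN : ∀ j : ℕ, 1 ≤ j → j ≤ m → N (x (j : ℤ)) = 0 := by
    intro j hj1 hj2
    rw [hx, map_sum]
    have hterm : ∀ a ∈ Finset.Icc (1 : ℤ) (j : ℤ),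
        N ((-1 : F) ^ (a - 1).toNat • v a ((j : ℤ) + 1 - a))
          = (-1 : F) ^ (a - 1).toNat • v (a - 1) ((j : ℤ) + 1 - a)
            + (-1 : F) ^ (a - 1).toNat • v a ((j : ℤ) - a) := by
      intro a ha
      rw [Finset.mem_Icc] at ha
      rw [map_smul, hN a ((j : ℤ) + 1 - a) (by omega) (by omega) (by omega) (by omega)]
      have e : (j : ℤ) + 1 - a - 1 = (j : ℤ) - a := by ring
      rw [e, smul_add]
    rw [Finset.sum_congr rfl hterm, Finset.sum_add_distrib]
    have hS1split : Finset.Icc (1 : ℤ) (j : ℤ)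
        = insert (1 : ℤ) ((Finset.Icc (1 : ℤ) ((j : ℤ) - 1)).map
            (addRightEmbedding (1 : ℤ))) := by
      rw [Finset.map_add_right_Icc]
      ext a
      simp only [Finset.mem_Icc, Finset.mem_insert]
      omega
    have hS2split : Finset.Icc (1 : ℤ) (j : ℤ)
        = insert (j : ℤ) (Finset.Icc (1 : ℤ) ((j : ℤ) - 1)) := by
      ext a
      simp only [Finset.mem_Icc, Finset.mem_insert]
      omega
    have hnm1 : (1 : ℤ) ∉ (Finset.Icc (1 : ℤ) ((j : ℤ) - 1)).map (addRightEmbedding (1 : ℤ)) := by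
      rw [Finset.map_add_right_Icc]
      simp only [Finset.mem_Icc]
      omega
    have hnm2 : (j : ℤ) ∉ Finset.Icc (1 : ℤ) ((j : ℤ) - 1) := by
      simp only [Finset.mem_Icc]
      omega
    nth_rewrite 1 [hS1split]
    rw [hS2split]
    rw [Finset.sum_insert hnm1, Finset.sum_insert hnm2, Finset.sum_map]
    have hz1 : (-1 : F) ^ ((1 : ℤ) - 1).toNat • v ((1 : ℤ) - 1) ((j : ℤ) + 1 - 1) = 0 := by
      rw [hv0 ((1 : ℤ) - 1) _ (by omega), smul_zero]
    have hz2 : (-1 : F) ^ (((j : ℤ)) - 1).toNat • v (j : ℤ) ((j : ℤ) - (j : ℤ)) = 0 := by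
      rw [hv0 (j : ℤ) ((j : ℤ) - (j : ℤ)) (by omega), smul_zero]
    rw [hz1, hz2, zero_add, zero_add]
    rw [← Finset.sum_add_distrib]
    apply Finset.sum_eq_zero
    intro a ha
    rw [Finset.mem_Icc] at ha
    have he1 : addRightEmbedding (1 : ℤ) a = a + 1 := rfl
    rw [he1]
    have e2 : a + 1 - 1 = a := by ring
    have e3 : (j : ℤ) + 1 - (a + 1) = (j : ℤ) - a := by ring
    rw [e2, e3]
    have e4 : a.toNat = (a - 1).toNat + 1 := by omega
    rw [e4, pow_succ, mul_neg_one, neg_smul, neg_add_cancel]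
  have hxne : ∀ j : ℕ, 1 ≤ j → j ≤ m → x (j : ℤ) ≠ 0 := by
    intro j hj1 hj2 hzero
    set q0 : Fin m × Fin n := (⟨0, by omega⟩, ⟨j - 1, by omega⟩) with hq0
    have hqq1 : ((q0.1 : ℕ)) = 0 := rfl
    have hqq2 : ((q0.2 : ℕ)) = j - 1 := rfl
    have hterm : ∀ a ∈ Finset.Icc (1 : ℤ) (j : ℤ),
        (B.repr ((-1 : F) ^ (a - 1).toNat • v a ((j : ℤ) + 1 - a))) q0
          = if a = 1 then 1 else 0 := by
      intro a ha
      rw [Finset.mem_Icc] at ha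
      have hv : v a ((j : ℤ) + 1 - a) = E (a - 1).toNat ((j : ℤ) - a).toNat := by
        simp only [hE]
        have e1 : (((a - 1).toNat : ℕ) : ℤ) + 1 = a := by omega
        have e2 : ((((j : ℤ) - a).toNat : ℕ) : ℤ) + 1 = (j : ℤ) + 1 - a := by omega
        rw [e1, e2]
      rw [map_smul, Finsupp.smul_apply, hv,
        reprE _ _ (by omega) (by omega) q0, smul_eq_mul]
      rcases eq_or_ne a 1 with rfl | hne
      · rw [if_pos ⟨by rw [hqq1]; omega, by rw [hqq2]; omega⟩, if_pos rfl]
        norm_num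
      · rw [if_neg ?_, if_neg hne, mul_zero]
        rintro ⟨hh1, hh2⟩
        rw [hqq1] at hh1
        omega
    have hsum : (B.repr (x (j : ℤ))) q0 = 1 := by
      rw [hx, map_sum, Finset.sum_apply', Finset.sum_congr rfl hterm,
        Finset.sum_ite_eq' (Finset.Icc (1 : ℤ) (j : ℤ)) 1 (fun _ => (1 : F))]
      rw [if_pos (Finset.mem_Icc.mpr ⟨le_refl (1 : ℤ), by omega⟩)]
    rw [hzero, map_zero] at hsum
    simpa using hsum
  have hker : ∀ j : ℕ, 1 ≤ j → j ≤ m →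
      (LinearMap.ker N ⊓ D (j : ℤ) : Submodule F V) = Submodule.span F {x (j : ℤ)} := by
    intro j hj1 hj2
    have hle : Submodule.span F {x (j : ℤ)} ≤ LinearMap.ker N ⊓ D (j : ℤ) := by
      rw [Submodule.span_le, Set.singleton_subset_iff]
      exact ⟨LinearMap.mem_ker.mpr (hxN j hj1 hj2), hxmem j hj1 hj2⟩
    have h2 : finrank F (D (j : ℤ)) = j := by rw [hDdim j hj1 (by omega)]; omega
    have hdim2 : finrank F (LinearMap.ker N ⊓ D (j : ℤ) : Submodule F V) ≤ 1 := by
      have h1 := rank_nullity N (D (j : ℤ))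
      have h3 : j - 1 ≤ finrank F (Submodule.map N (D (j : ℤ))) := by
        rcases Nat.eq_or_lt_of_le hj1 with hh | hh
        · omega
        · have h4 := Submodule.finrank_mono (hsurj1 j hj1 hj2)
          have hcast : (j : ℤ) - 1 = ((j - 1 : ℕ) : ℤ) := by omega
          rw [hcast, hDdim (j - 1) (by omega) (by omega)] at h4
          omega
      omega
    have h1 : finrank F (Submodule.span F {x (j : ℤ)}) = 1 :=
      finrank_span_singleton (hxne j hj1 hj2)
    exact (Submodule.eq_of_le_of_finrank_le hle (by omega)).symm
  -- chains
  have hC1 : ∀ t k : ℕ, m ≤ k → k + t ≤ m + n - 1 →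
      (Submodule.map (N ^ t) (D ((k + t : ℕ) : ℤ)) ≤ D (k : ℤ)) ∧
      (∀ z ∈ D ((k + t : ℕ) : ℤ), (N ^ t) z = 0 → z = 0) := by
    intro t
    induction t with
    | zero =>
      intro k hk1 hk2
      constructor
      · rw [pow_zero, Module.End.one_eq_id, Submodule.map_id, Nat.add_zero]
      · intro z hz h0
        rw [pow_zero] at h0
        simpa using h0
    | succ t ih =>
      intro k hk1 hk2
      have ihk := ih k hk1 (by omega)
      have hstep : Submodule.map N (D ((k + (t + 1) : ℕ) : ℤ)) ≤ D ((k + t : ℕ) : ℤ) := by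
        have h := hmap ((k + (t + 1) : ℕ) : ℤ)
        have hcast : ((k + (t + 1) : ℕ) : ℤ) - 1 = ((k + t : ℕ) : ℤ) := by push_cast; ring
        rw [hcast] at h
        exact h
      constructor
      · rw [pow_succ, Module.End.mul_eq_comp, Submodule.map_comp]
        exact le_trans (Submodule.map_mono hstep) ihk.1
      · intro z hz h0
        have hNz : N z ∈ D ((k + t : ℕ) : ℤ) := hstep (Submodule.mem_map_of_mem hz)
        rw [pow_succ, Module.End.mul_apply] at h0
        have hNz0 : N z = 0 := ihk.2 (N z) hNz h0
        exact hinj1 (k + (t + 1)) (by omega) (by omega) z hz hNz0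
  have hC2 : ∀ t : ℕ, t ≤ m → Submodule.map (N ^ t) (D ((m : ℕ) : ℤ)) = D ((m - t : ℕ) : ℤ) := by
    intro t
    induction t with
    | zero =>
      intro _
      rw [pow_zero, Module.End.one_eq_id, Submodule.map_id, Nat.sub_zero]
    | succ t ih =>
      intro ht
      have ih' := ih (by omega)
      rw [pow_succ', Module.End.mul_eq_comp, Submodule.map_comp, ih']
      have hcast : ((m - t : ℕ) : ℤ) - 1 = ((m - (t + 1) : ℕ) : ℤ) := by omega
      apply le_antisymm
      · have h := hmap ((m - t : ℕ) : ℤ)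
        rw [hcast] at h
        exact h
      · have h := hsurj1 (m - t) (by omega) (by omega)
        rw [hcast] at h
        exact h
  -- the two flags
  set WW : ℕ → Submodule F V := fun i => Submodule.map (N ^ (n - i)) (D ((m + n - i : ℕ) : ℤ))
    with hWW
  set GG : ℕ → Submodule F V := fun j => D ((m : ℕ) : ℤ) ⊓ LinearMap.ker (N ^ j) with hGG
  have hDm : finrank F (D ((m : ℕ) : ℤ)) = m := by
    rw [hDdim m (by omega) (by omega)]; omega
  have hWd : ∀ i : ℕ, i ≤ m → finrank F (WW i) = i := by
    intro i hi
    rcases Nat.eq_zero_or_pos i with rfl | hi1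
    · rw [hWW]
      beta_reduce
      rw [hDbot ((m + n - 0 : ℕ) : ℤ) (by push_cast; omega), Submodule.map_bot]
      exact finrank_bot F V
    · have hij := hC1 (n - i) m le_rfl (by omega)
      have e : m + (n - i) = m + n - i := by omega
      rw [e] at hij
      have hd : finrank F (D ((m + n - i : ℕ) : ℤ)) = i := by
        rw [hDdim (m + n - i) (by omega) (by omega)]; omega
      have hker0 : (LinearMap.ker (N ^ (n - i)) ⊓ D ((m + n - i : ℕ) : ℤ) : Submodule F V)
          = ⊥ := by
        rw [Submodule.eq_bot_iff]
        rintro z ⟨hz1, hz2⟩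
        exact hij.2 z hz2 hz1
      have hrn := rank_nullity (N ^ (n - i)) (D ((m + n - i : ℕ) : ℤ))
      rw [hker0] at hrn
      rw [hWW]
      simp only
      rw [hd] at hrn
      have hb : finrank F (⊥ : Submodule F V) = 0 := finrank_bot F V
      omega
  have hGd : ∀ j : ℕ, j ≤ m → finrank F (GG j) = j := by
    intro jj hj
    have h1 := rank_nullity (N ^ jj) (D ((m : ℕ) : ℤ))
    rw [hC2 jj hj] at h1
    have h2 : finrank F (D ((m - jj : ℕ) : ℤ)) = m - jj := by
      rcases Nat.eq_or_lt_of_le hj with rfl | hlt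
      · rw [Nat.sub_self, hDbot ((0 : ℕ) : ℤ) (by omega)]
        simp [finrank_bot]
      · rw [hDdim (m - jj) (by omega) (by omega)]; omega
    rw [h2] at h1
    rw [hGG]
    beta_reduce
    rw [inf_comm]
    omega
  have hWmono : ∀ i : ℕ, i < m → WW i ≤ WW (i + 1) := by
    intro i hi
    rw [hWW]
    simp only
    have e : n - i = (n - (i + 1)) + 1 := by omega
    rw [e, pow_succ, Module.End.mul_eq_comp, Submodule.map_comp]
    apply Submodule.map_mono
    have h := hmap ((m + n - i : ℕ) : ℤ)
    have hcast : ((m + n - i : ℕ) : ℤ) - 1 = ((m + n - (i + 1) : ℕ) : ℤ) := by omega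
    rw [hcast] at h
    exact h
  have hGmono : ∀ j : ℕ, j < m → GG j ≤ GG (j + 1) := by
    intro j hj
    apply inf_le_inf le_rfl
    intro z hz
    rw [LinearMap.mem_ker] at hz ⊢
    rw [pow_succ', Module.End.mul_apply, hz, map_zero]
  have hWGm : WW m = GG m := by
    have h1 : WW m = D ((m : ℕ) : ℤ) := by
      apply Submodule.eq_of_le_of_finrank_le
      · rw [hWW]
        simp only
        have h := (hC1 (n - m) m le_rfl (by omega)).1
        have e : m + (n - m) = m + n - m := by omega
        rw [e] at h
        exact h
      · rw [hDm, hWd m le_rfl]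
    have h2 : GG m = D ((m : ℕ) : ℤ) := by
      apply Submodule.eq_of_le_of_finrank_le
      · exact inf_le_left
      · rw [hDm, hGd m le_rfl]
    rw [h1, h2]
  obtain ⟨π0, hπ0⟩ := two_flags WW GG hWmono hGmono hWGm hWd hGd
  set π : Equiv.Perm (Fin m) := π0.trans Fin.revPerm with hπ
  have main : ∀ i : Fin m, ∃ zz : V,
      zz ∈ D ((m : ℤ) + n - ((i : ℕ) + 1)) ∧
      Submodule.span F {(N ^ (m + n - ((i : ℕ) + 1) - ((π i : ℕ) + 1))) zz} =
        Submodule.span F {x (((π i : ℕ) + 1 : ℕ) : ℤ)} ∧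
      ∃ c : F, c ≠ 0 ∧ (N ^ (m + n - ((i : ℕ) + 1) - ((π i : ℕ) + 1))) zz
        = c • x (((π i : ℕ) + 1 : ℕ) : ℤ) := by
    intro i
    obtain ⟨w, hw1, hw2, hw3⟩ := hπ0 i
    set t : ℕ := (π0 i : ℕ) with ht
    have htm : t < m := (π0 i).2
    rw [hWW] at hw1
    simp only at hw1
    obtain ⟨zz, hzz, hzzw⟩ := Submodule.mem_map.mp hw1
    rw [hGG] at hw2 hw3
    simp only at hw2 hw3
    have hwD : w ∈ D ((m : ℕ) : ℤ) := hw2.1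
    have hwk : (N ^ (t + 1)) w = 0 := hw2.2
    have hwnk : (N ^ t) w ≠ 0 := fun h => hw3 ⟨hwD, h⟩
    set ζ : V := (N ^ t) w with hζ
    have hζD : ζ ∈ D ((m - t : ℕ) : ℤ) := by
      rw [← hC2 t htm.le]
      exact Submodule.mem_map_of_mem hwD
    have hζk : N ζ = 0 := by
      rw [hζ, ← Module.End.mul_apply, ← pow_succ']
      exact hwk
    have hζspan : ζ ∈ Submodule.span F {x ((m - t : ℕ) : ℤ)} := by
      rw [← hker (m - t) (by omega) (by omega)]
      exact ⟨LinearMap.mem_ker.mpr hζk, hζD⟩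
    obtain ⟨c, hc⟩ := Submodule.mem_span_singleton.mp hζspan
    have hζne : ζ ≠ 0 := hwnk
    have hcne : c ≠ 0 := by
      rintro rfl
      rw [zero_smul] at hc
      exact hζne hc.symm
    have hπi : (π i : ℕ) = m - (t + 1) := by
      rw [hπ]
      simp only [Equiv.trans_apply]
      rw [show (Fin.revPerm (π0 i)) = Fin.rev (π0 i) from rfl, Fin.val_rev]
    have hexp : m + n - ((i : ℕ) + 1) - ((π i : ℕ) + 1) = t + (n - ((i : ℕ) + 1)) := by
      have him : (i : ℕ) < m := i.2
      omega
    have hND : ((m : ℤ) + n - ((i : ℕ) + 1)) = ((m + n - ((i : ℕ) + 1) : ℕ) : ℤ) := by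
      have him : (i : ℕ) < m := i.2
      omega
    have hNe : (N ^ (m + n - ((i : ℕ) + 1) - ((π i : ℕ) + 1))) zz = ζ := by
      rw [hexp, pow_add, Module.End.mul_apply, hzzw]
    have hxcast : (((π i : ℕ) + 1 : ℕ) : ℤ) = ((m - t : ℕ) : ℤ) := by omega
    refine ⟨zz, ?_, ?_, ?_⟩
    · rw [hND]; exact hzz
    · rw [hNe, hxcast, ← hc]
      exact Submodule.span_singleton_smul_eq (IsUnit.mk0 c hcne) _
    · exact ⟨c, hcne, by rw [hNe, hxcast, ← hc]⟩
  choose zfun h1 h2 h3 using main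
  exact ⟨π, zfun, fun i => ⟨h1 i, h2 i, h3 i⟩⟩
end

section
/- Let a and b be positive integers with a+1 < b ≤ m. Let T : D_{m+n−a−1} → D_{m+n−b} be the restriction of N^{b−a−1} (which maps D_{m+n−a−1} into D_{m+n−b}), and define the linear map U : D_{m+n−b} → D_{m+n−a−1} by U(∑_{j=m−b+1}^{m} α_j v_{j,m+n−b+1−j}) = ∑_{k=m−a}^{m} ( ∑_{t=k}^{m} (−1)^{t−k} C(t−k+b−a−2, b−a−2) α_t ) v_{k,m+n−a−k}. Then U ∘ T is the identity map on D_{m+n−a−1}, and T(U(z)) = z for every z in the image of T. -/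
open Finset

lemma poly_coeff_one_sub_pow (p y : ℕ) :
    ((1 - Polynomial.X : Polynomial ℤ) ^ p).coeff y = (-1) ^ y * (p.choose y : ℤ) := by
  have h : (1 - Polynomial.X : Polynomial ℤ) ^ p
      = Polynomial.C ((-1 : ℤ) ^ p) * (Polynomial.X + Polynomial.C (-1)) ^ p := by
    rw [map_pow, ← mul_pow]
    congr 1
    simp only [map_neg, map_one]
    ring
  rw [h, Polynomial.coeff_C_mul, Polynomial.coeff_X_add_C_pow]
  by_cases hy : y ≤ p
  · rw [← mul_assoc, ← pow_add, show p + (p - y) = 2 * (p - y) + y by omega,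
      pow_add, pow_mul, neg_one_sq, one_pow, one_mul]
  · simp [Nat.choose_eq_zero_of_lt (by omega : p < y)]

lemma ps_coeff_one_sub_pow (p y : ℕ) :
    (PowerSeries.coeff y) ((1 - PowerSeries.X) ^ p) = (-1) ^ y * (p.choose y : ℤ) := by
  have h : ((1 - PowerSeries.X : PowerSeries ℤ)) ^ p
      = (((1 - Polynomial.X : Polynomial ℤ) ^ p : Polynomial ℤ) : PowerSeries ℤ) := by
    rw [Polynomial.coe_pow, Polynomial.coe_sub, Polynomial.coe_one, Polynomial.coe_X]
  rw [h, Polynomial.coeff_coe, poly_coeff_one_sub_pow]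

lemma key_sum (q d : ℕ) :
    ∑ s ∈ range (d + 1), ((-1 : ℤ) ^ s * ((q + 1).choose s : ℤ) * ((d - s + q).choose q : ℤ))
      = if d = 0 then 1 else 0 := by
  have hprod : (PowerSeries.invOneSubPow ℤ (q + 1)).val * (1 - PowerSeries.X) ^ (q + 1) = 1 := by
    rw [← PowerSeries.invOneSubPow_inv_eq_one_sub_pow]
    exact (PowerSeries.invOneSubPow ℤ (q + 1)).val_inv
  have h := congrArg (PowerSeries.coeff d) hprod
  rw [PowerSeries.coeff_mul, PowerSeries.coeff_one] at h
  rw [Finset.Nat.sum_antidiagonal_eq_sum_range_succ_mk] at h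
  have h2 : ∀ k ∈ range (d + 1),
      (PowerSeries.coeff k) (PowerSeries.invOneSubPow ℤ (q + 1)).val *
        (PowerSeries.coeff (d - k)) ((1 - PowerSeries.X) ^ (q + 1))
      = ((q + k).choose q : ℤ) * ((-1) ^ (d - k) * ((q + 1).choose (d - k) : ℤ)) := by
    intro k _
    rw [ps_coeff_one_sub_pow, PowerSeries.invOneSubPow_val_succ_eq_mk_add_choose,
      PowerSeries.coeff_mk]
  rw [Finset.sum_congr rfl h2] at h
  rw [← Finset.sum_range_reflect] at h
  rw [← h]
  refine Finset.sum_congr rfl fun s hs => ?_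
  simp only [mem_range] at hs
  have h1 : d + 1 - 1 - s = d - s := by omega
  have h2 : d - (d - s) = s := by omega
  rw [h1, h2, Nat.add_comm q (d - s)]
  ring

lemma combo (q d : ℕ) :
    ∑ s ∈ range (q + 2),
      (if s ≤ d then (-1 : ℤ) ^ (d - s) * ((q + 1).choose s : ℤ) * ((d - s + q).choose q : ℤ)
        else 0)
      = if d = 0 then 1 else 0 := by
  have step1 : ∑ s ∈ range (q + 2),
      (if s ≤ d then (-1 : ℤ) ^ (d - s) * ((q + 1).choose s : ℤ) * ((d - s + q).choose q : ℤ)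
        else 0)
      = (-1 : ℤ) ^ d * ∑ s ∈ range (q + 2),
        (if s ≤ d then (-1 : ℤ) ^ s * ((q + 1).choose s : ℤ) * ((d - s + q).choose q : ℤ)
          else 0) := by
    rw [Finset.mul_sum]
    refine Finset.sum_congr rfl fun s _ => ?_
    by_cases hs : s ≤ d
    · simp only [if_pos hs]
      have hpow : (-1 : ℤ) ^ (d - s) = (-1) ^ d * (-1) ^ s := by
        rw [← pow_add, show d + s = (d - s) + 2 * s by omega, pow_add, pow_mul,
          neg_one_sq, one_pow, mul_one]
      rw [hpow]; ring
    · simp [hs]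
  have step3 : ∑ s ∈ range (q + 2),
      (if s ≤ d then (-1 : ℤ) ^ s * ((q + 1).choose s : ℤ) * ((d - s + q).choose q : ℤ) else 0)
      = ∑ s ∈ range (d + 1),
        ((-1 : ℤ) ^ s * ((q + 1).choose s : ℤ) * ((d - s + q).choose q : ℤ)) := by
    have A : ∑ s ∈ range (q + 2),
        (if s ≤ d then (-1 : ℤ) ^ s * ((q + 1).choose s : ℤ) * ((d - s + q).choose q : ℤ) else 0)
        = ∑ s ∈ range (q + d + 2),
          (if s ≤ d then (-1 : ℤ) ^ s * ((q + 1).choose s : ℤ) * ((d - s + q).choose q : ℤ)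
            else 0) := by
      refine Finset.sum_subset (Finset.range_subset_range.2 (by omega)) fun x _ hx => ?_
      simp only [mem_range, not_lt] at hx
      by_cases hxd : x ≤ d
      · simp [Nat.choose_eq_zero_of_lt (by omega : q + 1 < x), hxd]
      · simp [hxd]
    have B : ∑ s ∈ range (d + 1),
        ((-1 : ℤ) ^ s * ((q + 1).choose s : ℤ) * ((d - s + q).choose q : ℤ))
        = ∑ s ∈ range (q + d + 2),
          (if s ≤ d then (-1 : ℤ) ^ s * ((q + 1).choose s : ℤ) * ((d - s + q).choose q : ℤ)
            else 0) := by
      rw [Finset.sum_ite, Finset.sum_const_zero, add_zero]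
      apply Finset.sum_congr
      · ext x
        simp only [Finset.mem_filter, mem_range]
        omega
      · intro x _; rfl
    rw [A, B]
  rw [step1, step3, key_sum]
  by_cases hd : d = 0 <;> simp [hd]

lemma comboF (F : Type*) [Field F] (q d : ℕ) :
    ∑ s ∈ range (q + 2),
      (if s ≤ d then (-1 : F) ^ (d - s) * ((q + 1).choose s : F) *
          (((d - s + q).choose q : ℤ) : F)
        else 0)
      = if d = 0 then 1 else 0 := by
  have h := congrArg (fun z : ℤ => (z : F)) (combo q d)
  simp only [Int.cast_sum, apply_ite (fun z : ℤ => (z : F)), Int.cast_mul, Int.cast_pow,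
    Int.cast_neg, Int.cast_one, Int.cast_natCast, Int.cast_zero, Int.cast_ite] at h
  convert h using 2
  norm_num

/-- For positive integers a, b with a+1 < b ≤ m, let T be the restriction
of N^{b−a−1} to D_{m+n−a−1} (which maps into D_{m+n−b}) and let U : D_{m+n−b} → D_{m+n−a−1}
be the linear map with
U(∑ α_j v_{j,m+n−b+1−j}) = ∑_k (∑_t (−1)^{t−k} C(t−k+b−a−2,b−a−2) α_t) v_{k,m+n−a−k}.
Then U ∘ T = id on D_{m+n−a−1} and T(U(z)) = z for all z in the image of T. -/
theorem stmt_15 (F : Type*) [Field F] (m n : ℕ) (hm : 0 < m) (hmn : m ≤ n)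
    (V : Type*) [AddCommGroup V] [Module F V]
    (v : ℤ → ℤ → V)
    (hv_indep : LinearIndependent F
      (fun p : Fin m × Fin n => v (((p.1 : ℕ) + 1 : ℕ) : ℤ) (((p.2 : ℕ) + 1 : ℕ) : ℤ)))
    (hv_span : Submodule.span F
      (Set.range (fun p : Fin m × Fin n =>
        v (((p.1 : ℕ) + 1 : ℕ) : ℤ) (((p.2 : ℕ) + 1 : ℕ) : ℤ))) = ⊤)
    (hv0 : ∀ i j : ℤ, (i < 1 ∨ (m : ℤ) < i ∨ j < 1 ∨ (n : ℤ) < j) → v i j = 0)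
    (N : V →ₗ[F] V)
    (hN : ∀ i j : ℤ, 1 ≤ i → i ≤ (m : ℤ) → 1 ≤ j → j ≤ (n : ℤ) →
      N (v i j) = v (i - 1) j + v i (j - 1))
    (D : ℤ → Submodule F V)
    (hD : ∀ k : ℤ, D k = Submodule.span F
      {z | ∃ i j : ℤ, 1 ≤ i ∧ i ≤ (m : ℤ) ∧ 1 ≤ j ∧ j ≤ (n : ℤ) ∧ i + j = k + 1 ∧ z = v i j})
    (a b : ℕ) (ha : 0 < a) (hab : a + 1 < b) (hbm : b ≤ m)
    (hT : ∀ z ∈ D ((m : ℤ) + n - a - 1), (N ^ (b - a - 1)) z ∈ D ((m : ℤ) + n - b))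
    (U : V →ₗ[F] V)
    (hU : ∀ j : ℤ, (m : ℤ) - b + 1 ≤ j → j ≤ (m : ℤ) →
      U (v j ((m : ℤ) + n - b + 1 - j)) =
        ∑ k ∈ Finset.Icc ((m : ℤ) - a) (m : ℤ),
          (if k ≤ j then
              ((-1 : F) ^ (j - k).toNat *
                (icho (j - k + (b : ℤ) - a - 2) ((b : ℤ) - a - 2) : F))
            else 0) • v k ((m : ℤ) + n - a - k)) :
    (∀ y ∈ D ((m : ℤ) + n - a - 1), U ((N ^ (b - a - 1)) y) = y) ∧
      (∀ z ∈ D ((m : ℤ) + n - b),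
        (∃ y ∈ D ((m : ℤ) + n - a - 1), (N ^ (b - a - 1)) y = z) →
          (N ^ (b - a - 1)) (U z) = z) := by
  classical
  have hveq : ∀ {i i' j j' : ℤ}, i = i' → j = j' → v i j = v i' j' := by
    rintro i i' j j' rfl rfl; rfl
  set p : ℕ := b - a - 1 with hp
  set q : ℕ := b - a - 2 with hq
  have hpq : p = q + 1 := by omega
  -- basis
  let bV : Module.Basis (Fin m × Fin n) F V := Module.Basis.mk hv_indep (le_of_eq hv_span.symm)
  have hbV : ∀ pr : Fin m × Fin n,
      bV pr = v (((pr.1 : ℕ) + 1 : ℕ) : ℤ) (((pr.2 : ℕ) + 1 : ℕ) : ℤ) := fun pr =>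
    Module.Basis.mk_apply _ _ _
  have hvb : ∀ (i j : ℤ) (h1 : 1 ≤ i) (h2 : i ≤ (m : ℤ)) (h3 : 1 ≤ j) (h4 : j ≤ (n : ℤ)),
      v i j = bV (⟨(i - 1).toNat, by omega⟩, ⟨(j - 1).toNat, by omega⟩) := by
    intro i j h1 h2 h3 h4
    rw [hbV]
    exact hveq (by simp; omega) (by simp; omega)
  -- the two shift maps
  set N1 : V →ₗ[F] V :=
    bV.constr F (fun pr => v ((pr.1 : ℕ) : ℤ) (((pr.2 : ℕ) + 1 : ℕ) : ℤ)) with hN1def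
  set N2 : V →ₗ[F] V :=
    bV.constr F (fun pr => v (((pr.1 : ℕ) + 1 : ℕ) : ℤ) ((pr.2 : ℕ) : ℤ)) with hN2def
  have hN1 : ∀ i j : ℤ, i ≤ (m : ℤ) → j ≤ (n : ℤ) → N1 (v i j) = v (i - 1) j := by
    intro i j h2 h4
    by_cases h1 : 1 ≤ i
    · by_cases h3 : 1 ≤ j
      · rw [hvb i j h1 h2 h3 h4, hN1def, Module.Basis.constr_basis]
        exact hveq (by simp; omega) (by simp; omega)
      · rw [hv0 i j (by omega), map_zero, hv0 (i - 1) j (by omega)]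
    · rw [hv0 i j (by omega), map_zero, hv0 (i - 1) j (by omega)]
  have hN2 : ∀ i j : ℤ, i ≤ (m : ℤ) → j ≤ (n : ℤ) → N2 (v i j) = v i (j - 1) := by
    intro i j h2 h4
    by_cases h1 : 1 ≤ i
    · by_cases h3 : 1 ≤ j
      · rw [hvb i j h1 h2 h3 h4, hN2def, Module.Basis.constr_basis]
        exact hveq (by simp; omega) (by simp; omega)
      · rw [hv0 i j (by omega), map_zero, hv0 i (j - 1) (by omega)]
    · rw [hv0 i j (by omega), map_zero, hv0 i (j - 1) (by omega)]
  have hN12 : N = N1 + N2 := by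
    refine bV.ext fun pr => ?_
    have h1 : (1 : ℤ) ≤ (((pr.1 : ℕ) + 1 : ℕ) : ℤ) := by push_cast; omega
    have h2 : (((pr.1 : ℕ) + 1 : ℕ) : ℤ) ≤ (m : ℤ) := by
      have := pr.1.isLt; push_cast; omega
    have h3 : (1 : ℤ) ≤ (((pr.2 : ℕ) + 1 : ℕ) : ℤ) := by push_cast; omega
    have h4 : (((pr.2 : ℕ) + 1 : ℕ) : ℤ) ≤ (n : ℤ) := by
      have := pr.2.isLt; push_cast; omega
    rw [hbV, hN pr.1.1.succ pr.2.1.succ h1 h2 h3 h4, LinearMap.add_apply,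
      hN1 _ _ h2 h4, hN2 _ _ h2 h4]
  have hcomm : Commute N1 N2 := by
    refine bV.ext fun pr => ?_
    have h2 : (((pr.1 : ℕ) + 1 : ℕ) : ℤ) ≤ (m : ℤ) := by
      have := pr.1.isLt; push_cast; omega
    have h4 : (((pr.2 : ℕ) + 1 : ℕ) : ℤ) ≤ (n : ℤ) := by
      have := pr.2.isLt; push_cast; omega
    rw [hbV]
    show N1 (N2 _) = N2 (N1 _)
    rw [hN2 _ _ h2 h4, hN1 _ _ h2 (by omega), hN1 _ _ h2 h4, hN2 _ _ (by omega) h4]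
  have powN1 : ∀ (s : ℕ) (i j : ℤ), i ≤ (m : ℤ) → j ≤ (n : ℤ) →
      (N1 ^ s) (v i j) = v (i - s) j := by
    intro s
    induction s with
    | zero => intro i j _ _; simp
    | succ s ih =>
      intro i j him hjn
      rw [pow_succ, Module.End.mul_apply, hN1 i j him hjn, ih (i - 1) j (by omega) hjn]
      exact hveq (by push_cast; ring) rfl
  have powN2 : ∀ (s : ℕ) (i j : ℤ), i ≤ (m : ℤ) → j ≤ (n : ℤ) →
      (N2 ^ s) (v i j) = v i (j - s) := by
    intro s
    induction s with
    | zero => intro i j _ _; simp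
    | succ s ih =>
      intro i j him hjn
      rw [pow_succ, Module.End.mul_apply, hN2 i j him hjn, ih i (j - 1) him (by omega)]
      exact hveq rfl (by push_cast; ring)
  have lemA : ∀ (P : ℕ) (i j : ℤ), i ≤ (m : ℤ) → j ≤ (n : ℤ) →
      (N ^ P) (v i j)
        = ∑ s ∈ range (P + 1), (P.choose s : F) • v (i - s) (j - ((P - s : ℕ) : ℤ)) := by
    intro P i j him hjn
    rw [hN12, hcomm.add_pow P, LinearMap.sum_apply]
    refine Finset.sum_congr rfl fun s hs => ?_
    rw [Module.End.mul_apply, Module.End.mul_apply, Module.End.natCast_apply,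
      map_nsmul, map_nsmul, powN2 (P - s) i j him hjn,
      powN1 s i (j - ((P - s : ℕ) : ℤ)) him (by omega),
      Nat.cast_smul_eq_nsmul]
  -- the key computation
  have hMain : ∀ k : ℤ, (m : ℤ) - a ≤ k → k ≤ (m : ℤ) →
      U ((N ^ p) (v k ((m : ℤ) + n - a - k))) = v k ((m : ℤ) + n - a - k) := by
    intro k hk1 hk2
    rw [lemA p k _ hk2 (by omega), map_sum]
    have hterm : ∀ s ∈ range (p + 1),
        U ((p.choose s : F) • v (k - s) ((m : ℤ) + n - a - k - ((p - s : ℕ) : ℤ)))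
          = ∑ k' ∈ Finset.Icc ((m : ℤ) - a) (m : ℤ),
              ((p.choose s : F) *
                (if k' ≤ k - s then
                    ((-1 : F) ^ (k - s - k').toNat *
                      (icho (k - s - k' + (b : ℤ) - a - 2) ((b : ℤ) - a - 2) : F))
                  else 0)) • v k' ((m : ℤ) + n - a - k') := by
      intro s hs
      simp only [mem_range] at hs
      have harg : (m : ℤ) + n - a - k - ((p - s : ℕ) : ℤ)
          = (m : ℤ) + n - b + 1 - (k - s) := by omega
      rw [map_smul, harg, hU (k - s) (by omega) (by omega), Finset.smul_sum]
      refine Finset.sum_congr rfl fun k' _ => ?_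
      rw [smul_smul]
    rw [Finset.sum_congr rfl hterm, Finset.sum_comm]
    have hcoef : ∀ k' ∈ Finset.Icc ((m : ℤ) - a) (m : ℤ),
        (∑ s ∈ range (p + 1),
            ((p.choose s : F) *
              (if k' ≤ k - s then
                  ((-1 : F) ^ (k - s - k').toNat *
                    (icho (k - s - k' + (b : ℤ) - a - 2) ((b : ℤ) - a - 2) : F))
                else 0)))
          = if k' = k then (1 : F) else 0 := by
      intro k' _
      by_cases hkk : k' ≤ k
      · set d : ℕ := (k - k').toNat with hd
        have hdz : (d : ℤ) = k - k' := by omega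
        have := comboF F q d
        have hiff : (if k' = k then (1 : F) else 0) = (if d = 0 then (1 : F) else 0) := by
          by_cases h : k' = k
          · rw [if_pos h, if_pos (by omega)]
          · rw [if_neg h, if_neg (by omega)]
        rw [hpq, show q + 1 + 1 = q + 2 from rfl, hiff, ← this]
        refine Finset.sum_congr rfl fun s hs => ?_
        simp only [mem_range] at hs
        by_cases hsd : s ≤ d
        · rw [if_pos (by omega), if_pos hsd]
          have e1 : (k - s - k').toNat = d - s := by omega
          have e2 : icho (k - s - k' + (b : ℤ) - a - 2) ((b : ℤ) - a - 2)
              = ((d - s + q).choose q : ℤ) := by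
            rw [icho, if_pos (by constructor <;> omega)]
            rw [show (k - (s : ℤ) - k' + (b : ℤ) - (a : ℤ) - 2).toNat = d - s + q by omega,
              show ((b : ℤ) - (a : ℤ) - 2).toNat = q by omega]
          rw [e1, e2]
          push_cast
          ring
        · rw [if_neg (by omega), if_neg hsd, mul_zero]
      · rw [if_neg (by omega)]
        refine Finset.sum_eq_zero fun s _ => ?_
        rw [if_neg (by omega), mul_zero]
    have hsplit : ∀ k' ∈ Finset.Icc ((m : ℤ) - a) (m : ℤ),
        (∑ s ∈ range (p + 1),
            ((p.choose s : F) *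
              (if k' ≤ k - s then
                  ((-1 : F) ^ (k - s - k').toNat *
                    (icho (k - s - k' + (b : ℤ) - a - 2) ((b : ℤ) - a - 2) : F))
                else 0)) • v k' ((m : ℤ) + n - a - k'))
          = (if k' = k then (1 : F) else 0) • v k' ((m : ℤ) + n - a - k') := by
      intro k' hk'
      rw [← Finset.sum_smul, hcoef k' hk']
    rw [Finset.sum_congr rfl hsplit]
    rw [Finset.sum_eq_single k]
    · rw [if_pos rfl, one_smul]
    · intro x _ hx
      rw [if_neg hx, zero_smul]
    · intro hk
      exact absurd (Finset.mem_Icc.2 ⟨hk1, hk2⟩) hk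
  have part1 : ∀ y ∈ D ((m : ℤ) + n - a - 1), U ((N ^ p) y) = y := by
    intro y hy
    rw [hD] at hy
    refine Submodule.span_induction ?_ ?_ ?_ ?_ hy
    · rintro z ⟨i, j, h1, h2, h3, h4, h5, rfl⟩
      have hj : j = (m : ℤ) + n - a - i := by omega
      subst hj
      exact hMain i (by omega) h2
    · simp
    · intro x y _ _ hx' hy'
      rw [map_add, map_add, hx', hy']
    · intro c x _ hx'
      rw [map_smul, map_smul, hx']
  refine ⟨part1, ?_⟩
  rintro z _ ⟨y, hy, rfl⟩
  rw [part1 y hy]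
end

section
/- Let a, b, i be integers with 0 ≤ a < i < b ≤ m, and set λ = m+n−a−b. Suppose y = ∑_{j=m−i+1}^{m} α_j v_{j,m+n−i+1−j} ∈ D_{m+n−i} (with α_j ∈ F) satisfies N^{λ−1}(y) = x_{a+b+1−i}. Then N^{λ−1}( ∑_{j=m−i}^{m−1} α_{j+1} v_{j,m+n−i−j} ) = −x_{a+b−i}. -/
/-- Let 0 ≤ a < i < b ≤ m and λ = m+n−a−b. If
y = ∑_{j=m−i+1}^{m} α_j v_{j,m+n−i+1−j} ∈ D_{m+n−i} satisfies N^{λ−1}(y) = x_{a+b+1−i},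
then N^{λ−1}(∑_{j=m−i}^{m−1} α_{j+1} v_{j,m+n−i−j}) = −x_{a+b−i}. -/
theorem stmt_16 (F : Type*) [Field F] (m n : ℕ) (hm : 0 < m) (hmn : m ≤ n)
    (V : Type*) [AddCommGroup V] [Module F V]
    (v : ℤ → ℤ → V)
    (hv_indep : LinearIndependent F
      (fun p : Fin m × Fin n => v (((p.1 : ℕ) + 1 : ℕ) : ℤ) (((p.2 : ℕ) + 1 : ℕ) : ℤ)))
    (hv_span : Submodule.span F
      (Set.range (fun p : Fin m × Fin n =>
        v (((p.1 : ℕ) + 1 : ℕ) : ℤ) (((p.2 : ℕ) + 1 : ℕ) : ℤ))) = ⊤)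
    (hv0 : ∀ i j : ℤ, (i < 1 ∨ (m : ℤ) < i ∨ j < 1 ∨ (n : ℤ) < j) → v i j = 0)
    (N : V →ₗ[F] V)
    (hN : ∀ i j : ℤ, 1 ≤ i → i ≤ (m : ℤ) → 1 ≤ j → j ≤ (n : ℤ) →
      N (v i j) = v (i - 1) j + v i (j - 1))
    (D : ℤ → Submodule F V)
    (hD : ∀ k : ℤ, D k = Submodule.span F
      {z | ∃ i j : ℤ, 1 ≤ i ∧ i ≤ (m : ℤ) ∧ 1 ≤ j ∧ j ≤ (n : ℤ) ∧ i + j = k + 1 ∧ z = v i j})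
    (x : ℤ → V)
    (hx : ∀ i : ℤ, x i =
      ∑ j ∈ Finset.Icc (1 : ℤ) i, ((-1 : F) ^ (j - 1).toNat) • v j (i + 1 - j))
    (a b i : ℕ) (hai : a < i) (hib : i < b) (hbm : b ≤ m)
    (α : ℤ → F)
    (hy : (N ^ (m + n - a - b - 1))
        (∑ j ∈ Finset.Icc ((m : ℤ) - i + 1) (m : ℤ), α j • v j ((m : ℤ) + n - i + 1 - j)) =
      x ((a : ℤ) + b + 1 - i)) :
    (N ^ (m + n - a - b - 1))
        (∑ j ∈ Finset.Icc ((m : ℤ) - i) ((m : ℤ) - 1), α (j + 1) • v j ((m : ℤ) + n - i - j)) =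
      -x ((a : ℤ) + b - i) := by
  have hmn' : (m : ℤ) ≤ n := by exact_mod_cast hmn
  -- the basis
  set B : Module.Basis (Fin m × Fin n) F V := Module.Basis.mk hv_indep (by rw [hv_span]) with hBdef
  have hB : ∀ p : Fin m × Fin n,
      B p = v (((p.1 : ℕ) + 1 : ℕ) : ℤ) (((p.2 : ℕ) + 1 : ℕ) : ℤ) :=
    fun p => Module.Basis.mk_apply _ _ _
  -- the row-shift operator
  set R : V →ₗ[F] V :=
    B.constr F (fun p : Fin m × Fin n => v ((p.1 : ℕ) : ℤ) (((p.2 : ℕ) + 1 : ℕ) : ℤ))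
    with hRdef
  have hR : ∀ I J : ℤ, 1 ≤ I → I ≤ (m : ℤ) → 1 ≤ J → J ≤ (n : ℤ) →
      R (v I J) = v (I - 1) J := by
    intro I J h1 h2 h3 h4
    lift I to ℕ using (by omega)
    lift J to ℕ using (by omega)
    have hp1 : I - 1 < m := by omega
    have hp2 : J - 1 < n := by omega
    have hvB : v I J = B (⟨I - 1, hp1⟩, ⟨J - 1, hp2⟩) := by
      rw [hB]
      congr 1 <;> push_cast <;> omega
    rw [hvB, hRdef, Module.Basis.constr_basis]
    congr 1 <;> push_cast <;> omega
  -- R commutes with N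
  have hNR : N ∘ₗ R = R ∘ₗ N := by
    apply B.ext
    rintro ⟨r, c⟩
    simp only [LinearMap.comp_apply]
    rw [hB]
    have hI1 : (1 : ℤ) ≤ ((r : ℕ) + 1 : ℕ) := by push_cast; omega
    have hI2 : (((r : ℕ) + 1 : ℕ) : ℤ) ≤ m := by push_cast; exact_mod_cast r.2
    have hJ1 : (1 : ℤ) ≤ ((c : ℕ) + 1 : ℕ) := by push_cast; omega
    have hJ2 : (((c : ℕ) + 1 : ℕ) : ℤ) ≤ n := by push_cast; exact_mod_cast c.2
    rw [hN _ _ hI1 hI2 hJ1 hJ2, hR _ _ hI1 hI2 hJ1 hJ2, map_add]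
    set I : ℤ := (((r : ℕ) + 1 : ℕ) : ℤ) with hIdef
    set J : ℤ := (((c : ℕ) + 1 : ℕ) : ℤ) with hJdef
    by_cases hI : 2 ≤ I
    · have hNleft : N (v (I - 1) J) = v (I - 1 - 1) J + v (I - 1) (J - 1) :=
        hN _ _ (by omega) (by omega) hJ1 hJ2
      have hRl : R (v (I - 1) J) = v (I - 1 - 1) J :=
        hR _ _ (by omega) (by omega) hJ1 hJ2
      by_cases hJ : 2 ≤ J
      · have hRr : R (v I (J - 1)) = v (I - 1) (J - 1) :=
          hR _ _ hI1 hI2 (by omega) (by omega)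
        rw [hNleft, hRl, hRr]
      · have hJ1' : J = 1 := by omega
        have hz1 : v I (J - 1) = 0 := hv0 _ _ (by omega)
        have hz2 : v (I - 1) (J - 1) = 0 := hv0 _ _ (by omega)
        rw [hNleft, hRl, hz1, hz2, map_zero]
    · have hI1' : I = 1 := by omega
      have hz : v (I - 1) J = 0 := hv0 _ _ (by omega)
      rw [hz, map_zero, map_zero]
      by_cases hJ : 2 ≤ J
      · have hRr : R (v I (J - 1)) = v (I - 1) (J - 1) :=
          hR _ _ hI1 hI2 (by omega) (by omega)
        rw [hRr, hv0 (I - 1) (J - 1) (by omega), add_zero]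
      · have hz1 : v I (J - 1) = 0 := hv0 _ _ (by omega)
        rw [hz1, map_zero, add_zero]
  have hcomm : ∀ k : ℕ, ∀ w : V, (N ^ k) (R w) = R ((N ^ k) w) := by
    intro k w
    have hc : Commute R N := by
      show R * N = N * R
      rw [Module.End.mul_eq_comp, Module.End.mul_eq_comp, hNR]
    have hck : R * N ^ k = N ^ k * R := hc.pow_right k
    calc (N ^ k) (R w) = (N ^ k * R) w := rfl
      _ = (R * N ^ k) w := by rw [hck]
      _ = R ((N ^ k) w) := rfl
  -- the target sum is R applied to y
  have hSy : (∑ j ∈ Finset.Icc ((m : ℤ) - i) ((m : ℤ) - 1), α (j + 1) • v j ((m : ℤ) + n - i - j))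
      = R (∑ j ∈ Finset.Icc ((m : ℤ) - i + 1) (m : ℤ), α j • v j ((m : ℤ) + n - i + 1 - j)) := by
    rw [map_sum]
    rw [show Finset.Icc ((m : ℤ) - i + 1) (m : ℤ)
        = Finset.map (addRightEmbedding 1) (Finset.Icc ((m : ℤ) - i) ((m : ℤ) - 1)) by
      rw [Finset.map_add_right_Icc]; congr 1; ring]
    rw [Finset.sum_map]
    apply Finset.sum_congr rfl
    intro j hj
    rw [Finset.mem_Icc] at hj
    simp only [addRightEmbedding_apply]
    rw [map_smul, hR (j + 1) ((m : ℤ) + n - i + 1 - (j + 1)) (by omega) (by omega) (by omega)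
      (by omega)]
    congr 2 <;> ring
  rw [hSy, hcomm, hy]
  -- compute R (x (a+b+1-i))
  rw [hx, hx, map_sum]
  have hKm : (a : ℤ) + b + 1 - i ≤ m := by omega
  have hK2 : (2 : ℤ) ≤ (a : ℤ) + b + 1 - i := by omega
  have hterm : ∀ j ∈ Finset.Icc (1 : ℤ) ((a : ℤ) + b + 1 - i),
      R (((-1 : F) ^ (j - 1).toNat) • v j ((a : ℤ) + b + 1 - i + 1 - j))
      = ((-1 : F) ^ (j - 1).toNat) • v (j - 1) ((a : ℤ) + b + 1 - i + 1 - j) := by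
    intro j hj
    rw [Finset.mem_Icc] at hj
    rw [map_smul, hR _ _ (by omega) (by omega) (by omega) (by omega)]
  rw [Finset.sum_congr rfl hterm]
  have hsplit : Finset.Icc (1 : ℤ) ((a : ℤ) + b + 1 - i)
      = insert 1 (Finset.Icc (2 : ℤ) ((a : ℤ) + b + 1 - i)) := by
    ext j
    simp only [Finset.mem_Icc, Finset.mem_insert]
    omega
  rw [hsplit, Finset.sum_insert (by simp)]
  have h1z : ((-1 : F) ^ ((1 : ℤ) - 1).toNat) • v ((1 : ℤ) - 1) ((a : ℤ) + b + 1 - i + 1 - 1)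
      = 0 := by
    rw [hv0 _ _ (by omega), smul_zero]
  rw [h1z, zero_add]
  rw [show Finset.Icc (2 : ℤ) ((a : ℤ) + b + 1 - i)
      = Finset.map (addRightEmbedding 1) (Finset.Icc (1 : ℤ) ((a : ℤ) + b - i)) by
    rw [Finset.map_add_right_Icc]; congr 1; ring]
  rw [Finset.sum_map, ← Finset.sum_neg_distrib]
  apply Finset.sum_congr rfl
  intro j hj
  rw [Finset.mem_Icc] at hj
  simp only [addRightEmbedding_apply]
  have hpow : ((-1 : F) ^ (j + 1 - 1).toNat) = -((-1 : F) ^ (j - 1).toNat) := by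
    have : (j + 1 - 1).toNat = (j - 1).toNat + 1 := by omega
    rw [this, pow_succ]
    ring
  rw [hpow]
  have hvv : v (j + 1 - 1) ((a : ℤ) + b + 1 - i + 1 - (j + 1))
      = v j ((a : ℤ) + b - i + 1 - j) := by congr 1 <;> ring
  rw [hvv, neg_smul]
end

section
/- Let σ be a permutation of {1,…,m}, and suppose that for each i ∈ {1,…,m} an element y_i ∈ D_{m+n−i} satisfies N^{m+n−i−σ(i)}(y_i) = x_{σ(i)}. Then for each i the subspace Y_i spanned by {N^k(y_i) : 0 ≤ k ≤ m+n−i−σ(i)} is N-invariant, has dimension m+n−i−σ(i)+1 over F, N^{m+n−i−σ(i)+1}(y_i) = 0, and V = Y_1 ⊕ ⋯ ⊕ Y_m as an internal direct sum. -/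
/-- Given a permutation σ of {1,…,m} and y_i ∈ D_{m+n−i} with
N^{m+n−i−σ(i)}(y_i) = x_{σ(i)}, each Y_i = span{N^k(y_i) : 0 ≤ k ≤ m+n−i−σ(i)} is
N-invariant of dimension m+n−i−σ(i)+1, N^{m+n−i−σ(i)+1}(y_i) = 0, and V = Y_1 ⊕ ⋯ ⊕ Y_m. -/
theorem stmt_17 (F : Type*) [Field F] (m n : ℕ) (hm : 0 < m) (hmn : m ≤ n)
    (V : Type*) [AddCommGroup V] [Module F V]
    (v : ℤ → ℤ → V)
    (hv_indep : LinearIndependent F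
      (fun p : Fin m × Fin n => v (((p.1 : ℕ) + 1 : ℕ) : ℤ) (((p.2 : ℕ) + 1 : ℕ) : ℤ)))
    (hv_span : Submodule.span F
      (Set.range (fun p : Fin m × Fin n =>
        v (((p.1 : ℕ) + 1 : ℕ) : ℤ) (((p.2 : ℕ) + 1 : ℕ) : ℤ))) = ⊤)
    (hv0 : ∀ i j : ℤ, (i < 1 ∨ (m : ℤ) < i ∨ j < 1 ∨ (n : ℤ) < j) → v i j = 0)
    (N : V →ₗ[F] V)
    (hN : ∀ i j : ℤ, 1 ≤ i → i ≤ (m : ℤ) → 1 ≤ j → j ≤ (n : ℤ) →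
      N (v i j) = v (i - 1) j + v i (j - 1))
    (D : ℤ → Submodule F V)
    (hD : ∀ k : ℤ, D k = Submodule.span F
      {z | ∃ i j : ℤ, 1 ≤ i ∧ i ≤ (m : ℤ) ∧ 1 ≤ j ∧ j ≤ (n : ℤ) ∧ i + j = k + 1 ∧ z = v i j})
    (x : ℤ → V)
    (hx : ∀ i : ℤ, x i =
      ∑ j ∈ Finset.Icc (1 : ℤ) i, ((-1 : F) ^ (j - 1).toNat) • v j (i + 1 - j))
    (σ : Equiv.Perm (Fin m)) (y : Fin m → V)
    (hy : ∀ i : Fin m, y i ∈ D ((m : ℤ) + n - ((i : ℕ) + 1)))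
    (hyx : ∀ i : Fin m,
      (N ^ (m + n - ((i : ℕ) + 1) - ((σ i : ℕ) + 1))) (y i) = x (((σ i : ℕ) + 1 : ℕ) : ℤ))
    (Y : Fin m → Submodule F V)
    (hY : ∀ i : Fin m, Y i = Submodule.span F
      (Set.range fun k : Fin (m + n - ((i : ℕ) + 1) - ((σ i : ℕ) + 1) + 1) =>
        (N ^ (k : ℕ)) (y i))) :
    (∀ i : Fin m, ∀ z ∈ Y i, N z ∈ Y i) ∧
      (∀ i : Fin m,
        Module.finrank F (Y i) = m + n - ((i : ℕ) + 1) - ((σ i : ℕ) + 1) + 1) ∧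
      (∀ i : Fin m, (N ^ (m + n - ((i : ℕ) + 1) - ((σ i : ℕ) + 1) + 1)) (y i) = 0) ∧
      DirectSum.IsInternal Y := by
  classical
  -- basis
  set B : Module.Basis (Fin m × Fin n) F V := Module.Basis.mk hv_indep hv_span.ge with hBdef
  have hB : ∀ p : Fin m × Fin n, B p = v (((p.1 : ℕ) + 1 : ℕ) : ℤ) (((p.2 : ℕ) + 1 : ℕ) : ℤ) := by
    intro p; rw [hBdef, Module.Basis.mk_apply]
  have hvB : ∀ (j l : ℤ) (hj1 : 1 ≤ j) (hjm : j ≤ m) (hl1 : 1 ≤ l) (hln : l ≤ n),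
      v j l = B (⟨(j-1).toNat, by omega⟩, ⟨(l-1).toNat, by omega⟩) := by
    intro j l hj1 hjm hl1 hln
    rw [hB]
    congr 1 <;> push_cast <;> omega
  -- N kills x k
  have hNx : ∀ k : ℤ, 1 ≤ k → k ≤ m → N (x k) = 0 := by
    intro k hk1 hkm
    rw [hx, map_sum]
    have hterm : ∀ j ∈ Finset.Icc (1:ℤ) k,
        N (((-1 : F) ^ (j - 1).toNat) • v j (k + 1 - j)) =
        ((-1 : F) ^ (j - 1).toNat) • v (j-1) (k+1-j) + ((-1 : F) ^ (j - 1).toNat) • v j (k-j) := by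
      intro j hj
      simp only [Finset.mem_Icc] at hj
      rw [map_smul, hN j (k+1-j) hj.1 (by omega) (by omega) (by omega)]
      rw [smul_add]
      congr 2
      ring_nf
    rw [Finset.sum_congr rfl hterm, Finset.sum_add_distrib]
    have h1 : ∑ j ∈ Finset.Icc (1:ℤ) k, ((-1 : F) ^ (j - 1).toNat) • v (j-1) (k+1-j)
        = ∑ j ∈ Finset.Icc (0:ℤ) (k-1), ((-1 : F) ^ j.toNat) • v j (k-j) := by
      rw [show Finset.Icc (1:ℤ) k = (Finset.Icc (0:ℤ) (k-1)).map
          ⟨fun x => x + 1, add_left_injective 1⟩ by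
        rw [Finset.map_eq_image]
        ext a
        simp only [Finset.mem_image, Finset.mem_Icc, Function.Embedding.coeFn_mk]
        constructor
        · intro h; exact ⟨a - 1, by omega, by ring⟩
        · rintro ⟨b, hb, rfl⟩; omega]
      rw [Finset.sum_map]
      apply Finset.sum_congr rfl
      intro j hj
      simp only [Function.Embedding.coeFn_mk]
      congr 2
      · omega
      · ring
      · ring
    rw [h1]
    have h2 : ∑ j ∈ Finset.Icc (0:ℤ) (k-1), ((-1 : F) ^ j.toNat) • v j (k-j)
        = ∑ j ∈ Finset.Icc (1:ℤ) (k-1), ((-1 : F) ^ j.toNat) • v j (k-j) := by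
      rw [show Finset.Icc (0:ℤ) (k-1) = insert 0 (Finset.Icc (1:ℤ) (k-1)) by
        ext a; simp [Finset.mem_Icc]; omega]
      rw [Finset.sum_insert (by simp)]
      rw [hv0 0 (k-0) (by omega)]
      simp
    have h3 : ∑ j ∈ Finset.Icc (1:ℤ) k, ((-1 : F) ^ (j-1).toNat) • v j (k-j)
        = ∑ j ∈ Finset.Icc (1:ℤ) (k-1), ((-1 : F) ^ (j-1).toNat) • v j (k-j) := by
      rcases eq_or_lt_of_le hk1 with h | h
      · rw [← h]; simp [hv0 1 0 (by omega)]
      · rw [show Finset.Icc (1:ℤ) k = insert k (Finset.Icc (1:ℤ) (k-1)) by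
          ext a; simp [Finset.mem_Icc]; omega]
        rw [Finset.sum_insert (by simp)]
        rw [show k - k = (0:ℤ) by ring, hv0 k 0 (by omega)]
        simp
    rw [h2, h3, ← Finset.sum_add_distrib]
    apply Finset.sum_eq_zero
    intro j hj
    simp only [Finset.mem_Icc] at hj
    have : (j:ℤ).toNat = (j-1).toNat + 1 := by omega
    rw [this, pow_succ, ← add_smul]
    ring_nf
    simp
  -- coordinate of x k at (0, b)
  have hxc : ∀ (k : ℤ) (hk1 : 1 ≤ k) (hkm : k ≤ m) (b : Fin n),
      B.repr (x k) (⟨0, hm⟩, b) = if ((b:ℕ) : ℤ) + 1 = k then 1 else 0 := by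
    intro k hk1 hkm b
    rw [hx, map_sum, Finset.sum_apply']
    rw [Finset.sum_eq_single_of_mem 1 (by simp [Finset.mem_Icc]; omega)]
    · rw [map_smul]
      rw [hvB 1 (k+1-1) (by omega) (by exact_mod_cast hm) (by omega) (by omega)]
      rw [Module.Basis.repr_self]
      simp only [Finsupp.smul_apply, Finsupp.single_apply]
      have h0 : ((1:ℤ) - 1).toNat = 0 := by norm_num
      by_cases hbk : ((b:ℕ) : ℤ) + 1 = k
      · rw [if_pos, if_pos hbk]
        · simp [h0]
        · ext
          · simp
          · simp only []
            omega
      · rw [if_neg, if_neg hbk]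
        · simp
        · intro hcon
          apply hbk
          have := congrArg (fun q => ((q.2 : ℕ) : ℤ)) hcon
          simp at this
          omega
    · intro j hj hj1
      simp only [Finset.mem_Icc] at hj
      rw [map_smul]
      rw [hvB j (k+1-j) (by omega) (by omega) (by omega) (by omega)]
      rw [Module.Basis.repr_self]
      simp only [Finsupp.smul_apply, Finsupp.single_apply]
      rw [if_neg]
      · simp
      · intro hcon
        have := congrArg (fun q => ((q.1 : ℕ) : ℤ)) hcon
        simp at this
        omega
  -- arithmetic about chain lengths
  have hdi : ∀ i : Fin m,
      ((i:ℕ)+1) + (((σ i:ℕ))+1) + (m + n - ((i : ℕ) + 1) - ((σ i : ℕ) + 1)) = m + n := by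
    intro i
    have h1 := i.2
    have h2 := (σ i).2
    omega
  -- nilpotency along chains
  have hN0 : ∀ i : Fin m, (N ^ (m + n - ((i : ℕ) + 1) - ((σ i : ℕ) + 1) + 1)) (y i) = 0 := by
    intro i
    rw [pow_succ', Module.End.mul_apply, hyx i]
    apply hNx
    · push_cast; omega
    · push_cast
      have := (σ i).2
      omega
  have hN0' : ∀ (i : Fin m) (s : ℕ), m + n - ((i : ℕ) + 1) - ((σ i : ℕ) + 1) < s →
      (N ^ s) (y i) = 0 := by
    intro i s hs
    rw [show s = (s - (m + n - ((i : ℕ) + 1) - ((σ i : ℕ) + 1) + 1)) +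
        (m + n - ((i : ℕ) + 1) - ((σ i : ℕ) + 1) + 1) by omega]
    rw [pow_add, Module.End.mul_apply, hN0 i, map_zero]
  -- the combined family
  set w : ((i : Fin m) × Fin (m + n - ((i : ℕ) + 1) - ((σ i : ℕ) + 1) + 1)) → V :=
    fun q => (N ^ (q.2 : ℕ)) (y q.1) with hwdef
  have hw : LinearIndependent F w := by
    rw [Fintype.linearIndependent_iff]
    intro g hg
    by_contra hcon
    push_neg at hcon
    obtain ⟨p0, hp0⟩ := hcon
    obtain ⟨p, hpS, hpmax⟩ := Finset.exists_max_image
      (Finset.univ.filter fun q => g q ≠ 0)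
      (fun q => m + n - ((q.1 : ℕ) + 1) - ((σ q.1 : ℕ) + 1) - (q.2:ℕ))
      ⟨p0, by simp [hp0]⟩
    obtain ⟨p1, p2⟩ := p
    simp only [Finset.mem_filter, Finset.mem_univ, true_and] at hpS
    set P := m + n - ((p1 : ℕ) + 1) - ((σ p1 : ℕ) + 1) - (p2:ℕ) with hPdef
    have hp2 : (p2:ℕ) ≤ m + n - ((p1 : ℕ) + 1) - ((σ p1 : ℕ) + 1) :=
      Nat.lt_succ_iff.mp p2.2
    have h0 : (N ^ P) (∑ q, g q • w q) = 0 := by rw [hg, map_zero]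
    rw [map_sum] at h0
    have hterms : ∀ q, (N ^ P) (g q • w q) =
        (if (q.2:ℕ) + P = m + n - ((q.1 : ℕ) + 1) - ((σ q.1 : ℕ) + 1) then g q else 0) •
          x (((σ q.1 : ℕ) + 1 : ℕ) : ℤ) := by
      intro q
      rw [map_smul]
      have hw_eq : (N ^ P) (w q) = (N ^ ((q.2:ℕ) + P)) (y q.1) := by
        show (N ^ P) ((N ^ (q.2:ℕ)) (y q.1)) = _
        rw [add_comm ((q.2:ℕ)) P, pow_add, Module.End.mul_apply]
      rcases lt_trichotomy ((q.2:ℕ) + P)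
        (m + n - ((q.1 : ℕ) + 1) - ((σ q.1 : ℕ) + 1)) with h | h | h
      · have hgq : g q = 0 := by
          by_contra hne
          have := hpmax q (by simp [hne])
          omega
        rw [hgq, if_neg (by omega)]
        simp
      · rw [if_pos h, hw_eq, h, hyx q.1]
      · rw [if_neg (by omega), hw_eq, hN0' _ _ h]
        simp
    rw [Finset.sum_congr rfl (fun q _ => hterms q)] at h0
    have hσp : ((σ p1 : ℕ)) < n := lt_of_lt_of_le (σ p1).2 hmn
    have hco := congrArg (fun z => B.repr z (⟨0, hm⟩, ⟨(σ p1 : ℕ), hσp⟩)) h0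
    simp only [map_sum, map_zero, Finsupp.coe_zero, Pi.zero_apply, Finset.sum_apply'] at hco
    have hco2 : ∀ q, (B.repr ((if (q.2:ℕ) + P = m + n - ((q.1 : ℕ) + 1) - ((σ q.1 : ℕ) + 1)
          then g q else 0) • x (((σ q.1 : ℕ) + 1 : ℕ) : ℤ))) (⟨0, hm⟩, ⟨(σ p1 : ℕ), hσp⟩)
        = (if (q.2:ℕ) + P = m + n - ((q.1 : ℕ) + 1) - ((σ q.1 : ℕ) + 1) then g q else 0) *
          (if q.1 = p1 then 1 else 0) := by
      intro q
      rw [map_smul]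
      simp only [Finsupp.smul_apply]
      rw [hxc (((σ q.1 : ℕ) + 1 : ℕ) : ℤ) (by push_cast; omega)
        (by push_cast; exact_mod_cast Nat.succ_le_of_lt (σ q.1).2) ⟨(σ p1 : ℕ), hσp⟩]
      have : (((⟨(σ p1 : ℕ), hσp⟩ : Fin n) : ℕ) : ℤ) + 1 = (((σ q.1 : ℕ) + 1 : ℕ) : ℤ)
          ↔ q.1 = p1 := by
        constructor
        · intro h
          have : σ q.1 = σ p1 := by
            apply Fin.ext
            simp only [] at h
            omega
          exact σ.injective this
        · intro h; rw [h]; simp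
      rw [smul_eq_mul]
      congr 1
      by_cases hqp : q.1 = p1
      · rw [if_pos hqp, if_pos (this.mpr hqp)]
      · rw [if_neg hqp, if_neg (fun hc => hqp (this.mp hc))]
    rw [Finset.sum_congr rfl (fun q _ => hco2 q)] at hco
    rw [← Finset.univ_sigma_univ, Finset.sum_sigma] at hco
    dsimp only at hco
    rw [Finset.sum_eq_single_of_mem p1 (Finset.mem_univ _)] at hco
    · rw [Finset.sum_eq_single_of_mem p2 (Finset.mem_univ _)] at hco
      · rw [if_pos rfl, if_pos (by omega), mul_one] at hco
        exact hpS hco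
      · intro k _ hk
        rw [if_neg, zero_mul]
        intro hc
        apply hk
        apply Fin.ext
        omega
    · intro i _ hi
      apply Finset.sum_eq_zero
      intro k _
      rw [if_neg hi, mul_zero]
  -- per-chain independence
  have hwi : ∀ i : Fin m, LinearIndependent F
      (fun k : Fin (m + n - ((i : ℕ) + 1) - ((σ i : ℕ) + 1) + 1) => (N ^ (k:ℕ)) (y i)) := by
    intro i
    exact hw.comp (Sigma.mk i) sigma_mk_injective
  haveI : FiniteDimensional F V := Module.Finite.of_basis B
  refine ⟨?_, ?_, hN0, ?_⟩
  · -- invariance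
    intro i z hz
    rw [hY i] at hz ⊢
    induction hz using Submodule.span_induction with
    | mem a ha =>
      obtain ⟨k, rfl⟩ := ha
      have hstep : N ((N ^ (k:ℕ)) (y i)) = (N ^ ((k:ℕ)+1)) (y i) := by
        rw [pow_succ', Module.End.mul_apply]
      rw [hstep]
      by_cases h : (k:ℕ) + 1 ≤ m + n - ((i : ℕ) + 1) - ((σ i : ℕ) + 1)
      · exact Submodule.subset_span ⟨⟨(k:ℕ)+1, by omega⟩, rfl⟩
      · have : (k:ℕ) = m + n - ((i : ℕ) + 1) - ((σ i : ℕ) + 1) := by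
          have := k.2; omega
        rw [this, hN0 i]
        exact Submodule.zero_mem _
    | zero => rw [map_zero]; exact Submodule.zero_mem _
    | add a b _ _ ha hb => rw [map_add]; exact Submodule.add_mem _ ha hb
    | smul c a _ ha => rw [map_smul]; exact Submodule.smul_mem _ _ ha
  · -- finrank
    intro i
    rw [hY i, finrank_span_eq_card (hwi i)]
    simp
  · -- internal direct sum
    have hrV : Module.finrank F V = m * n := by
      rw [Module.finrank_eq_card_basis B]
      simp
    have hsum : ∑ i : Fin m, (m + n - ((i : ℕ) + 1) - ((σ i : ℕ) + 1) + 1) = m * n := by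
      have h1 : ∀ i : Fin m, (m + n - ((i : ℕ) + 1) - ((σ i : ℕ) + 1) + 1) +
          ((i:ℕ) + ((σ i):ℕ)) = m + n - 1 := by
        intro i
        have := hdi i
        omega
      have h2 : ∑ i : Fin m, ((m + n - ((i : ℕ) + 1) - ((σ i : ℕ) + 1) + 1) +
          ((i:ℕ) + ((σ i):ℕ))) = m * (m + n - 1) := by
        rw [Finset.sum_congr rfl (fun i _ => h1 i)]
        simp [Finset.sum_const, Finset.card_univ, mul_comm]
      rw [Finset.sum_add_distrib, Finset.sum_add_distrib, Finset.sum_add_distrib] at h2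
      have h3 : ∑ i : Fin m, ((σ i : ℕ)) = ∑ i : Fin m, (i:ℕ) :=
        Equiv.sum_comp σ (fun i => (i:ℕ))
      rw [h3] at h2
      have h4 : (∑ i : Fin m, (i:ℕ)) * 2 = m * (m-1) := by
        rw [Fin.sum_univ_eq_sum_range (fun j => j) m]
        exact Finset.sum_range_id_mul_two m
      have h5 : m * (m + n - 1) = m * n + m * (m-1) := by
        rw [show m + n - 1 = n + (m - 1) by omega, Nat.mul_add]
      rw [h5] at h2
      have h6 : (∑ _i : Fin m, (1:ℕ)) = m := by simp
      rw [Finset.sum_add_distrib, h6]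
      set A := ∑ i : Fin m, (m + n - ((i : ℕ) + 1) - ((σ i : ℕ) + 1))
      set T := ∑ i : Fin m, (i:ℕ)
      set X := m * (m - 1)
      linarith
    have hcard : Fintype.card ((i : Fin m) × Fin (m + n - ((i : ℕ) + 1) - ((σ i : ℕ) + 1) + 1))
        = m * n := by
      rw [Fintype.card_sigma]
      simpa using hsum
    have hspanw : Submodule.span F (Set.range w) = ⊤ := by
      apply Submodule.eq_top_of_finrank_eq
      rw [finrank_span_eq_card hw, hcard, hrV]
    have hsup : ⨆ i, Y i = ⊤ := by
      rw [eq_top_iff, ← hspanw, Submodule.span_le]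
      rintro _ ⟨q, rfl⟩
      exact Submodule.mem_iSup_of_mem q.1 (by
        rw [hY]
        exact Submodule.subset_span ⟨q.2, rfl⟩)
    have hind : iSupIndep Y := by
      rw [iSupIndep_def]
      intro i
      have hYi : Y i = Submodule.span F (w '' {q | q.1 = i}) := by
        rw [hY]
        congr 1
        ext z
        constructor
        · rintro ⟨k, rfl⟩
          exact ⟨⟨i, k⟩, rfl, rfl⟩
        · rintro ⟨⟨i', k⟩, hq, rfl⟩
          simp only [Set.mem_setOf_eq] at hq
          subst hq
          exact ⟨k, rfl⟩
      have hrest : (⨆ j, ⨆ _ : j ≠ i, Y j) ≤ Submodule.span F (w '' {q | q.1 ≠ i}) := by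
        apply iSup_le
        intro j
        apply iSup_le
        intro hji
        rw [hY j]
        apply Submodule.span_le.mpr
        rintro _ ⟨k, rfl⟩
        exact Submodule.subset_span ⟨⟨j, k⟩, hji, rfl⟩
      refine Disjoint.mono_right hrest ?_
      rw [hYi]
      exact hw.disjoint_span_image (by
        rw [Set.disjoint_left]
        rintro q hq hq'
        exact hq' hq)
    exact DirectSum.isInternal_submodule_of_iSupIndep_of_iSup_eq_top hind hsup
end

section
/- Let a and b be integers with 0 ≤ a < b ≤ m, and set λ = m+n−a−b. Then N^{λ−1} maps D_{m+n−a−1} into D_b; suppose this restriction N^{λ−1} : D_{m+n−a−1} → D_b is injective. Then the kernel of the restriction of N^{λ} to D_{m+n−a−1} has dimension at most 1 over F; moreover, if y ∈ D_{m+n−a−1} satisfies N^{λ−1}(y) = x_b, then this kernel equals span{y}. -/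
/-- Let 0 ≤ a < b ≤ m, λ = m+n−a−b. Then N^{λ−1} maps D_{m+n−a−1} into D_b;
if this restriction is injective, then the kernel of the restriction of N^{λ} to
D_{m+n−a−1} has dimension at most 1; moreover if y ∈ D_{m+n−a−1} satisfies
N^{λ−1}(y) = x_b, then this kernel equals span{y}. -/
theorem stmt_19 (F : Type*) [Field F] (m n : ℕ) (hm : 0 < m) (hmn : m ≤ n)
    (V : Type*) [AddCommGroup V] [Module F V]
    (v : ℤ → ℤ → V)
    (hv_indep : LinearIndependent F
      (fun p : Fin m × Fin n => v (((p.1 : ℕ) + 1 : ℕ) : ℤ) (((p.2 : ℕ) + 1 : ℕ) : ℤ)))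
    (hv_span : Submodule.span F
      (Set.range (fun p : Fin m × Fin n =>
        v (((p.1 : ℕ) + 1 : ℕ) : ℤ) (((p.2 : ℕ) + 1 : ℕ) : ℤ))) = ⊤)
    (hv0 : ∀ i j : ℤ, (i < 1 ∨ (m : ℤ) < i ∨ j < 1 ∨ (n : ℤ) < j) → v i j = 0)
    (N : V →ₗ[F] V)
    (hN : ∀ i j : ℤ, 1 ≤ i → i ≤ (m : ℤ) → 1 ≤ j → j ≤ (n : ℤ) →
      N (v i j) = v (i - 1) j + v i (j - 1))
    (D : ℤ → Submodule F V)
    (hD : ∀ k : ℤ, D k = Submodule.span F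
      {z | ∃ i j : ℤ, 1 ≤ i ∧ i ≤ (m : ℤ) ∧ 1 ≤ j ∧ j ≤ (n : ℤ) ∧ i + j = k + 1 ∧ z = v i j})
    (x : ℤ → V)
    (hx : ∀ i : ℤ, x i =
      ∑ j ∈ Finset.Icc (1 : ℤ) i, ((-1 : F) ^ (j - 1).toNat) • v j (i + 1 - j))
    (a b : ℕ) (hab : a < b) (hbm : b ≤ m)
    (hinj : ∀ z₁ ∈ D ((m : ℤ) + n - a - 1), ∀ z₂ ∈ D ((m : ℤ) + n - a - 1),
      (N ^ (m + n - a - b - 1)) z₁ = (N ^ (m + n - a - b - 1)) z₂ → z₁ = z₂) :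
    (∀ z ∈ D ((m : ℤ) + n - a - 1), (N ^ (m + n - a - b - 1)) z ∈ D ((b : ℤ))) ∧
      Module.finrank F
        ↥(D ((m : ℤ) + n - a - 1) ⊓ LinearMap.ker (N ^ (m + n - a - b))) ≤ 1 ∧
      (∀ y ∈ D ((m : ℤ) + n - a - 1), (N ^ (m + n - a - b - 1)) y = x ((b : ℤ)) →
        D ((m : ℤ) + n - a - 1) ⊓ LinearMap.ker (N ^ (m + n - a - b)) =
          Submodule.span F {y}) := by
  have hbn : b ≤ n := hbm.trans hmn
  have hb1 : 1 ≤ b := Nat.one_le_iff_ne_zero.mpr (by omega)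
  set l : ℕ := m + n - a - b - 1 with hl0
  have hl : m + n - a - b = l + 1 := by omega
  -- Step 1: N maps D k into D (k-1)
  have hmap : ∀ (k : ℤ), ∀ z ∈ D k, N z ∈ D (k - 1) := by
    intro k z hz
    rw [hD] at hz ⊢
    induction hz using Submodule.span_induction with
    | mem w hw =>
      obtain ⟨i, j, h1, h2, h3, h4, h5, rfl⟩ := hw
      rw [hN i j h1 h2 h3 h4]
      apply Submodule.add_mem
      · by_cases hi : i = 1
        · simp [hi, hv0 0 j (by omega)]
        · exact Submodule.subset_span ⟨i - 1, j, by omega, by omega, h3, h4, by omega, rfl⟩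
      · by_cases hj : j = 1
        · simp [hj, hv0 i 0 (by omega)]
        · exact Submodule.subset_span ⟨i, j - 1, h1, h2, by omega, by omega, by omega, rfl⟩
    | zero => simp
    | add w₁ w₂ _ _ hw₁ hw₂ => rw [map_add]; exact Submodule.add_mem _ hw₁ hw₂
    | smul c w _ hw => rw [map_smul]; exact Submodule.smul_mem _ _ hw
  -- Step 2: iterated
  have hmapk : ∀ (t : ℕ) (k : ℤ), ∀ z ∈ D k, (N ^ t) z ∈ D (k - t) := by
    intro t
    induction t with
    | zero => intro k z hz; simpa using hz
    | succ t ih =>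
      intro k z hz
      have h1 : (N ^ (t + 1)) z = N ((N ^ t) z) := by
        rw [pow_succ']; rfl
      rw [h1]
      have := hmap (k - t) _ (ih k z hz)
      have he : k - (t : ℤ) - 1 = k - ((t : ℕ) + 1 : ℕ) := by push_cast; ring
      rwa [he] at this
  -- first conjunct
  have hconj1 : ∀ z ∈ D ((m : ℤ) + n - a - 1), (N ^ l) z ∈ D ((b : ℤ)) := by
    intro z hz
    have := hmapk l _ z hz
    have he : (m : ℤ) + n - a - 1 - (l : ℕ) = (b : ℤ) := by omega
    rwa [he] at this
  -- x b in range form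
  have hIcc : Finset.Icc (1 : ℤ) (b : ℤ) =
      Finset.map ⟨fun j : ℕ => (j : ℤ) + 1, fun p q h => by simpa using h⟩ (Finset.range b) := by
    ext j
    simp only [Finset.mem_Icc, Finset.mem_map, Finset.mem_range, Function.Embedding.coeFn_mk]
    erw [Function.Embedding.coeFn_mk]
    constructor
    · rintro ⟨h1, h2⟩; exact ⟨(j - 1).toNat, by omega, by omega⟩
    · rintro ⟨i, hi, rfl⟩; omega
  have hxb : x (b : ℤ) = ∑ j ∈ Finset.range b, ((-1 : F) ^ j) • v ((j : ℤ) + 1) ((b : ℤ) - j) := by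
    rw [hx, hIcc, Finset.sum_map]
    refine Finset.sum_congr rfl fun j hj => ?_
    erw [Function.Embedding.coeFn_mk]
    have h1 : ((j : ℤ) + 1 - 1).toNat = j := by omega
    have h2 : (b : ℤ) + 1 - ((j : ℤ) + 1) = (b : ℤ) - j := by ring
    rw [h1, h2]
  -- key computation: N of a diagonal sum
  have hNsum : ∀ (k : ℕ), 1 ≤ k → k ≤ m → ∀ c : ℕ → F,
      N (∑ j ∈ Finset.range k, c j • v ((j : ℤ) + 1) ((k : ℤ) - j)) =
      ∑ j ∈ Finset.range (k - 1), (c j + c (j + 1)) • v ((j : ℤ) + 1) ((k : ℤ) - 1 - j) := by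
    intro k hk1 hkm c
    obtain ⟨k', rfl⟩ : ∃ k', k = k' + 1 := ⟨k - 1, by omega⟩
    rw [map_sum]
    have step : ∀ j ∈ Finset.range (k' + 1),
        N (c j • v ((j : ℤ) + 1) (((k' + 1 : ℕ) : ℤ) - j)) =
        c j • v (j : ℤ) (((k' + 1 : ℕ) : ℤ) - j) +
          c j • v ((j : ℤ) + 1) (((k' + 1 : ℕ) : ℤ) - j - 1) := by
      intro j hj
      rw [Finset.mem_range] at hj
      have e1 : ((j : ℤ) + 1) - 1 = (j : ℤ) := by ring
      rw [map_smul, hN ((j : ℤ) + 1) (((k' + 1 : ℕ) : ℤ) - j) (by omega) (by omega)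
        (by omega) (by omega), e1, smul_add]
    rw [Finset.sum_congr rfl step, Finset.sum_add_distrib]
    have hA : ∑ j ∈ Finset.range (k' + 1), c j • v (j : ℤ) (((k' + 1 : ℕ) : ℤ) - j) =
        ∑ j ∈ Finset.range k', c (j + 1) • v ((j : ℤ) + 1) (((k' + 1 : ℕ) : ℤ) - 1 - j) := by
      rw [Finset.sum_range_succ']
      have h0 : c 0 • v ((0 : ℕ) : ℤ) (((k' + 1 : ℕ) : ℤ) - (0 : ℕ)) = 0 := by
        rw [hv0 _ _ (by omega), smul_zero]
      rw [h0, add_zero]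
      refine Finset.sum_congr rfl fun j hj => ?_
      congr 2 <;> push_cast <;> ring
    have hB : ∑ j ∈ Finset.range (k' + 1), c j • v ((j : ℤ) + 1) (((k' + 1 : ℕ) : ℤ) - j - 1) =
        ∑ j ∈ Finset.range k', c j • v ((j : ℤ) + 1) (((k' + 1 : ℕ) : ℤ) - 1 - j) := by
      rw [Finset.sum_range_succ]
      have h0 : c k' • v ((k' : ℤ) + 1) (((k' + 1 : ℕ) : ℤ) - k' - 1) = 0 := by
        rw [hv0 _ _ (by omega), smul_zero]
      rw [h0, add_zero]
      refine Finset.sum_congr rfl fun j hj => ?_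
      congr 2
      ring
    rw [hA, hB, ← Finset.sum_add_distrib]
    have hrange : k' + 1 - 1 = k' := by omega
    rw [hrange]
    refine Finset.sum_congr rfl fun j hj => ?_
    rw [← add_smul]
    congr 1
    ring
  -- linear independence on a diagonal
  have hdiag : ∀ (k : ℕ), k ≤ m → ∀ c : ℕ → F,
      (∑ j ∈ Finset.range k, c j • v ((j : ℤ) + 1) ((k : ℤ) - j)) = 0 →
      ∀ j < k, c j = 0 := by
    intro k hkm c hsum j hjk
    have hkn : k ≤ n := hkm.trans hmn
    have hli := hv_indep.comp
      (fun i : Fin k => ((⟨(i : ℕ), lt_of_lt_of_le i.2 hkm⟩ : Fin m),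
        (⟨k - 1 - (i : ℕ), by omega⟩ : Fin n)))
      (fun p q h => Fin.ext (congrArg (fun r : Fin m × Fin n => (r.1 : ℕ)) h))
    have hkey := Fintype.linearIndependent_iff.mp hli (fun i => c (i : ℕ))
    refine hkey ?_ ⟨j, hjk⟩
    rw [← Fin.sum_univ_eq_sum_range (fun i => c i • v ((i : ℤ) + 1) ((k : ℤ) - i)) k] at hsum
    rw [← hsum]
    refine Finset.sum_congr rfl fun i _ => ?_
    have hi := i.2
    have e1 : (((i : ℕ) + 1 : ℕ) : ℤ) = ((i : ℕ) : ℤ) + 1 := by omega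
    have e2 : ((k - 1 - (i : ℕ) + 1 : ℕ) : ℤ) = (k : ℤ) - ((i : ℕ) : ℤ) := by omega
    show c (i : ℕ) • v (((i : ℕ) + 1 : ℕ) : ℤ) ((k - 1 - (i : ℕ) + 1 : ℕ) : ℤ)
        = c (i : ℕ) • v (((i : ℕ) : ℤ) + 1) ((k : ℤ) - ((i : ℕ) : ℤ))
    rw [e1, e2]
  -- x b ∈ D b
  have hxbD : x (b : ℤ) ∈ D (b : ℤ) := by
    rw [hxb, hD]
    refine Submodule.sum_mem _ fun j hj => ?_
    rw [Finset.mem_range] at hj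
    exact Submodule.smul_mem _ _ (Submodule.subset_span
      ⟨(j : ℤ) + 1, (b : ℤ) - j, by omega, by omega, by omega, by omega, by ring, rfl⟩)
  -- N (x b) = 0
  have hNxb : N (x (b : ℤ)) = 0 := by
    rw [hxb, hNsum b hb1 hbm (fun j => (-1 : F) ^ j)]
    refine Finset.sum_eq_zero fun j hj => ?_
    have : (-1 : F) ^ j + (-1 : F) ^ (j + 1) = 0 := by rw [pow_succ]; ring
    rw [this, zero_smul]
  -- x b ≠ 0
  have hxbne : x (b : ℤ) ≠ 0 := by
    intro h0
    have := hdiag b hbm (fun j => (-1 : F) ^ j) (by rw [← hxb]; exact h0) 0 (by omega)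
    simp at this
  -- kernel of N on D b is spanned by x b
  have hDker : ∀ z ∈ D (b : ℤ), N z = 0 → z ∈ Submodule.span F {x (b : ℤ)} := by
    intro z hz hNz
    have hset : {z | ∃ i j : ℤ, 1 ≤ i ∧ i ≤ (m : ℤ) ∧ 1 ≤ j ∧ j ≤ (n : ℤ) ∧
        i + j = (b : ℤ) + 1 ∧ z = v i j} =
        Set.range (fun j : Fin b => v (((j : ℕ) : ℤ) + 1) ((b : ℤ) - (j : ℕ))) := by
      ext w
      constructor
      · rintro ⟨i, j, h1, h2, h3, h4, h5, rfl⟩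
        refine ⟨⟨(i - 1).toNat, by omega⟩, ?_⟩
        simp only
        congr 1 <;> omega
      · rintro ⟨j, rfl⟩
        have hj := j.2
        exact ⟨((j : ℕ) : ℤ) + 1, (b : ℤ) - (j : ℕ), by omega, by omega, by omega, by omega,
          by ring, rfl⟩
    rw [hD, hset, Submodule.mem_span_range_iff_exists_fun] at hz
    obtain ⟨c, hc⟩ := hz
    set c' : ℕ → F := fun j => if h : j < b then c ⟨j, h⟩ else 0 with hc'
    have hz' : z = ∑ j ∈ Finset.range b, c' j • v ((j : ℤ) + 1) ((b : ℤ) - j) := by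
      rw [← hc, ← Fin.sum_univ_eq_sum_range (fun j => c' j • v ((j : ℤ) + 1) ((b : ℤ) - j)) b]
      refine Finset.sum_congr rfl fun j _ => ?_
      simp only [hc', j.2, dif_pos]
    have hNz' : ∑ j ∈ Finset.range (b - 1), (c' j + c' (j + 1)) • v ((j : ℤ) + 1)
        (((b - 1 : ℕ) : ℤ) - j) = 0 := by
      have h1 := hNsum b hb1 hbm c'
      rw [← hz'] at h1
      rw [hNz] at h1
      have h2 : ∀ j ∈ Finset.range (b - 1), (c' j + c' (j + 1)) • v ((j : ℤ) + 1)
          (((b - 1 : ℕ) : ℤ) - j) = (c' j + c' (j + 1)) • v ((j : ℤ) + 1) ((b : ℤ) - 1 - j) := by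
        intro j hj
        congr 2
        omega
      rw [Finset.sum_congr rfl h2, ← h1]
    have hrec := hdiag (b - 1) (by omega) (fun j => c' j + c' (j + 1)) hNz'
    have hcrec : ∀ j, j < b → c' j = (-1 : F) ^ j * c' 0 := by
      intro j
      induction j with
      | zero => intro _; simp
      | succ i ih =>
        intro hj
        have hi := ih (by omega)
        have h2 := hrec i (by omega)
        have h3 : c' (i + 1) = -c' i := by
          have hh : c' i + c' (i + 1) = 0 := h2
          exact eq_neg_of_add_eq_zero_right hh
        rw [h3, hi, pow_succ]
        ring
    have hzxb : z = c' 0 • x (b : ℤ) := by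
      rw [hz', hxb, Finset.smul_sum]
      refine Finset.sum_congr rfl fun j hj => ?_
      rw [Finset.mem_range] at hj
      rw [smul_smul, hcrec j hj, mul_comm]
    exact Submodule.mem_span_singleton.mpr ⟨c' 0, hzxb.symm⟩
  -- elements of the kernel land in span {x b} under N^l
  have hKmap : ∀ z, z ∈ D ((m : ℤ) + n - a - 1) → (N ^ (m + n - a - b)) z = 0 →
      (N ^ l) z ∈ Submodule.span F {x (b : ℤ)} := by
    intro z hz hz0
    have hNl : N ((N ^ l) z) = 0 := by
      have : (N ^ (l + 1)) z = N ((N ^ l) z) := by rw [pow_succ']; rfl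
      rw [← this, ← hl]; exact hz0
    exact hDker _ (hconj1 z hz) hNl
  refine ⟨hconj1, ?_, ?_⟩
  · -- finrank bound
    set K := D ((m : ℤ) + n - a - 1) ⊓ LinearMap.ker (N ^ (m + n - a - b)) with hK
    set S := Submodule.span F {x (b : ℤ)} with hS
    haveI : FiniteDimensional F S := FiniteDimensional.span_of_finite F (Set.finite_singleton _)
    have hmem : ∀ w : K, ((N ^ l).domRestrict K) w ∈ S := by
      rintro ⟨w, hw⟩
      exact hKmap w hw.1 hw.2
    set φ : K →ₗ[F] S := LinearMap.codRestrict S ((N ^ l).domRestrict K) hmem with hφ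
    have hφinj : Function.Injective φ := by
      rintro ⟨z₁, hz₁⟩ ⟨z₂, hz₂⟩ h
      have h' : (N ^ l) z₁ = (N ^ l) z₂ := congrArg Subtype.val h
      exact Subtype.ext (hinj z₁ hz₁.1 z₂ hz₂.1 h')
    calc Module.finrank F K ≤ Module.finrank F S :=
          LinearMap.finrank_le_finrank_of_injective hφinj
      _ = 1 := finrank_span_singleton hxbne
  · -- last conjunct
    intro y hyD hyN
    have hyK : y ∈ LinearMap.ker (N ^ (m + n - a - b)) := by
      rw [LinearMap.mem_ker, hl]
      have : (N ^ (l + 1)) y = N ((N ^ l) y) := by rw [pow_succ']; rfl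
      rw [this, hyN, hNxb]
    apply le_antisymm
    · rintro z ⟨hz1, hz2⟩
      have hz2' : (N ^ (m + n - a - b)) z = 0 := hz2
      have h1 := hKmap z hz1 hz2'
      obtain ⟨c, hc⟩ := Submodule.mem_span_singleton.mp h1
      have h2 : (N ^ l) (c • y) = (N ^ l) z := by
        rw [map_smul, hyN, hc]
      have h3 : z = c • y := hinj z hz1 (c • y) (Submodule.smul_mem _ c hyD) h2.symm
      exact Submodule.mem_span_singleton.mpr ⟨c, h3.symm⟩
    · rw [Submodule.span_le, Set.singleton_subset_iff]
      exact ⟨hyD, hyK⟩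
end
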